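/- arXiv:1410.4586 — 6 statements merged into one kernel-verified Lean document; each statement's English description precedes it below -/
import Mathlib

section
/- Let σ², κ, ρ be real numbers with |ρ| ≤ 1, let 0 < r < 1, and let φ, ψ : ℂ → ℂ be continuous on the circle {s ∈ ℂ : |s| = r}. For l ≥ 1 set A_l := (1/(2πi)) ∮_{|s|=r} s^{l−1} φ(s) ds and B_l := (1/(2πi)) ∮_{|t|=r} t^{l−1} ψ(t) dt (counterclockwise circles of radius r). Then (−1/(4π²)) ∮_{|s|=r} ∮_{|t|=r} φ(s) ψ(t) · [ (σ² − ρ − 1) + ρ/(1 − ρst)² + 1/(1 − st)² + κ·st ] ds dt = (σ² − ρ − 1)·A₁B₁ + κ·A₂B₂ + Σ_{l=1}^∞ l·(1 + ρ^l)·A_l B_l, where the series on the right converges. -/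
open MeasureTheory Filter Topology

lemma geomSq {𝕜 : Type*} [RCLike 𝕜] {z : 𝕜} (hz : ‖z‖ < 1) :
    HasSum (fun n : ℕ => ((n : 𝕜) + 1) * z ^ n) (((1 - z) ^ 2)⁻¹) := by
  have h1 := hasSum_coe_mul_geometric_of_norm_lt_one hz
  have h2 := hasSum_geometric_of_norm_lt_one hz
  have hz1 : (1 : 𝕜) - z ≠ 0 := by
    intro h
    have hz1' : z = 1 := by linear_combination -h
    rw [hz1'] at hz; simp at hz
  convert h1.add h2 using 1
  · funext n; ring
  · field_simp
    ring

lemma hasSum_circleIntegral {r : ℝ} (hr : 0 < r) (F : ℕ → ℂ → ℂ) (f : ℂ → ℂ)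
    (hcont : ∀ n, ContinuousOn (F n) (Metric.sphere (0:ℂ) r))
    (bound : ℕ → ℝ) (hbs : Summable bound)
    (hFb : ∀ n, ∀ z ∈ Metric.sphere (0:ℂ) r, ‖F n z‖ ≤ bound n)
    (hsum : ∀ z ∈ Metric.sphere (0:ℂ) r, HasSum (fun n => F n z) (f z)) :
    HasSum (fun n => ∮ z in C(0, r), F n z) (∮ z in C(0, r), f z) := by
  simp only [circleIntegral, deriv_circleMap, smul_eq_mul]
  apply intervalIntegral.hasSum_integral_of_dominated_convergence
      (bound := fun n (_ : ℝ) => r * bound n)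
  · intro n
    exact (((continuous_circleMap 0 r).mul continuous_const).mul
      ((hcont n).comp_continuous (continuous_circleMap 0 r)
        (fun θ => circleMap_mem_sphere 0 hr.le θ))).aestronglyMeasurable
  · intro n
    refine Eventually.of_forall (fun θ _ => ?_)
    rw [norm_mul]
    have h1 : ‖circleMap 0 r θ * Complex.I‖ = r := by
      simp [norm_circleMap_zero, abs_of_pos hr]
    rw [h1]
    exact mul_le_mul_of_nonneg_left (hFb n _ (circleMap_mem_sphere 0 hr.le θ)) hr.le
  · exact Eventually.of_forall (fun θ _ => hbs.mul_left r)
  · exact intervalIntegrable_const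
  · exact Eventually.of_forall
      (fun θ _ => (hsum _ (circleMap_mem_sphere 0 hr.le θ)).mul_left _)

lemma circleIntegral_add {f g : ℂ → ℂ} {c : ℂ} {R : ℝ} (hf : CircleIntegrable f c R)
    (hg : CircleIntegrable g c R) :
    (∮ z in C(c, R), (f z + g z)) = (∮ z in C(c, R), f z) + ∮ z in C(c, R), g z := by
  simp only [circleIntegral, smul_add]
  exact intervalIntegral.integral_add hf.out hg.out

/-- Double contour-integral identity expressing the limiting covariance as a series in the
Faber-type coefficients `A_l`, `B_l`. -/
theorem stmt3 (σ2 κ ρ : ℝ) (hρ : |ρ| ≤ 1) (r : ℝ) (hr0 : 0 < r) (hr1 : r < 1)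
    (φ ψ : ℂ → ℂ)
    (hφ : ContinuousOn φ (Metric.sphere (0 : ℂ) r))
    (hψ : ContinuousOn ψ (Metric.sphere (0 : ℂ) r))
    (A B : ℕ → ℂ)
    (hA : ∀ l : ℕ, 1 ≤ l →
      A l = (2 * Real.pi * Complex.I)⁻¹ * ∮ s in C(0, r), s ^ ((l : ℤ) - 1) * φ s)
    (hB : ∀ l : ℕ, 1 ≤ l →
      B l = (2 * Real.pi * Complex.I)⁻¹ * ∮ t in C(0, r), t ^ ((l : ℤ) - 1) * ψ t) :
    Summable (fun l : ℕ => ((l : ℂ) + 1) * (1 + (ρ : ℂ) ^ (l + 1)) * A (l + 1) * B (l + 1)) ∧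
    (-1 / (4 * (Real.pi : ℂ) ^ 2)) *
        (∮ s in C(0, r), ∮ t in C(0, r), φ s * ψ t *
          (((σ2 : ℂ) - (ρ : ℂ) - 1) + (ρ : ℂ) * ((1 - (ρ : ℂ) * s * t) ^ 2)⁻¹
            + ((1 - s * t) ^ 2)⁻¹ + (κ : ℂ) * s * t)) =
      ((σ2 : ℂ) - (ρ : ℂ) - 1) * A 1 * B 1 + (κ : ℂ) * A 2 * B 2 +
        ∑' l : ℕ, ((l : ℂ) + 1) * (1 + (ρ : ℂ) ^ (l + 1)) * A (l + 1) * B (l + 1) := by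
  have hπ : (Real.pi : ℂ) ≠ 0 := Complex.ofReal_ne_zero.mpr Real.pi_ne_zero
  have hrr : r * r < 1 := by nlinarith
  have hρ1 : ‖(ρ : ℂ)‖ ≤ 1 := by
    simpa [Complex.norm_real] using hρ
  have hnorm : ∀ z ∈ Metric.sphere (0:ℂ) r, ‖z‖ = r := fun z hz =>
    mem_sphere_zero_iff_norm.mp hz
  obtain ⟨Cφ, hCφ⟩ := (isCompact_sphere (0:ℂ) r).exists_bound_of_continuousOn hφ
  obtain ⟨Cψ, hCψ⟩ := (isCompact_sphere (0:ℂ) r).exists_bound_of_continuousOn hψ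
  have hCφ' : ∀ z ∈ Metric.sphere (0:ℂ) r, ‖φ z‖ ≤ max Cφ 0 := fun z hz =>
    (hCφ z hz).trans (le_max_left _ _)
  have hCψ' : ∀ z ∈ Metric.sphere (0:ℂ) r, ‖ψ z‖ ≤ max Cψ 0 := fun z hz =>
    (hCψ z hz).trans (le_max_left _ _)
  have hCφ0 : (0:ℝ) ≤ max Cφ 0 := le_max_right _ _
  have hCψ0 : (0:ℝ) ≤ max Cψ 0 := le_max_right _ _
  -- the coefficients as circle integrals
  have hJB : ∀ n : ℕ, (∮ t in C(0, r), t ^ n * ψ t) = (2 * Real.pi * Complex.I) * B (n+1) := by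
    intro n
    have h := hB (n+1) (by omega)
    have h2 : (∮ t in C(0, r), t ^ (((n+1 : ℕ) : ℤ) - 1) * ψ t)
        = ∮ t in C(0, r), t ^ n * ψ t := by
      congr 1
      funext t
      rw [show (((n+1 : ℕ) : ℤ) - 1) = (n : ℤ) by push_cast; ring, zpow_natCast]
    rw [h2] at h
    rw [h]
    field_simp
  have hKA : ∀ n : ℕ, (∮ s in C(0, r), s ^ n * φ s) = (2 * Real.pi * Complex.I) * A (n+1) := by
    intro n
    have h := hA (n+1) (by omega)
    have h2 : (∮ s in C(0, r), s ^ (((n+1 : ℕ) : ℤ) - 1) * φ s)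
        = ∮ s in C(0, r), s ^ n * φ s := by
      congr 1
      funext s
      rw [show (((n+1 : ℕ) : ℤ) - 1) = (n : ℤ) by push_cast; ring, zpow_natCast]
    rw [h2] at h
    rw [h]
    field_simp
  -- bound on ψ-integrals
  have hJbound : ∀ n : ℕ, ‖∮ t in C(0, r), t ^ n * ψ t‖
      ≤ 2 * Real.pi * r * (r ^ n * max Cψ 0) := by
    intro n
    refine circleIntegral.norm_integral_le_of_norm_le_const hr0.le (fun z hz => ?_)
    rw [norm_mul, norm_pow, hnorm z hz]
    exact mul_le_mul_of_nonneg_left (hCψ' z hz) (pow_nonneg hr0.le n)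
  have hcoef : ∀ n : ℕ, ‖((n:ℂ)+1)‖ = (n:ℝ)+1 := by
    intro n
    rw [show ((n:ℂ)+1) = ((n+1 : ℕ) : ℂ) by push_cast; ring, Complex.norm_natCast]
    push_cast; ring
  have hρpow : ∀ n : ℕ, ‖(ρ:ℂ)^(n+1) + 1‖ ≤ 2 := by
    intro n
    calc ‖(ρ:ℂ)^(n+1) + 1‖ ≤ ‖(ρ:ℂ)^(n+1)‖ + ‖(1:ℂ)‖ := norm_add_le _ _
      _ ≤ 1 + 1 := by
          rw [norm_pow, norm_one]
          have := pow_le_one₀ (norm_nonneg ((ρ:ℂ))) hρ1 (n := n+1)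
          linarith
      _ = 2 := by norm_num
  have hrrnorm : ‖r * r‖ < 1 := by
    rw [Real.norm_eq_abs, abs_of_nonneg (by positivity)]; exact hrr
  have hsummable_geo : Summable (fun n : ℕ => ((n:ℝ)+1) * (r*r)^n) := (geomSq hrrnorm).summable
  -- kernel expansion
  have hstlt : ∀ s ∈ Metric.sphere (0:ℂ) r, ∀ t ∈ Metric.sphere (0:ℂ) r, ‖s * t‖ < 1 := by
    intro s hs t ht
    rw [norm_mul, hnorm s hs, hnorm t ht]; exact hrr
  have hρstlt : ∀ s ∈ Metric.sphere (0:ℂ) r, ∀ t ∈ Metric.sphere (0:ℂ) r,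
      ‖(ρ:ℂ) * s * t‖ < 1 := by
    intro s hs t ht
    rw [norm_mul, norm_mul, hnorm s hs, hnorm t ht]
    calc ‖(ρ:ℂ)‖ * r * r ≤ 1 * r * r := by
          have := mul_le_mul_of_nonneg_right (mul_le_mul_of_nonneg_right hρ1 hr0.le) hr0.le
          linarith
      _ < 1 := by linarith
  have hker : ∀ s ∈ Metric.sphere (0:ℂ) r, ∀ t ∈ Metric.sphere (0:ℂ) r,
      HasSum (fun n : ℕ => ((n:ℂ)+1) * ((ρ:ℂ)^(n+1) + 1) * (s*t)^n)
        ((ρ:ℂ) * ((1 - (ρ:ℂ)*s*t)^2)⁻¹ + ((1 - s*t)^2)⁻¹) := by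
    intro s hs t ht
    have h1 := (geomSq (z := (ρ:ℂ)*s*t) (hρstlt s hs t ht)).mul_left (ρ:ℂ)
    have h2 := geomSq (z := s*t) (hstlt s hs t ht)
    convert h1.add h2 using 1
    rfl
    funext n
    rw [show ((ρ:ℂ)*s*t) = (ρ:ℂ)*(s*t) by ring, mul_pow]
    ring
  -- denominators don't vanish
  have hden : ∀ (a : ℂ), ‖a‖ < 1 → ((1 - a)^2) ≠ 0 := by
    intro a ha
    apply pow_ne_zero
    intro h0
    have h1 : a = 1 := by linear_combination -h0
    rw [h1] at ha; simp at ha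
  -- inner integral computation
  have inner_eq : ∀ s ∈ Metric.sphere (0:ℂ) r,
      (∮ t in C(0, r), φ s * ψ t *
          (((σ2:ℂ) - (ρ:ℂ) - 1) + (ρ:ℂ) * ((1 - (ρ:ℂ)*s*t)^2)⁻¹
            + ((1 - s*t)^2)⁻¹ + (κ:ℂ)*s*t))
      = ((((σ2:ℂ) - (ρ:ℂ) - 1) * (∮ t in C(0, r), t ^ 0 * ψ t)) * (s^0 * φ s)
          + (((κ:ℂ) * (∮ t in C(0, r), t ^ 1 * ψ t)) * (s^1 * φ s)))
        + ∑' n : ℕ, (((n:ℂ)+1) * ((ρ:ℂ)^(n+1) + 1) * (∮ t in C(0, r), t ^ n * ψ t))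
            * (s^n * φ s) := by
    intro s hs
    have split : Set.EqOn
        (fun t => φ s * ψ t * (((σ2:ℂ) - (ρ:ℂ) - 1) + (ρ:ℂ)*((1-(ρ:ℂ)*s*t)^2)⁻¹
            + ((1-s*t)^2)⁻¹ + (κ:ℂ)*s*t))
        (fun t => (((σ2:ℂ) - (ρ:ℂ) - 1) * φ s * (t^0 * ψ t)
            + (κ:ℂ) * s * φ s * (t^1 * ψ t)) +
          (φ s * ψ t) * ((ρ:ℂ)*((1-(ρ:ℂ)*s*t)^2)⁻¹ + ((1-s*t)^2)⁻¹))
        (Metric.sphere (0:ℂ) r) := fun t _ => by ring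
    rw [circleIntegral.integral_congr hr0.le split]
    have cont1 : ContinuousOn (fun t : ℂ => ((σ2:ℂ) - (ρ:ℂ) - 1) * φ s * (t^0 * ψ t)
        + (κ:ℂ) * s * φ s * (t^1 * ψ t)) (Metric.sphere (0:ℂ) r) :=
      (continuousOn_const.mul (((continuous_pow 0).continuousOn).mul hψ)).add
        (continuousOn_const.mul (((continuous_pow 1).continuousOn).mul hψ))
    have cont2 : ContinuousOn (fun t : ℂ => (φ s * ψ t) *
        ((ρ:ℂ)*((1-(ρ:ℂ)*s*t)^2)⁻¹ + ((1-s*t)^2)⁻¹)) (Metric.sphere (0:ℂ) r) := by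
      apply (continuousOn_const.mul hψ).mul
      apply ContinuousOn.add
      · apply continuousOn_const.mul
        apply ContinuousOn.inv₀
        · exact ((continuous_const.sub (continuous_mul_left ((ρ:ℂ)*s))).pow 2).continuousOn
        · intro t ht
          exact hden _ (hρstlt s hs t ht)
      · apply ContinuousOn.inv₀
        · exact ((continuous_const.sub (continuous_mul_left s)).pow 2).continuousOn
        · intro t ht
          exact hden _ (hstlt s hs t ht)
    rw [circleIntegral_add (cont1.circleIntegrable hr0.le) (cont2.circleIntegrable hr0.le)]
    congr 1
    · rw [circleIntegral_add (f := fun t => ((σ2:ℂ) - (ρ:ℂ) - 1) * φ s * (t^0 * ψ t))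
        (g := fun t => (κ:ℂ) * s * φ s * (t^1 * ψ t))
        ((continuousOn_const.mul (((continuous_pow 0).continuousOn).mul hψ)).circleIntegrable
          hr0.le)
        ((continuousOn_const.mul (((continuous_pow 1).continuousOn).mul hψ)).circleIntegrable
          hr0.le),
        circleIntegral.integral_const_mul, circleIntegral.integral_const_mul]
      ring
    · -- second part: sum interchange
      have hF := hasSum_circleIntegral hr0
        (fun n t => (φ s * ψ t) * (((n:ℂ)+1) * ((ρ:ℂ)^(n+1) + 1) * (s*t)^n))
        (fun t => (φ s * ψ t) * ((ρ:ℂ)*((1-(ρ:ℂ)*s*t)^2)⁻¹ + ((1-s*t)^2)⁻¹))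
        (fun n => (continuousOn_const.mul hψ).mul
          (continuousOn_const.mul (((continuous_mul_left s).pow n).continuousOn)))
        (fun n => (((n:ℝ)+1) * (r*r)^n) * (2 * max Cφ 0 * max Cψ 0))
        (hsummable_geo.mul_right _)
        ?_ (fun t ht => (hker s hs t ht).mul_left _)
      · rw [← hF.tsum_eq]
        apply tsum_congr
        intro n
        have he : (∮ t in C(0, r), (φ s * ψ t) * (((n:ℂ)+1) * ((ρ:ℂ)^(n+1) + 1) * (s*t)^n))
            = (((n:ℂ)+1) * ((ρ:ℂ)^(n+1) + 1) * φ s * s^n)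
              * ∮ t in C(0, r), t ^ n * ψ t := by
          rw [← circleIntegral.integral_const_mul]
          refine circleIntegral.integral_congr hr0.le (fun t ht => ?_)
          show (φ s * ψ t) * (((n:ℂ)+1) * ((ρ:ℂ)^(n+1) + 1) * (s*t)^n) = _
          rw [mul_pow]; ring
        rw [he]; ring
      · intro n t ht
        rw [norm_mul, norm_mul, norm_mul, norm_mul, hcoef n, norm_pow, norm_mul,
          hnorm s hs, hnorm t ht]
        calc ‖φ s‖ * ‖ψ t‖ * (((n:ℝ)+1) * ‖(ρ:ℂ)^(n+1)+1‖ * (r*r)^n)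
            ≤ max Cφ 0 * max Cψ 0 * (((n:ℝ)+1) * 2 * (r*r)^n) := by
              have h1 : (0:ℝ) ≤ (r*r)^n := by positivity
              have h2 : (0:ℝ) ≤ (n:ℝ)+1 := by positivity
              gcongr
              · exact hCφ' s hs
              · exact hCψ' t ht
              · exact hρpow n
          _ = (((n:ℝ)+1) * (r*r)^n) * (2 * max Cφ 0 * max Cψ 0) := by ring
  -- outer series term
  have hTbound : ∀ n : ℕ, ∀ s ∈ Metric.sphere (0:ℂ) r,
      ‖(((n:ℂ)+1) * ((ρ:ℂ)^(n+1) + 1) * (∮ t in C(0, r), t ^ n * ψ t)) * (s^n * φ s)‖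
      ≤ (((n:ℝ)+1) * (r*r)^n) * (2 * (2 * Real.pi * r * max Cψ 0) * max Cφ 0) := by
    intro n s hs
    rw [norm_mul, norm_mul, norm_mul, norm_mul, norm_pow, hcoef n, hnorm s hs]
    calc ((n:ℝ)+1) * ‖(ρ:ℂ)^(n+1)+1‖ * ‖∮ t in C(0, r), t ^ n * ψ t‖ * (r^n * ‖φ s‖)
        ≤ ((n:ℝ)+1) * 2 * (2 * Real.pi * r * (r^n * max Cψ 0)) * (r^n * max Cφ 0) := by
          have h2 : (0:ℝ) ≤ (n:ℝ)+1 := by positivity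
          gcongr
          · exact hρpow n
          · exact hJbound n
          · exact hCφ' s hs
      _ = (((n:ℝ)+1) * (r*r)^n) * (2 * (2 * Real.pi * r * max Cψ 0) * max Cφ 0) := by
          rw [mul_pow]; ring
  have hTcont : ∀ n : ℕ, ContinuousOn
      (fun s : ℂ => (((n:ℂ)+1) * ((ρ:ℂ)^(n+1) + 1) * (∮ t in C(0, r), t ^ n * ψ t))
        * (s^n * φ s)) (Metric.sphere (0:ℂ) r) :=
    fun n => continuousOn_const.mul (((continuous_pow n).continuousOn).mul hφ)
  have hTsummable : ∀ s ∈ Metric.sphere (0:ℂ) r, Summable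
      (fun n : ℕ => (((n:ℂ)+1) * ((ρ:ℂ)^(n+1) + 1) * (∮ t in C(0, r), t ^ n * ψ t))
        * (s^n * φ s)) := by
    intro s hs
    apply Summable.of_norm_bounded (hsummable_geo.mul_right
      (2 * (2 * Real.pi * r * max Cψ 0) * max Cφ 0))
    exact fun n => hTbound n s hs
  -- outer interchange
  have houter := hasSum_circleIntegral hr0
    (fun n s => (((n:ℂ)+1) * ((ρ:ℂ)^(n+1) + 1) * (∮ t in C(0, r), t ^ n * ψ t))
        * (s^n * φ s))
    (fun s => ∑' n : ℕ, (((n:ℂ)+1) * ((ρ:ℂ)^(n+1) + 1) * (∮ t in C(0, r), t ^ n * ψ t))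
        * (s^n * φ s))
    hTcont _ (hsummable_geo.mul_right (2 * (2 * Real.pi * r * max Cψ 0) * max Cφ 0))
    hTbound (fun s hs => (hTsummable s hs).hasSum)
  have hTint : ∀ n : ℕ, (∮ s in C(0, r),
      ((((n:ℂ)+1) * ((ρ:ℂ)^(n+1) + 1) * (∮ t in C(0, r), t ^ n * ψ t)) * (s^n * φ s)))
      = (((n:ℂ)+1) * ((ρ:ℂ)^(n+1) + 1) * (∮ t in C(0, r), t ^ n * ψ t))
        * ∮ s in C(0, r), s ^ n * φ s := fun n =>
    circleIntegral.integral_const_mul _ _ _ _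
  -- key algebra
  have calg : ∀ x y z : ℂ, (-1 / (4 * (Real.pi : ℂ)^2)) *
      (x * ((2 * Real.pi * Complex.I) * y) * ((2 * Real.pi * Complex.I) * z)) = x * y * z := by
    intro x y z
    have h : (Complex.I)^2 = -1 := Complex.I_sq
    field_simp
    linear_combination (-4 * x * y * z) * h
  have key : ∀ n : ℕ, ((n:ℂ)+1) * (1 + (ρ:ℂ)^(n+1)) * A (n+1) * B (n+1)
      = (-1 / (4 * (Real.pi : ℂ)^2)) * ((((n:ℂ)+1) * ((ρ:ℂ)^(n+1) + 1)
        * (∮ t in C(0, r), t ^ n * ψ t)) * ∮ s in C(0, r), s ^ n * φ s) := by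
    intro n
    rw [hJB n, hKA n]
    rw [show (((n:ℂ)+1) * ((ρ:ℂ)^(n+1) + 1) * ((2 * Real.pi * Complex.I) * B (n+1)))
        * ((2 * Real.pi * Complex.I) * A (n+1))
      = (((n:ℂ)+1) * ((ρ:ℂ)^(n+1) + 1)) * ((2 * Real.pi * Complex.I) * (B (n+1)))
        * ((2 * Real.pi * Complex.I) * (A (n+1))) from by ring]
    rw [calg]
    ring
  constructor
  · apply Summable.congr ((houter.summable.mul_left (-1 / (4 * (Real.pi : ℂ)^2))).congr
      (fun n => by rw [hTint n]))
    intro n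
    rw [key n]
  · -- main identity
    have step1 : (∮ s in C(0, r), ∮ t in C(0, r), φ s * ψ t *
          (((σ2 : ℂ) - (ρ : ℂ) - 1) + (ρ : ℂ) * ((1 - (ρ : ℂ) * s * t) ^ 2)⁻¹
            + ((1 - s * t) ^ 2)⁻¹ + (κ : ℂ) * s * t))
        = (∮ s in C(0, r), (((((σ2:ℂ) - (ρ:ℂ) - 1) * (∮ t in C(0, r), t ^ 0 * ψ t))
              * (s^0 * φ s)
            + (((κ:ℂ) * (∮ t in C(0, r), t ^ 1 * ψ t)) * (s^1 * φ s)))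
          + ∑' n : ℕ, (((n:ℂ)+1) * ((ρ:ℂ)^(n+1) + 1) * (∮ t in C(0, r), t ^ n * ψ t))
              * (s^n * φ s))) :=
      circleIntegral.integral_congr hr0.le (fun s hs => inner_eq s hs)
    have contRest : ContinuousOn (fun s : ℂ =>
        ((((σ2:ℂ) - (ρ:ℂ) - 1) * (∮ t in C(0, r), t ^ 0 * ψ t)) * (s^0 * φ s)
          + (((κ:ℂ) * (∮ t in C(0, r), t ^ 1 * ψ t)) * (s^1 * φ s))))
        (Metric.sphere (0:ℂ) r) :=
      (continuousOn_const.mul (((continuous_pow 0).continuousOn).mul hφ)).add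
        (continuousOn_const.mul (((continuous_pow 1).continuousOn).mul hφ))
    have contTsum : ContinuousOn (fun s : ℂ =>
        ∑' n : ℕ, (((n:ℂ)+1) * ((ρ:ℂ)^(n+1) + 1) * (∮ t in C(0, r), t ^ n * ψ t))
          * (s^n * φ s)) (Metric.sphere (0:ℂ) r) :=
      continuousOn_tsum hTcont (hsummable_geo.mul_right
        (2 * (2 * Real.pi * r * max Cψ 0) * max Cφ 0)) (fun n x hx => hTbound n x hx)
    rw [step1, circleIntegral_add (contRest.circleIntegrable hr0.le)
      (contTsum.circleIntegrable hr0.le),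
      circleIntegral_add
        (f := fun s => (((σ2:ℂ) - (ρ:ℂ) - 1) * (∮ t in C(0, r), t ^ 0 * ψ t)) * (s^0 * φ s))
        (g := fun s => ((κ:ℂ) * (∮ t in C(0, r), t ^ 1 * ψ t)) * (s^1 * φ s))
        ((continuousOn_const.mul (((continuous_pow 0).continuousOn).mul hφ)).circleIntegrable
          hr0.le)
        ((continuousOn_const.mul (((continuous_pow 1).continuousOn).mul hφ)).circleIntegrable
          hr0.le),
      circleIntegral.integral_const_mul, circleIntegral.integral_const_mul]
    have htsum_eq : (∮ s in C(0, r), (∑' n : ℕ,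
        (((n:ℂ)+1) * ((ρ:ℂ)^(n+1) + 1) * (∮ t in C(0, r), t ^ n * ψ t)) * (s^n * φ s)))
        = ∑' n : ℕ, ((((n:ℂ)+1) * ((ρ:ℂ)^(n+1) + 1) * (∮ t in C(0, r), t ^ n * ψ t))
            * ∮ s in C(0, r), s ^ n * φ s) := by
      rw [← houter.tsum_eq]
      exact tsum_congr (fun n => (hTint n).symm) |>.symm
    have hsum_final : (∑' l : ℕ, ((l : ℂ) + 1) * (1 + (ρ : ℂ) ^ (l + 1)) * A (l + 1) * B (l + 1))
        = (-1 / (4 * (Real.pi : ℂ)^2)) * ∑' n : ℕ,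
          ((((n:ℂ)+1) * ((ρ:ℂ)^(n+1) + 1) * (∮ t in C(0, r), t ^ n * ψ t))
            * ∮ s in C(0, r), s ^ n * φ s) := by
      rw [← tsum_mul_left]
      exact tsum_congr key
    rw [mul_add, mul_add, htsum_eq, ← hsum_final]
    congr 1
    congr 1
    · -- σ2 term
      rw [hJB 0, hKA 0]
      rw [show (((σ2:ℂ) - (ρ:ℂ) - 1) * ((2 * Real.pi * Complex.I) * B (0+1)))
          * ((2 * Real.pi * Complex.I) * A (0+1))
        = (((σ2:ℂ) - (ρ:ℂ) - 1)) * ((2 * Real.pi * Complex.I) * (B (0+1)))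
          * ((2 * Real.pi * Complex.I) * (A (0+1))) from by ring]
      rw [calg]
      norm_num
      ring
    · -- κ term
      rw [hJB 1, hKA 1]
      rw [show (((κ:ℂ)) * ((2 * Real.pi * Complex.I) * B (1+1)))
          * ((2 * Real.pi * Complex.I) * A (1+1))
        = ((κ:ℂ)) * ((2 * Real.pi * Complex.I) * (B (1+1)))
          * ((2 * Real.pi * Complex.I) * (A (1+1))) from by ring]
      rw [calg]
      norm_num
      ring
end

section
/- Let σ², κ be real numbers, let ρ ∈ (0,1), and let 0 < r < 1. For j ≥ 1 define F_j(z) := 2 ρ^{j/2} T_j(z/(2√ρ)), where T_j is the j-th Chebyshev polynomial of the first kind (evaluated over ℂ). Then for all integers j, k ≥ 1, (−1/(4π²)) ∮_{|s|=r} ∮_{|t|=r} F_j(ρs + 1/s) F_k(ρt + 1/t) · [ (σ² − ρ − 1) + ρ/(1 − ρst)² + 1/(1 − st)² + κ·st ] ds dt = δ_{jk} · ( (σ² − ρ − 1)·δ_{1j} + κ·δ_{2j} + j·(1 + ρ^j) ), where δ_{jk} is the Kronecker delta and the circle integrals are over counterclockwise circles of radius r centered at 0. -/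
open MeasureTheory Filter Topology Complex

lemma myint_zpow {r : ℝ} (hr : 0 < r) (n : ℤ) :
    (∮ z in C((0:ℂ), r), z ^ n) = if n = -1 then 2 * Real.pi * I else 0 := by
  split_ifs with h
  · subst h
    simpa using circleIntegral.integral_sub_center_inv (0:ℂ) (R := r) hr.ne'
  · simpa using circleIntegral.integral_sub_zpow_of_ne h 0 0 r

lemma myint_sum {c : ℂ} {R : ℝ} {ι : Type} (s : Finset ι) (f : ι → ℂ → ℂ)
    (h : ∀ i ∈ s, CircleIntegrable (f i) c R) :
    (∮ z in C(c, R), ∑ i ∈ s, f i z) = ∑ i ∈ s, ∮ z in C(c, R), f i z := by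
  simp only [circleIntegral]
  rw [← intervalIntegral.integral_finset_sum (fun i hi => (h i hi).out)]
  simp [Finset.mul_sum]

lemma myint_add {c : ℂ} {R : ℝ} {f g : ℂ → ℂ}
    (hf : CircleIntegrable f c R) (hg : CircleIntegrable g c R) :
    (∮ z in C(c, R), (f z + g z)) = (∮ z in C(c, R), f z) + ∮ z in C(c, R), g z := by
  simp only [circleIntegral]
  rw [← intervalIntegral.integral_add hf.out hg.out]
  simp [mul_add]

lemma ci_const_mul {c : ℂ} {R : ℝ} {f : ℂ → ℂ} (h : CircleIntegrable f c R) (a : ℂ) :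
    CircleIntegrable (fun z => a * f z) c R :=
  IntervalIntegrable.const_mul h a

lemma myzero {r : ℝ} (hr : 0 < r) {f : ℂ → ℂ}
    (hd : ∀ z ∈ Metric.closedBall (0:ℂ) r, DifferentiableAt ℂ f z) :
    (∮ z in C((0:ℂ), r), f z) = 0 :=
  circleIntegral_eq_zero_of_differentiable_on_off_countable hr.le Set.countable_empty
    (fun z hz => (hd z hz).continuousAt.continuousWithinAt)
    (fun z hz => hd z (Metric.ball_subset_closedBall hz.1))

lemma sphere_ne_zero {r : ℝ} (hr : 0 < r) {t : ℂ} (ht : t ∈ Metric.sphere (0:ℂ) r) :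
    t ≠ 0 := by
  intro h
  rw [mem_sphere_iff_norm, h] at ht
  simp at ht
  exact hr.ne' ht.symm

lemma ci_zpow {r : ℝ} (hr : 0 < r) (m : ℤ) :
    CircleIntegrable (fun t : ℂ => t ^ m) 0 r := by
  apply ContinuousOn.circleIntegrable hr.le
  intro t ht
  exact ((differentiableAt_zpow.mpr (Or.inl (sphere_ne_zero hr ht))).continuousAt).continuousWithinAt

lemma one_sub_ne {r : ℝ} (hr : 0 < r) {c : ℂ} (hc : ‖c‖ * r < 1) {t : ℂ}
    (ht : t ∈ Metric.closedBall (0:ℂ) r) : 1 - c * t ≠ 0 := by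
  have hn : ‖c * t‖ < 1 := by
    calc ‖c * t‖ = ‖c‖ * ‖t‖ := norm_mul c t
    _ ≤ ‖c‖ * r := mul_le_mul_of_nonneg_left (by simpa using ht) (norm_nonneg c)
    _ < 1 := hc
  intro h
  rw [sub_eq_zero] at h
  rw [← h] at hn
  simp at hn

lemma myint_cz {r : ℝ} (hr : 0 < r) (a : ℂ) (m : ℤ) :
    (∮ z in C((0:ℂ), r), a * z ^ m) = a * (if m = -1 then 2 * Real.pi * I else 0) := by
  rw [circleIntegral.integral_const_mul, myint_zpow hr]

lemma myA (k : ℕ) (x : ℂ) :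
    (∑ n ∈ Finset.range k, ((n:ℂ)+1) * x^n) * (1-x)^2 + x^k * (((k:ℂ)+1) - k*x) = 1 := by
  induction k with
  | zero => simp
  | succ k ih =>
    rw [Finset.sum_range_succ]
    push_cast
    ring_nf
    ring_nf at ih
    linear_combination ih

lemma myB (k : ℕ) (c t : ℂ) (ht0 : t ≠ 0) (hct : 1 - c*t ≠ 0) :
    t ^ (-(k:ℤ)) * ((1-c*t)^2)⁻¹ =
      (∑ n ∈ Finset.range k, ((n:ℂ)+1) * c^n * t^((n:ℤ) - (k:ℤ)))
        + c^k * (((k:ℂ)+1) - (k:ℂ)*c*t) * ((1-c*t)^2)⁻¹ := by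
  have hrw : ∀ n ∈ Finset.range k, ((n:ℂ)+1) * c^n * t^((n:ℤ) - (k:ℤ))
      = (((n:ℂ)+1) * c^n * t^n) * ((t^k)⁻¹) := by
    intro n _
    rw [zpow_sub₀ ht0, zpow_natCast, zpow_natCast]
    field_simp
  rw [Finset.sum_congr rfl hrw, ← Finset.sum_mul, zpow_neg, zpow_natCast]
  have hA := myA k (c*t)
  simp only [mul_pow, ← mul_assoc] at hA
  set S := ∑ n ∈ Finset.range k, ((n:ℂ)+1) * c^n * t^n with hS
  have htk : t^k ≠ 0 := pow_ne_zero _ ht0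
  have hsq : (1-c*t)^2 ≠ 0 := pow_ne_zero _ hct
  field_simp
  linear_combination -hA

set_option maxHeartbeats 1000000 in
lemma myL {r : ℝ} (hr : 0 < r) (c : ℂ) (hc : ‖c‖ * r < 1) (k : ℕ) (hk : 1 ≤ k) :
    (∮ t in C((0:ℂ), r), t ^ (-(k:ℤ)) * ((1 - c*t)^2)⁻¹)
      = 2 * Real.pi * I * k * c^(k-1) := by
  set g : ℂ → ℂ := fun t => c^k * (((k:ℂ)+1) - (k:ℂ)*c*t) * ((1-c*t)^2)⁻¹ with hg
  have hgd : ∀ z ∈ Metric.closedBall (0:ℂ) r, DifferentiableAt ℂ g z := by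
    intro z hz
    have h2 : DifferentiableAt ℂ (fun t : ℂ => ((1 - c*t)^2)⁻¹) z := by
      apply DifferentiableAt.inv
      · fun_prop
      · exact pow_ne_zero 2 (one_sub_ne hr hc hz)
    exact ((differentiableAt_const _).mul (by fun_prop)).mul h2
  have hg0 : (∮ t in C((0:ℂ), r), g t) = 0 := myzero hr hgd
  have hcisum : CircleIntegrable
      (fun t : ℂ => ∑ n ∈ Finset.range k, ((n:ℂ)+1) * c^n * t^((n:ℤ) - (k:ℤ))) 0 r := by
    apply ContinuousOn.circleIntegrable hr.le
    apply continuousOn_finset_sum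
    intro n _
    apply ContinuousOn.mul continuousOn_const
    intro t ht
    exact ((differentiableAt_zpow.mpr (Or.inl (sphere_ne_zero hr ht))).continuousAt).continuousWithinAt
  have hcig : CircleIntegrable g 0 r :=
    ContinuousOn.circleIntegrable hr.le
      (fun z hz => ((hgd z (Metric.sphere_subset_closedBall hz)).continuousAt).continuousWithinAt)
  have heq : (∮ t in C((0:ℂ), r), t ^ (-(k:ℤ)) * ((1 - c*t)^2)⁻¹)
      = ∮ t in C((0:ℂ), r),
          ((∑ n ∈ Finset.range k, ((n:ℂ)+1) * c^n * t^((n:ℤ) - (k:ℤ))) + g t) := by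
    apply circleIntegral.integral_congr hr.le
    intro t ht
    exact myB k c t (sphere_ne_zero hr ht) (one_sub_ne hr hc (Metric.sphere_subset_closedBall ht))
  rw [heq, myint_add hcisum hcig, hg0, add_zero]
  have hsplit : ∀ n ∈ Finset.range k,
      (∮ t in C((0:ℂ), r), ((n:ℂ)+1) * c^n * t^((n:ℤ) - (k:ℤ)))
        = if (n:ℤ) - (k:ℤ) = -1 then (((n:ℂ)+1) * c^n) * (2 * Real.pi * I) else 0 := by
    intro n _
    rw [circleIntegral.integral_const_mul, myint_zpow hr]
    split_ifs <;> simp [mul_comm]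
  rw [myint_sum (Finset.range k) (fun n t => ((n:ℂ)+1) * c^n * t^((n:ℤ) - (k:ℤ)))
      (fun n _ => ci_const_mul (ci_zpow hr ((n:ℤ) - (k:ℤ))) _),
    Finset.sum_congr rfl hsplit, Finset.sum_eq_single (k-1)]
  · have h1 : ((k-1 : ℕ):ℤ) - (k:ℤ) = -1 := by omega
    rw [if_pos h1]
    have h2 : ((k-1:ℕ):ℂ) + 1 = (k:ℂ) := by
      have : (k-1) + 1 = k := Nat.succ_pred_eq_of_pos hk
      exact_mod_cast congrArg (Nat.cast : ℕ → ℂ) this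
    rw [h2]
    ring
  · intro n _ hn
    rw [if_neg (by omega)]
  · intro h
    exact absurd (Finset.mem_range.mpr (by omega)) h

lemma cheb (u : ℂ) (hu : u ≠ 0) : ∀ n : ℕ,
    Polynomial.eval ((u + u⁻¹)/2) (Polynomial.Chebyshev.T ℂ (n:ℤ)) = (u^n + (u⁻¹)^n)/2 := by
  have key : ∀ n : ℕ,
      Polynomial.eval ((u + u⁻¹)/2) (Polynomial.Chebyshev.T ℂ (n:ℤ)) = (u^n + (u⁻¹)^n)/2 ∧
      Polynomial.eval ((u + u⁻¹)/2) (Polynomial.Chebyshev.T ℂ ((n:ℤ)+1))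
        = (u^(n+1) + (u⁻¹)^(n+1))/2 := by
    intro n
    induction n with
    | zero =>
      constructor
      · simp [Polynomial.Chebyshev.T_zero]
      · norm_num [Polynomial.Chebyshev.T_one]
    | succ n ih =>
      have huv : u * u⁻¹ = 1 := mul_inv_cancel₀ hu
      refine ⟨by push_cast; exact ih.2, ?_⟩
      have hidx : ((n+1:ℕ):ℤ)+1 = (n:ℤ)+2 := by push_cast; ring
      rw [hidx, Polynomial.Chebyshev.T_add_two]
      simp only [Polynomial.eval_sub, Polynomial.eval_mul, Polynomial.eval_ofNat,
        Polynomial.eval_X]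
      rw [ih.1, ih.2]
      have h2 : (u*u⁻¹)^(2*n+2) = 1 := by rw [huv, one_pow]
      linear_combination ((u^n + u⁻¹^n)/2) * huv
  intro n
  exact (key n).1

lemma Fval {ρ : ℝ} (hρ0 : 0 < ρ) (j : ℕ) (s : ℂ) (hs : s ≠ 0) :
    2 * ((Real.sqrt ρ : ℂ)) ^ j *
        Polynomial.eval (((ρ:ℂ)*s + s⁻¹) / (2 * (Real.sqrt ρ : ℂ)))
          (Polynomial.Chebyshev.T ℂ (j:ℤ))
      = (ρ:ℂ)^j * s^j + (s⁻¹)^j := by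
  have hq : ((Real.sqrt ρ : ℂ)) ≠ 0 := ofReal_ne_zero.mpr (Real.sqrt_ne_zero'.mpr hρ0)
  have hsq : ((Real.sqrt ρ : ℂ))^2 = (ρ:ℂ) := by
    rw [← Complex.ofReal_pow, Real.sq_sqrt hρ0.le]
  set q := ((Real.sqrt ρ : ℂ)) with hqdef
  have hu : q * s ≠ 0 := mul_ne_zero hq hs
  have harg : ((ρ:ℂ)*s + s⁻¹) / (2 * q) = ((q*s) + (q*s)⁻¹)/2 := by
    rw [mul_inv]
    field_simp
    linear_combination (-s^2) * hsq
  rw [harg, cheb (q*s) hu j]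
  have hqq : q^j*q^j = (ρ:ℂ)^j := by rw [← mul_pow, ← pow_two, hsq]
  have hq1 : q^j * (q⁻¹)^j = 1 := by rw [← mul_pow, mul_inv_cancel₀ hq, one_pow]
  have e1 : q^j * (q*s)^j = (ρ:ℂ)^j * s^j := by rw [mul_pow, ← mul_assoc, hqq]
  have e2 : q^j * ((q*s)⁻¹)^j = (s⁻¹)^j := by rw [mul_inv, mul_pow, ← mul_assoc, hq1, one_mul]
  linear_combination e1 + e2

set_option maxHeartbeats 2000000 in
/-- Orthogonality of the rescaled Chebyshev (Faber) polynomials for the limiting covariance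
bilinear form. -/
theorem stmt4 (σ2 κ ρ : ℝ) (hρ0 : 0 < ρ) (hρ1 : ρ < 1)
    (r : ℝ) (hr0 : 0 < r) (hr1 : r < 1)
    (F : ℕ → ℂ → ℂ)
    (hF : ∀ (j : ℕ) (z : ℂ), 1 ≤ j →
      F j z = 2 * ((Real.sqrt ρ : ℂ)) ^ j *
        Polynomial.eval (z / (2 * (Real.sqrt ρ : ℂ))) (Polynomial.Chebyshev.T ℂ (j : ℤ))) :
    ∀ j k : ℕ, 1 ≤ j → 1 ≤ k →
      (-1 / (4 * (Real.pi : ℂ) ^ 2)) *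
          (∮ s in C(0, r), ∮ t in C(0, r),
            F j ((ρ : ℂ) * s + s⁻¹) * F k ((ρ : ℂ) * t + t⁻¹) *
              (((σ2 : ℂ) - (ρ : ℂ) - 1) + (ρ : ℂ) * ((1 - (ρ : ℂ) * s * t) ^ 2)⁻¹
                + ((1 - s * t) ^ 2)⁻¹ + (κ : ℂ) * s * t)) =
        if j = k then
          ((σ2 : ℂ) - (ρ : ℂ) - 1) * (if j = 1 then 1 else 0)
            + (κ : ℂ) * (if j = 2 then 1 else 0)
            + (j : ℂ) * (1 + (ρ : ℂ) ^ j)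
        else 0 := by
  intro j k hj hk
  set A : ℂ := (σ2 : ℂ) - (ρ : ℂ) - 1 with hAdef
  set P : ℂ := 2 * (Real.pi : ℂ) * I with hPdef
  set d : ℂ := (k:ℂ) * ((ρ:ℂ)^k + 1) with hddef
  -- inner integral
  have hinner : ∀ s ∈ Metric.sphere (0:ℂ) r,
      (∮ t in C((0:ℂ), r),
        F j ((ρ : ℂ) * s + s⁻¹) * F k ((ρ : ℂ) * t + t⁻¹) *
          (A + (ρ : ℂ) * ((1 - (ρ : ℂ) * s * t) ^ 2)⁻¹
            + ((1 - s * t) ^ 2)⁻¹ + (κ : ℂ) * s * t))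
      = F j ((ρ : ℂ) * s + s⁻¹) *
          (P * (A * (if k = 1 then 1 else 0) + (κ:ℂ) * s * (if k = 2 then 1 else 0)
            + d * s^(k-1))) := by
    intro s hs
    have hs0 : s ≠ 0 := sphere_ne_zero hr0 hs
    have hsr : ‖s‖ = r := by simpa using hs
    have hc1 : ‖(ρ:ℂ) * s‖ * r < 1 := by
      rw [norm_mul, hsr]
      simp only [Complex.norm_real, Real.norm_eq_abs, abs_of_pos hρ0]
      have hrr : r * r < 1 := by nlinarith
      calc ρ * r * r = ρ * (r * r) := by ring
      _ < 1 * 1 := mul_lt_mul'' hρ1 hrr hρ0.le (by positivity)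
      _ = 1 := by norm_num
    have hc2 : ‖s‖ * r < 1 := by rw [hsr]; nlinarith
    set Bf : ℂ → ℂ := fun t => A + (ρ : ℂ) * ((1 - (ρ : ℂ) * s * t) ^ 2)⁻¹
        + ((1 - s * t) ^ 2)⁻¹ + (κ : ℂ) * s * t with hBf
    have hBd : ∀ z ∈ Metric.closedBall (0:ℂ) r, DifferentiableAt ℂ Bf z := by
      intro z hz
      have hz1 : (1 - (ρ:ℂ) * s * z) ≠ 0 := one_sub_ne hr0 hc1 hz
      have hz2 : (1 - s * z) ≠ 0 := one_sub_ne hr0 hc2 hz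
      have d1 : DifferentiableAt ℂ (fun t : ℂ => ((1 - (ρ:ℂ) * s * t)^2)⁻¹) z :=
        DifferentiableAt.inv (by fun_prop) (pow_ne_zero 2 hz1)
      have d2 : DifferentiableAt ℂ (fun t : ℂ => ((1 - s * t)^2)⁻¹) z :=
        DifferentiableAt.inv (by fun_prop) (pow_ne_zero 2 hz2)
      exact (((differentiableAt_const _).add ((differentiableAt_const _).mul d1)).add d2).add
        (by fun_prop)
    have hBc : ContinuousOn Bf (Metric.sphere (0:ℂ) r) := fun z hz =>
      ((hBd z (Metric.sphere_subset_closedBall hz)).continuousAt).continuousWithinAt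
    -- pull out the constant F j factor
    have e1 : (∮ t in C((0:ℂ), r),
        F j ((ρ : ℂ) * s + s⁻¹) * F k ((ρ : ℂ) * t + t⁻¹) * Bf t)
        = F j ((ρ : ℂ) * s + s⁻¹) * ∮ t in C((0:ℂ), r), F k ((ρ : ℂ) * t + t⁻¹) * Bf t := by
      rw [← circleIntegral.integral_const_mul]
      apply circleIntegral.integral_congr hr0.le
      intro t _
      simp only
      ring
    rw [e1]
    congr 1
    -- decompose
    have hdec : Set.EqOn (fun t => F k ((ρ : ℂ) * t + t⁻¹) * Bf t)
        (fun t => (ρ:ℂ)^k * (t^k * Bf t) +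
          (A * t^(-(k:ℤ)) +
            ((ρ:ℂ) * (t^(-(k:ℤ)) * ((1 - (ρ:ℂ)*s*t)^2)⁻¹) +
              (t^(-(k:ℤ)) * ((1 - s*t)^2)⁻¹ +
                ((κ:ℂ)*s) * t^(1-(k:ℤ)))))) (Metric.sphere (0:ℂ) r) := by
      intro t ht
      have ht0 : t ≠ 0 := sphere_ne_zero hr0 ht
      have hFk : F k ((ρ:ℂ)*t + t⁻¹) = (ρ:ℂ)^k * t^k + (t⁻¹)^k := by
        rw [hF k _ hk]; exact Fval hρ0 k t ht0
      simp only
      rw [hFk, hBf]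
      have hz1 : (1 - (ρ:ℂ) * s * t) ≠ 0 := one_sub_ne hr0 hc1 (Metric.sphere_subset_closedBall ht)
      have hz2 : (1 - s * t) ≠ 0 := one_sub_ne hr0 hc2 (Metric.sphere_subset_closedBall ht)
      have hzp1 : t^(-(k:ℤ)) = (t⁻¹)^k := by
        rw [zpow_neg, zpow_natCast, inv_pow]
      have hzp2 : t^(1-(k:ℤ)) = t * (t⁻¹)^k := by
        rw [zpow_sub₀ ht0, zpow_one, zpow_natCast, div_eq_mul_inv, inv_pow]
      rw [hzp1, hzp2]
      ring
    rw [circleIntegral.integral_congr hr0.le hdec]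
    -- integrability
    have hci1 : CircleIntegrable (fun t : ℂ => (ρ:ℂ)^k * (t^k * Bf t)) 0 r := by
      apply ContinuousOn.circleIntegrable hr0.le
      exact continuousOn_const.mul ((continuousOn_pow k).mul hBc)
    have hci2 : CircleIntegrable (fun t : ℂ => A * t^(-(k:ℤ))) 0 r :=
      ci_const_mul (ci_zpow hr0 _) A
    have hq1 : CircleIntegrable (fun t : ℂ => t^(-(k:ℤ)) * ((1 - (ρ:ℂ)*s*t)^2)⁻¹) 0 r := by
      apply ContinuousOn.circleIntegrable hr0.le
      intro t ht
      have d1 : DifferentiableAt ℂ (fun t : ℂ => ((1 - (ρ:ℂ) * s * t)^2)⁻¹) t :=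
        DifferentiableAt.inv (by fun_prop)
          (pow_ne_zero 2 (one_sub_ne hr0 hc1 (Metric.sphere_subset_closedBall ht)))
      exact ContinuousWithinAt.mul
        ((differentiableAt_zpow.mpr (Or.inl (sphere_ne_zero hr0 ht))).continuousAt).continuousWithinAt
        d1.continuousAt.continuousWithinAt
    have hq2 : CircleIntegrable (fun t : ℂ => t^(-(k:ℤ)) * ((1 - s*t)^2)⁻¹) 0 r := by
      apply ContinuousOn.circleIntegrable hr0.le
      intro t ht
      have d2 : DifferentiableAt ℂ (fun t : ℂ => ((1 - s * t)^2)⁻¹) t :=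
        DifferentiableAt.inv (by fun_prop)
          (pow_ne_zero 2 (one_sub_ne hr0 hc2 (Metric.sphere_subset_closedBall ht)))
      exact ContinuousWithinAt.mul
        ((differentiableAt_zpow.mpr (Or.inl (sphere_ne_zero hr0 ht))).continuousAt).continuousWithinAt
        d2.continuousAt.continuousWithinAt
    have hci3 : CircleIntegrable (fun t : ℂ => (ρ:ℂ) * (t^(-(k:ℤ)) * ((1 - (ρ:ℂ)*s*t)^2)⁻¹)) 0 r :=
      ci_const_mul hq1 _
    have hci5 : CircleIntegrable (fun t : ℂ => ((κ:ℂ)*s) * t^(1-(k:ℤ))) 0 r :=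
      ci_const_mul (ci_zpow hr0 _) _
    rw [myint_add (f := fun t : ℂ => (ρ:ℂ)^k * (t^k * Bf t))
        (g := fun t : ℂ => A * t^(-(k:ℤ)) +
          ((ρ:ℂ) * (t^(-(k:ℤ)) * ((1 - (ρ:ℂ)*s*t)^2)⁻¹) +
            (t^(-(k:ℤ)) * ((1 - s*t)^2)⁻¹ + ((κ:ℂ)*s) * t^(1-(k:ℤ)))))
        hci1 (hci2.add (hci3.add (hq2.add hci5))),
      myint_add (f := fun t : ℂ => A * t^(-(k:ℤ)))
        (g := fun t : ℂ => (ρ:ℂ) * (t^(-(k:ℤ)) * ((1 - (ρ:ℂ)*s*t)^2)⁻¹) +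
            (t^(-(k:ℤ)) * ((1 - s*t)^2)⁻¹ + ((κ:ℂ)*s) * t^(1-(k:ℤ))))
        hci2 (hci3.add (hq2.add hci5)),
      myint_add (f := fun t : ℂ => (ρ:ℂ) * (t^(-(k:ℤ)) * ((1 - (ρ:ℂ)*s*t)^2)⁻¹))
        (g := fun t : ℂ => t^(-(k:ℤ)) * ((1 - s*t)^2)⁻¹ + ((κ:ℂ)*s) * t^(1-(k:ℤ)))
        hci3 (hq2.add hci5),
      myint_add (f := fun t : ℂ => t^(-(k:ℤ)) * ((1 - s*t)^2)⁻¹)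
        (g := fun t : ℂ => ((κ:ℂ)*s) * t^(1-(k:ℤ)))
        hq2 hci5]
    -- values
    have v1 : (∮ t in C((0:ℂ), r), (ρ:ℂ)^k * (t^k * Bf t)) = 0 := by
      apply myzero hr0
      intro z hz
      exact (differentiableAt_const _).mul ((differentiableAt_pow k).mul (hBd z hz))
    have v2 : (∮ t in C((0:ℂ), r), A * t^(-(k:ℤ)))
        = A * (if -(k:ℤ) = -1 then 2 * Real.pi * I else 0) := myint_cz hr0 A _
    have v3 : (∮ t in C((0:ℂ), r), (ρ:ℂ) * (t^(-(k:ℤ)) * ((1 - (ρ:ℂ)*s*t)^2)⁻¹))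
        = (ρ:ℂ) * (2 * Real.pi * I * k * ((ρ:ℂ)*s)^(k-1)) := by
      rw [circleIntegral.integral_const_mul, myL hr0 _ hc1 k hk]
    have v4 : (∮ t in C((0:ℂ), r), t^(-(k:ℤ)) * ((1 - s*t)^2)⁻¹)
        = 2 * Real.pi * I * k * s^(k-1) := myL hr0 _ hc2 k hk
    have v5 : (∮ t in C((0:ℂ), r), ((κ:ℂ)*s) * t^(1-(k:ℤ)))
        = ((κ:ℂ)*s) * (if 1-(k:ℤ) = -1 then 2 * Real.pi * I else 0) := myint_cz hr0 _ _
    rw [v1, v2, v3, v4, v5, zero_add]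
    have hif1 : (if -(k:ℤ) = -1 then (2 * Real.pi * I : ℂ) else 0)
        = if k = 1 then (2 * Real.pi * I : ℂ) else 0 :=
      if_congr (by constructor <;> intro h <;> omega) rfl rfl
    have hif2 : (if 1-(k:ℤ) = -1 then (2 * Real.pi * I : ℂ) else 0)
        = if k = 2 then (2 * Real.pi * I : ℂ) else 0 :=
      if_congr (by constructor <;> intro h <;> omega) rfl rfl
    rw [hif1, hif2, hPdef, hddef]
    have hpow : (ρ:ℂ) * ((ρ:ℂ)*s)^(k-1) = (ρ:ℂ)^k * s^(k-1) := by
      rw [mul_pow, ← mul_assoc]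
      congr 1
      rw [← pow_succ']
      congr 1
      omega
    split_ifs <;> linear_combination (2*(Real.pi:ℂ)*I*(k:ℂ)) * hpow
  -- outer integral
  rw [circleIntegral.integral_congr hr0.le hinner]
  -- replace F j and expand
  have houter : Set.EqOn
      (fun s => F j ((ρ : ℂ) * s + s⁻¹) *
          (P * (A * (if k = 1 then 1 else 0) + (κ:ℂ) * s * (if k = 2 then 1 else 0)
            + d * s^(k-1))))
      (fun s => (P * (A * (if k = 1 then 1 else 0)) * (ρ:ℂ)^j) * s^(j:ℤ) +
        ((P * (A * (if k = 1 then 1 else 0))) * s^(-(j:ℤ)) +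
          ((P * ((κ:ℂ) * (if k = 2 then 1 else 0)) * (ρ:ℂ)^j) * s^((j:ℤ)+1) +
            ((P * ((κ:ℂ) * (if k = 2 then 1 else 0))) * s^(1-(j:ℤ)) +
              ((P * d * (ρ:ℂ)^j) * s^((j:ℤ)+((k:ℤ)-1)) +
                (P * d) * s^(((k:ℤ)-1)-(j:ℤ)))))))
      (Metric.sphere (0:ℂ) r) := by
    intro s hs
    have hs0 : s ≠ 0 := sphere_ne_zero hr0 hs
    have hFj : F j ((ρ:ℂ)*s + s⁻¹) = (ρ:ℂ)^j * s^j + (s⁻¹)^j := by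
      rw [hF j _ hj]; exact Fval hρ0 j s hs0
    simp only
    rw [hFj]
    have z1 : s^(j:ℤ) = s^j := zpow_natCast s j
    have z2 : s^(-(j:ℤ)) = (s⁻¹)^j := by rw [zpow_neg, zpow_natCast, inv_pow]
    have z3 : s^((j:ℤ)+1) = s^j * s := by rw [zpow_add₀ hs0, zpow_natCast, zpow_one]
    have z4 : s^(1-(j:ℤ)) = s * (s⁻¹)^j := by
      rw [zpow_sub₀ hs0, zpow_one, zpow_natCast, div_eq_mul_inv, inv_pow]
    have z5 : s^((j:ℤ)+((k:ℤ)-1)) = s^j * s^(k-1) := by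
      rw [zpow_add₀ hs0, zpow_natCast]
      congr 1
      rw [← zpow_natCast s (k-1)]
      congr 1
      omega
    have z6 : s^(((k:ℤ)-1)-(j:ℤ)) = s^(k-1) * (s⁻¹)^j := by
      have e : s^((k:ℤ)-1) = s^(k-1 : ℕ) := by
        rw [← zpow_natCast s (k-1)]
        congr 1
        omega
      rw [zpow_sub₀ hs0, e, zpow_natCast, div_eq_mul_inv, ← inv_pow]
    rw [z1, z2, z3, z4, z5, z6]
    ring
  rw [circleIntegral.integral_congr hr0.le houter]
  have hadd : ∀ (a : ℂ) (m : ℤ), CircleIntegrable (fun s : ℂ => a * s^m) 0 r :=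
    fun a m => ci_const_mul (ci_zpow hr0 m) a
  set a1 : ℂ := P * (A * (if k = 1 then 1 else 0)) * (ρ:ℂ)^j with ha1
  set a2 : ℂ := P * (A * (if k = 1 then 1 else 0)) with ha2
  set a3 : ℂ := P * ((κ:ℂ) * (if k = 2 then 1 else 0)) * (ρ:ℂ)^j with ha3
  set a4 : ℂ := P * ((κ:ℂ) * (if k = 2 then 1 else 0)) with ha4
  set a5 : ℂ := P * d * (ρ:ℂ)^j with ha5
  set a6 : ℂ := P * d with ha6
  rw [myint_add (f := fun s : ℂ => a1 * s^(j:ℤ))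
      (g := fun s : ℂ => a2 * s^(-(j:ℤ)) + (a3 * s^((j:ℤ)+1) + (a4 * s^(1-(j:ℤ)) +
        (a5 * s^((j:ℤ)+((k:ℤ)-1)) + a6 * s^(((k:ℤ)-1)-(j:ℤ))))))
      (hadd _ _) ((hadd _ _).add ((hadd _ _).add ((hadd _ _).add
      ((hadd _ _).add (hadd _ _))))),
    myint_add (f := fun s : ℂ => a2 * s^(-(j:ℤ)))
      (g := fun s : ℂ => a3 * s^((j:ℤ)+1) + (a4 * s^(1-(j:ℤ)) +
        (a5 * s^((j:ℤ)+((k:ℤ)-1)) + a6 * s^(((k:ℤ)-1)-(j:ℤ)))))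
      (hadd _ _) ((hadd _ _).add ((hadd _ _).add ((hadd _ _).add (hadd _ _)))),
    myint_add (f := fun s : ℂ => a3 * s^((j:ℤ)+1))
      (g := fun s : ℂ => a4 * s^(1-(j:ℤ)) + (a5 * s^((j:ℤ)+((k:ℤ)-1)) + a6 * s^(((k:ℤ)-1)-(j:ℤ))))
      (hadd _ _) ((hadd _ _).add ((hadd _ _).add (hadd _ _))),
    myint_add (f := fun s : ℂ => a4 * s^(1-(j:ℤ)))
      (g := fun s : ℂ => a5 * s^((j:ℤ)+((k:ℤ)-1)) + a6 * s^(((k:ℤ)-1)-(j:ℤ)))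
      (hadd _ _) ((hadd _ _).add (hadd _ _)),
    myint_add (f := fun s : ℂ => a5 * s^((j:ℤ)+((k:ℤ)-1)))
      (g := fun s : ℂ => a6 * s^(((k:ℤ)-1)-(j:ℤ)))
      (hadd _ _) (hadd _ _),
    myint_cz hr0, myint_cz hr0, myint_cz hr0, myint_cz hr0, myint_cz hr0, myint_cz hr0]
  -- evaluate the if-conditions
  have c1 : ((j:ℤ) = -1) = False := eq_false (by omega)
  have c2 : (-(j:ℤ) = -1) = (j = 1) := propext (by constructor <;> intro h <;> omega)
  have c3 : ((j:ℤ)+1 = -1) = False := eq_false (by omega)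
  have c4 : (1-(j:ℤ) = -1) = (j = 2) := propext (by constructor <;> intro h <;> omega)
  have c5 : ((j:ℤ)+((k:ℤ)-1) = -1) = False := eq_false (by omega)
  have c6 : (((k:ℤ)-1)-(j:ℤ) = -1) = (j = k) := propext (by constructor <;> intro h <;> omega)
  simp only [c1, c2, c3, c4, c5, c6]
  simp only [if_false, mul_zero, add_zero, zero_add]
  have hπ : (Real.pi : ℂ) ≠ 0 := ofReal_ne_zero.mpr Real.pi_ne_zero
  have hI2 : (I:ℂ)^2 = -1 := Complex.I_sq
  by_cases hjk : j = k
  · subst hjk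
    rw [if_pos rfl]
    by_cases h1 : j = 1
    · subst h1
      simp only [↓reduceIte, ha1, ha3, ha5, ha2, ha4, ha6, hPdef, hddef, hAdef,
          eq_self_iff_true, if_true, if_false, show (1:ℕ) ≠ 2 by decide, show (2:ℕ) ≠ 1 by decide]
      ring_nf
      simp only [Complex.I_sq]
      field_simp
    · by_cases h2 : j = 2
      · subst h2
        simp only [↓reduceIte, ha1, ha3, ha5, ha2, ha4, ha6, hPdef, hddef, hAdef,
          eq_self_iff_true, if_true, if_false, show (1:ℕ) ≠ 2 by decide, show (2:ℕ) ≠ 1 by decide]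
        ring_nf
        simp only [Complex.I_sq]
        field_simp
        ring
      · simp only [if_neg h1, if_neg h2, ha1, ha3, ha5, ha2, ha4, ha6, hPdef, hddef, hAdef,
          eq_self_iff_true, if_true, if_false, show (1:ℕ) ≠ 2 by decide, show (2:ℕ) ≠ 1 by decide]
        ring_nf
        simp only [Complex.I_sq]
        field_simp
        ring
  · rw [if_neg hjk, if_neg hjk]
    by_cases h1 : j = 1 <;> by_cases h2 : j = 2
    · omega
    · subst h1
      have hk1 : k ≠ 1 := fun h => hjk (by omega)
      simp [if_neg hk1, ha2, ha4, ha6]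
    · subst h2
      have hk2 : k ≠ 2 := fun h => hjk (by omega)
      simp [if_neg hk2, ha2, ha4, ha6]
    · simp [if_neg h1, if_neg h2, ha2, ha4, ha6]
end

section
/- Let (ξ₁,ξ₂) be a random vector in ℝ² and ζ a real random variable satisfying condition C0, and let ε > 0 be such that, with ε_N := N^{−ε}, both ε_N^{−6}·E[|ξ_i|⁶ 1_{|ξ_i| > ε_N √N}] → 0 for i = 1,2 and ε_N^{−4}·E[|ζ|⁴ 1_{|ζ| > ε_N √N}] → 0. For each N let Y_N = (y_{ij}) be a real elliptic random matrix of size N with atom variables (ξ₁,ξ₂), ζ, and let Ŷ_N = (ŷ_{ij}) be its truncation: ỹ_{ij} := y_{ij} 1_{|y_{ij}| ≤ ε_N √N} − E[y_{ij} 1_{|y_{ij}| ≤ ε_N √N}]; ŷ_{ij} := ỹ_{ij}/√Var(ỹ_{ij}) for i ≠ j, and ŷ_{ii} := σ·ỹ_{ii}/√Var(ỹ_{ii}). Set X_N := Y_N/√N and X̂_N := Ŷ_N/√N. Then N·ε_N^{−2}·E[‖X_N − X̂_N‖_F²] → 0 as N → ∞, where ‖·‖_F is the Hilbert–Schmidt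 (Frobenius) norm, and consequently N·P(‖X_N − X̂_N‖ > ε_N) → 0, where ‖·‖ is the operator norm. -/
open MeasureTheory ProbabilityTheory Filter Topology

noncomputable section

/-- The ellipsoid `E_ρ`. -/
def ellipse (ρ : ℝ) : Set ℂ :=
  if ρ = 1 then {z : ℂ | z.im = 0 ∧ |z.re| ≤ 2}
  else if ρ = -1 then {z : ℂ | z.re = 0 ∧ |z.im| ≤ 2}
  else {z : ℂ | z.re ^ 2 / (1 + ρ) ^ 2 + z.im ^ 2 / (1 - ρ) ^ 2 < 1}

/-- The `δ`-neighborhood `E_{ρ,δ}`. -/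
def ellipseNbhd (ρ δ : ℝ) : Set ℂ := {z : ℂ | Metric.infDist z (ellipse ρ) ≤ δ}

/-- Index type for the independent entries of an elliptic random matrix. -/
abbrev EllipticIndex (N : ℕ) := (Fin N) ⊕ {p : Fin N × Fin N // p.1 < p.2}

abbrev ellipticCodomain (N : ℕ) : EllipticIndex N → Type := Sum.elim (fun _ => ℝ) (fun _ => ℝ × ℝ)

def ellipticMS (N : ℕ) : ∀ idx : EllipticIndex N, MeasurableSpace (ellipticCodomain N idx)
  | Sum.inl _ => (inferInstance : MeasurableSpace ℝ)
  | Sum.inr _ => (inferInstance : MeasurableSpace (ℝ × ℝ))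

def ellipticFam {Ω : Type*} {N : ℕ} (Y : Ω → Matrix (Fin N) (Fin N) ℝ) :
    ∀ idx : EllipticIndex N, Ω → ellipticCodomain N idx
  | Sum.inl i => fun ω => Y ω i i
  | Sum.inr p => fun ω => (Y ω p.1.1 p.1.2, Y ω p.1.2 p.1.1)

/-- `Y` is a real elliptic random matrix with atom variables `(ξ₁, ξ₂), ζ`
(defined on an auxiliary probability space). -/
def IsEllipticRM {Ω Ω' : Type*} [MeasurableSpace Ω] [MeasurableSpace Ω']
    (P : Measure Ω) (P' : Measure Ω') (ξ₁ ξ₂ ζ : Ω' → ℝ)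
    {N : ℕ} (Y : Ω → Matrix (Fin N) (Fin N) ℝ) : Prop :=
  iIndepFun (m := ellipticMS N) (ellipticFam Y) P ∧
  (∀ p : {p : Fin N × Fin N // p.1 < p.2},
    IdentDistrib (fun ω => (Y ω p.1.1 p.1.2, Y ω p.1.2 p.1.1))
      (fun ω' => (ξ₁ ω', ξ₂ ω')) P P') ∧
  (∀ i : Fin N, IdentDistrib (fun ω => Y ω i i) ζ P P')

/-- Condition C0 on the atom variables. -/
def CondC0 {Ω' : Type*} [MeasurableSpace Ω'] (P' : Measure Ω')
    (ξ₁ ξ₂ ζ : Ω' → ℝ) (σ2 : ℝ) : Prop :=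
  (∫ ω, ξ₁ ω ∂P') = 0 ∧ (∫ ω, ξ₂ ω ∂P') = 0 ∧
  (∫ ω, (ξ₁ ω) ^ 2 ∂P') = 1 ∧ (∫ ω, (ξ₂ ω) ^ 2 ∂P') = 1 ∧
  (∫ ω, ζ ω ∂P') = 0 ∧ (∫ ω, (ζ ω) ^ 2 ∂P') = σ2 ∧
  ∃ τ : ℝ, 0 < τ ∧
    (∫⁻ ω, ENNReal.ofReal (|ξ₁ ω| ^ (6 + τ)) ∂P') < ⊤ ∧
    (∫⁻ ω, ENNReal.ofReal (|ξ₂ ω| ^ (6 + τ)) ∂P') < ⊤ ∧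
    (∫⁻ ω, ENNReal.ofReal (|ζ ω| ^ (4 + τ)) ∂P') < ⊤

/-- `tr f(M)` : the sum of `f` over the eigenvalues of the real matrix `M`
(the roots of the characteristic polynomial over `ℂ`, with multiplicity). -/
def trF {N : ℕ} (f : ℂ → ℂ) (M : Matrix (Fin N) (Fin N) ℝ) : ℂ :=
  (((M.map (Complex.ofReal)).charpoly.roots).map f).sum

/-- The coefficient `a_l(f)` from the Faber expansion. -/
def faberCoeff (ρ r : ℝ) (f : ℂ → ℂ) (l : ℕ) : ℂ :=
  (2 * Real.pi * Complex.I)⁻¹ * ∮ s in C(0, r), s ^ ((l : ℤ) - 1) * f (ρ * s + s⁻¹)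

/-- The limiting variance `V(f)`. -/
def limVar (σ2 ρ κ : ℝ) (a : ℕ → ℂ) : ℂ :=
  (σ2 - ρ - 1) * (a 1) ^ 2 + (κ - 2 * ρ ^ 2 - 1) * (a 2) ^ 2 +
    ∑' l : ℕ, ((l : ℂ) + 1) * (1 + (ρ : ℂ) ^ (l + 1)) * (a (l + 1)) ^ 2

/-- The least singular value of a square complex matrix. -/
def sigmaMin {N : ℕ} (M : Matrix (Fin N) (Fin N) ℂ) : ℝ :=
  ⨅ x : {x : EuclideanSpace ℂ (Fin N) // ‖x‖ = 1}, ‖Matrix.toEuclideanLin M x.1‖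

/-- The operator (spectral) norm of a square matrix over `ℝ` or `ℂ`. -/
def opNorm {𝕜 : Type*} [RCLike 𝕜] {N : ℕ} (M : Matrix (Fin N) (Fin N) 𝕜) : ℝ :=
  ‖LinearMap.toContinuousLinearMap (Matrix.toEuclideanLin M)‖

/-- A sequence of events holds with overwhelming probability. -/
def OverwhelmingProb {Ω : ℕ → Type*} [∀ n, MeasurableSpace (Ω n)]
    (P : ∀ n, Measure (Ω n)) (E : ∀ n, Set (Ω n)) : Prop :=
  ∀ C : ℝ, 0 < C → ∃ K : ℝ, 0 < K ∧ ∀ n : ℕ, 1 ≤ n →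
    P n (E n)ᶜ ≤ ENNReal.ofReal (K * (n : ℝ) ^ (-C))

end


namespace Stmt9Aux

noncomputable section

def trunc (t x : ℝ) : ℝ := if |x| ≤ t then x else 0

lemma measurable_trunc (t : ℝ) : Measurable (trunc t) :=
  Measurable.ite (measurableSet_le measurable_abs measurable_const) measurable_id
    measurable_const

lemma abs_trunc_le (t x : ℝ) : |trunc t x| ≤ |x| := by
  unfold trunc; split <;> simp [abs_nonneg]

lemma trunc_sq_le (t x : ℝ) : (trunc t x) ^ 2 ≤ x ^ 2 := by
  unfold trunc; split
  · exact le_refl _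
  · simpa using sq_nonneg x

def tail (t x : ℝ) : ℝ := if t < |x| then x else 0

lemma measurable_tail (t : ℝ) : Measurable (tail t) :=
  Measurable.ite (measurableSet_lt measurable_const measurable_abs) measurable_id
    measurable_const

lemma abs_tail_le (t x : ℝ) : |tail t x| ≤ |x| := by
  unfold tail; split <;> simp [abs_nonneg]

lemma tail_sq (t x : ℝ) : (tail t x) ^ 2 = if t < |x| then x ^ 2 else 0 := by
  unfold tail; split <;> simp

lemma trunc_add_tail (t x : ℝ) : trunc t x + tail t x = x := by
  unfold trunc tail
  by_cases h : |x| ≤ t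
  · simp [h, not_lt.2 h]
  · simp [h, not_le.1 h]

lemma trunc_sq_add_tail_sq (t x : ℝ) : (trunc t x) ^ 2 + (tail t x) ^ 2 = x ^ 2 := by
  unfold trunc tail
  by_cases h : |x| ≤ t
  · simp [h, not_lt.2 h]
  · simp [h, not_le.1 h]

variable {Ω' : Type*} [MeasurableSpace Ω']

lemma scalar_key (P' : Measure Ω') [IsProbabilityMeasure P']
    (η : Ω' → ℝ) (hηm : AEMeasurable η P') (h2 : Integrable (fun ω => η ω ^ 2) P')
    (hmean : (∫ ω, η ω ∂P') = 0) (c t : ℝ) (hc : 0 ≤ c)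
    (hvar : (∫ ω, η ω ^ 2 ∂P') = c ^ 2) :
    Integrable (fun ω => (η ω - c * (trunc t (η ω) - ∫ ω', trunc t (η ω') ∂P') /
        Real.sqrt (∫ ω', (trunc t (η ω') - ∫ ω'', trunc t (η ω'') ∂P') ^ 2 ∂P')) ^ 2) P' ∧
    (∫ ω, (η ω - c * (trunc t (η ω) - ∫ ω', trunc t (η ω') ∂P') /
        Real.sqrt (∫ ω', (trunc t (η ω') - ∫ ω'', trunc t (η ω'') ∂P') ^ 2 ∂P')) ^ 2 ∂P')
      ≤ 4 * ∫ ω, (if t < |η ω| then η ω ^ 2 else 0) ∂P' := by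
  have hηsm : AEStronglyMeasurable η P' := hηm.aestronglyMeasurable
  have hInt_η : Integrable η P' := by
    have hg : Integrable (fun ω => 1 + η ω ^ 2) P' := (integrable_const (1 : ℝ)).add h2
    refine hg.mono' hηsm (ae_of_all _ fun ω => ?_)
    rw [Real.norm_eq_abs]
    nlinarith [sq_nonneg (|η ω| - 1), sq_abs (η ω), abs_nonneg (η ω)]
  have hTm : AEMeasurable (fun ω => trunc t (η ω)) P' :=
    (measurable_trunc t).comp_aemeasurable hηm
  have hRm : AEMeasurable (fun ω => tail t (η ω)) P' :=
    (measurable_tail t).comp_aemeasurable hηm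
  have hInt_T : Integrable (fun ω => trunc t (η ω)) P' :=
    hInt_η.abs.mono' hTm.aestronglyMeasurable
      (ae_of_all _ fun ω => by rw [Real.norm_eq_abs]; exact abs_trunc_le t (η ω))
  have hInt_R : Integrable (fun ω => tail t (η ω)) P' :=
    hInt_η.abs.mono' hRm.aestronglyMeasurable
      (ae_of_all _ fun ω => by rw [Real.norm_eq_abs]; exact abs_tail_le t (η ω))
  have hInt_T2 : Integrable (fun ω => (trunc t (η ω)) ^ 2) P' :=
    h2.mono' (hTm.pow_const 2).aestronglyMeasurable
      (ae_of_all _ fun ω => by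
        rw [Real.norm_eq_abs, abs_of_nonneg (sq_nonneg _)]
        exact trunc_sq_le t (η ω))
  have hInt_R2 : Integrable (fun ω => (tail t (η ω)) ^ 2) P' := by
    refine h2.mono' (hRm.pow_const 2).aestronglyMeasurable
      (ae_of_all _ fun ω => ?_)
    rw [Real.norm_eq_abs, abs_of_nonneg (sq_nonneg _)]
    have := trunc_sq_add_tail_sq t (η ω)
    nlinarith [sq_nonneg (trunc t (η ω))]
  set μ0 : ℝ := ∫ ω, trunc t (η ω) ∂P' with hμ0_def
  set E : ℝ := ∫ ω, (tail t (η ω)) ^ 2 ∂P' with hE_def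
  have hE0 : 0 ≤ E := integral_nonneg fun ω => sq_nonneg _
  have hμR : (∫ ω, tail t (η ω) ∂P') = -μ0 := by
    have h1 : (∫ ω, (trunc t (η ω) + tail t (η ω)) ∂P') = μ0 + ∫ ω, tail t (η ω) ∂P' :=
      integral_add hInt_T hInt_R
    have h2' : (∫ ω, (trunc t (η ω) + tail t (η ω)) ∂P') = 0 := by
      rw [show (fun ω => trunc t (η ω) + tail t (η ω)) = η from
        funext fun ω => trunc_add_tail t (η ω)]
      exact hmean
    linarith [h1, h2']
  have hIT2 : (∫ ω, (trunc t (η ω)) ^ 2 ∂P') = c ^ 2 - E := by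
    have h1 : (∫ ω, ((trunc t (η ω)) ^ 2 + (tail t (η ω)) ^ 2) ∂P')
        = (∫ ω, (trunc t (η ω)) ^ 2 ∂P') + E := integral_add hInt_T2 hInt_R2
    have h2' : (∫ ω, ((trunc t (η ω)) ^ 2 + (tail t (η ω)) ^ 2) ∂P') = c ^ 2 := by
      rw [show (fun ω => (trunc t (η ω)) ^ 2 + (tail t (η ω)) ^ 2) = fun ω => η ω ^ 2 from
        funext fun ω => trunc_sq_add_tail_sq t (η ω)]
      exact hvar
    linarith [h1, h2']
  set v0 : ℝ := ∫ ω, (trunc t (η ω) - μ0) ^ 2 ∂P' with hv0_def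
  have hv0nn : 0 ≤ v0 := integral_nonneg fun ω => sq_nonneg _
  have hInt_Tμ2 : Integrable (fun ω => (trunc t (η ω) - μ0) ^ 2) P' := by
    have : (fun ω => (trunc t (η ω) - μ0) ^ 2)
        = fun ω => ((trunc t (η ω)) ^ 2 + (-(2 * μ0)) * trunc t (η ω)) + μ0 ^ 2 :=
      funext fun ω => by ring
    rw [this]
    exact (hInt_T2.add (hInt_T.const_mul _)).add (integrable_const _)
  have hv : v0 = c ^ 2 - E - μ0 ^ 2 := by
    have hImix : Integrable (fun ω => (trunc t (η ω)) ^ 2 + (-(2 * μ0)) * trunc t (η ω)) P' :=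
      hInt_T2.add (hInt_T.const_mul _)
    have h1 : v0 = (∫ ω, ((trunc t (η ω)) ^ 2 + (-(2 * μ0)) * trunc t (η ω)) ∂P') + μ0 ^ 2 := by
      rw [hv0_def, show (fun ω => (trunc t (η ω) - μ0) ^ 2)
          = fun ω => (((trunc t (η ω)) ^ 2 + (-(2 * μ0)) * trunc t (η ω)) + μ0 ^ 2) from
        funext fun ω => by ring]
      rw [integral_add hImix (integrable_const _)]
      simp
    have h2' : (∫ ω, ((trunc t (η ω)) ^ 2 + (-(2 * μ0)) * trunc t (η ω)) ∂P')
        = (c ^ 2 - E) + (-(2 * μ0)) * μ0 := by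
      rw [integral_add hInt_T2 (hInt_T.const_mul _), hIT2, integral_const_mul, ← hμ0_def]
    rw [h1, h2']; ring
  set s : ℝ := Real.sqrt v0 with hs_def
  have hs0 : 0 ≤ s := Real.sqrt_nonneg _
  have hs2 : s ^ 2 = v0 := Real.sq_sqrt hv0nn
  have hvc : v0 ≤ c ^ 2 := by nlinarith [sq_nonneg μ0]
  have hsc : s ≤ c := by
    rw [hs_def]
    calc Real.sqrt v0 ≤ Real.sqrt (c ^ 2) := Real.sqrt_le_sqrt hvc
    _ = c := Real.sqrt_sq hc
  set k : ℝ := 1 - c / s with hk_def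
  have hkb : k ^ 2 * v0 ≤ E + μ0 ^ 2 := by
    rcases eq_or_lt_of_le hs0 with h0 | h0
    · have : v0 = 0 := by rw [← hs2, ← h0]; ring
      rw [this]
      nlinarith [sq_nonneg c]
    · have hsne : s ≠ 0 := ne_of_gt h0
      have hkv : k ^ 2 * v0 = (s - c) ^ 2 := by
        rw [hk_def, ← hs2]
        field_simp
      have h2' : (s - c) ^ 2 ≤ c ^ 2 - s ^ 2 := by
        nlinarith [mul_nonneg hs0 (sub_nonneg.2 hsc)]
      nlinarith
  -- a and b decomposition
  have hab : ∀ ω, η ω - c * (trunc t (η ω) - μ0) / s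
      = (tail t (η ω) + μ0) + k * (trunc t (η ω) - μ0) := by
    intro ω
    have h := trunc_add_tail t (η ω)
    rw [hk_def]
    linear_combination -h
  have hInt_a2 : Integrable (fun ω => (tail t (η ω) + μ0) ^ 2) P' := by
    have : (fun ω => (tail t (η ω) + μ0) ^ 2)
        = fun ω => (((tail t (η ω)) ^ 2 + (2 * μ0) * tail t (η ω)) + μ0 ^ 2) :=
      funext fun ω => by ring
    rw [this]
    exact (hInt_R2.add (hInt_R.const_mul _)).add (integrable_const _)
  have hIa2 : (∫ ω, (tail t (η ω) + μ0) ^ 2 ∂P') = E - μ0 ^ 2 := by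
    have hImix : Integrable (fun ω => (tail t (η ω)) ^ 2 + (2 * μ0) * tail t (η ω)) P' :=
      hInt_R2.add (hInt_R.const_mul _)
    rw [show (fun ω => (tail t (η ω) + μ0) ^ 2)
        = fun ω => (((tail t (η ω)) ^ 2 + (2 * μ0) * tail t (η ω)) + μ0 ^ 2) from
      funext fun ω => by ring]
    rw [integral_add hImix (integrable_const _),
      integral_add hInt_R2 (hInt_R.const_mul _), integral_const_mul, hμR, ← hE_def]
    simp only [integral_const, probReal_univ, measure_univ, ENNReal.toReal_one, one_smul, smul_eq_mul]
    ring
  have hInt_b2 : Integrable (fun ω => (k * (trunc t (η ω) - μ0)) ^ 2) P' := by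
    have : (fun ω => (k * (trunc t (η ω) - μ0)) ^ 2)
        = fun ω => k ^ 2 * (trunc t (η ω) - μ0) ^ 2 := funext fun ω => by ring
    rw [this]
    exact hInt_Tμ2.const_mul _
  have hIb2 : (∫ ω, (k * (trunc t (η ω) - μ0)) ^ 2 ∂P') = k ^ 2 * v0 := by
    rw [show (fun ω => (k * (trunc t (η ω) - μ0)) ^ 2)
        = fun ω => k ^ 2 * (trunc t (η ω) - μ0) ^ 2 from funext fun ω => by ring]
    rw [integral_const_mul, ← hv0_def]
  have hptwise : ∀ ω, ((tail t (η ω) + μ0) + k * (trunc t (η ω) - μ0)) ^ 2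
      ≤ 2 * (tail t (η ω) + μ0) ^ 2 + 2 * (k * (trunc t (η ω) - μ0)) ^ 2 := by
    intro ω
    nlinarith [sq_nonneg ((tail t (η ω) + μ0) - k * (trunc t (η ω) - μ0))]
  have hInt_sum : Integrable (fun ω => 2 * (tail t (η ω) + μ0) ^ 2
      + 2 * (k * (trunc t (η ω) - μ0)) ^ 2) P' :=
    (hInt_a2.const_mul 2).add (hInt_b2.const_mul 2)
  have habm : AEMeasurable (fun ω => (tail t (η ω) + μ0) + k * (trunc t (η ω) - μ0)) P' :=
    (hRm.add_const μ0).add ((hTm.sub_const μ0).const_mul k)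
  have hInt_ab2 : Integrable
      (fun ω => ((tail t (η ω) + μ0) + k * (trunc t (η ω) - μ0)) ^ 2) P' := by
    refine hInt_sum.mono' (habm.pow_const 2).aestronglyMeasurable
      (ae_of_all _ fun ω => ?_)
    rw [Real.norm_eq_abs, abs_of_nonneg (sq_nonneg _)]
    exact hptwise ω
  have hIab2 : (∫ ω, ((tail t (η ω) + μ0) + k * (trunc t (η ω) - μ0)) ^ 2 ∂P') ≤ 4 * E := by
    have h1 := integral_mono hInt_ab2 hInt_sum hptwise
    rw [integral_add (hInt_a2.const_mul 2) (hInt_b2.const_mul 2),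
      integral_const_mul, integral_const_mul, hIa2, hIb2] at h1
    linarith [hkb, h1]
  -- now rewrite goal
  have hgoalfun : (fun ω => (η ω - c * (trunc t (η ω) - μ0) / s) ^ 2)
      = fun ω => ((tail t (η ω) + μ0) + k * (trunc t (η ω) - μ0)) ^ 2 :=
    funext fun ω => by rw [hab ω]
  have hEfun : (fun ω => (if t < |η ω| then η ω ^ 2 else 0))
      = fun ω => (tail t (η ω)) ^ 2 := funext fun ω => (tail_sq t (η ω)).symm
  constructor
  · rw [hgoalfun]
    exact hInt_ab2
  · rw [hgoalfun, hEfun]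
    exact hIab2



variable {Ω' : Type*} [MeasurableSpace Ω']

lemma entry_key {Ω : Type*} [MeasurableSpace Ω]
    (P : Measure Ω) (P' : Measure Ω') [IsProbabilityMeasure P] [IsProbabilityMeasure P']
    {f : Ω → ℝ} {η : Ω' → ℝ} (hid : IdentDistrib f η P P')
    (h2 : Integrable (fun ω => η ω ^ 2) P') (hmean : (∫ ω, η ω ∂P') = 0)
    (c t : ℝ) (hc : 0 ≤ c) (hvar : (∫ ω, η ω ^ 2 ∂P') = c ^ 2) :
    Integrable (fun ω => (f ω - c * (trunc t (f ω) - ∫ ω', trunc t (f ω') ∂P) /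
        Real.sqrt (∫ ω', (trunc t (f ω') - ∫ ω'', trunc t (f ω'') ∂P) ^ 2 ∂P)) ^ 2) P ∧
    (∫ ω, (f ω - c * (trunc t (f ω) - ∫ ω', trunc t (f ω') ∂P) /
        Real.sqrt (∫ ω', (trunc t (f ω') - ∫ ω'', trunc t (f ω'') ∂P) ^ 2 ∂P)) ^ 2 ∂P)
      ≤ 4 * ∫ ω, (if t < |η ω| then η ω ^ 2 else 0) ∂P' := by
  have hμ : (∫ ω', trunc t (f ω') ∂P) = ∫ ω', trunc t (η ω') ∂P' := by
    have h := (hid.comp (measurable_trunc t)).integral_eq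
    simpa [Function.comp] using h
  rw [hμ]
  set μ0 : ℝ := ∫ ω', trunc t (η ω') ∂P' with hμ0_def
  have hv : (∫ ω', (trunc t (f ω') - μ0) ^ 2 ∂P)
      = ∫ ω', (trunc t (η ω') - μ0) ^ 2 ∂P' := by
    have h := (hid.comp (((measurable_trunc t).sub_const μ0).pow_const 2)).integral_eq
    simpa [Function.comp] using h
  rw [hv]
  set v0 : ℝ := ∫ ω', (trunc t (η ω') - μ0) ^ 2 ∂P' with hv0_def
  have hB : Measurable (fun x : ℝ => (x - c * (trunc t x - μ0) / Real.sqrt v0) ^ 2) :=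
    ((measurable_id.sub
      ((((measurable_trunc t).sub_const μ0).const_mul c).div_const (Real.sqrt v0)))).pow_const 2
  have hidB := hid.comp hB
  have hkey := scalar_key P' η hid.aemeasurable_snd h2 hmean c t hc hvar
  rw [← hμ0_def, ← hv0_def] at hkey
  constructor
  · have h := hidB.integrable_iff
    simp only [Function.comp_def] at h
    exact h.2 hkey.1
  · have h := hidB.integral_eq
    simp only [Function.comp] at h
    rw [h]
    exact hkey.2

lemma tail_le_pow (P' : Measure Ω') [IsProbabilityMeasure P']
    (η : Ω' → ℝ) (hηm : AEMeasurable η P') (t : ℝ) (ht : 0 < t) (d : ℕ)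
    (hint : Integrable (fun ω => if t < |η ω| then |η ω| ^ (d + 2) else 0) P') :
    (∫ ω, (if t < |η ω| then η ω ^ 2 else 0) ∂P')
      ≤ (t ^ d)⁻¹ * ∫ ω, (if t < |η ω| then |η ω| ^ (d + 2) else 0) ∂P' := by
  have hpt : ∀ ω, (if t < |η ω| then η ω ^ 2 else 0)
      ≤ (t ^ d)⁻¹ * (if t < |η ω| then |η ω| ^ (d + 2) else 0) := by
    intro ω
    by_cases h : t < |η ω|
    · simp only [h, if_true]
      rw [inv_mul_eq_div, le_div_iff₀ (pow_pos ht d)]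
      calc η ω ^ 2 * t ^ d ≤ η ω ^ 2 * |η ω| ^ d := by
            apply mul_le_mul_of_nonneg_left _ (sq_nonneg _)
            exact pow_le_pow_left₀ ht.le h.le d
        _ = |η ω| ^ (d + 2) := by rw [← sq_abs (η ω)]; ring
    · simp [h]
  have hlm : AEMeasurable (fun ω => if t < |η ω| then η ω ^ 2 else 0) P' := by
    have hm : Measurable (fun x : ℝ => if t < |x| then x ^ 2 else 0) :=
      Measurable.ite (measurableSet_lt measurable_const measurable_abs)
        (measurable_id.pow_const 2) measurable_const
    exact hm.comp_aemeasurable hηm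
  have hil : Integrable (fun ω => if t < |η ω| then η ω ^ 2 else 0) P' := by
    refine (hint.const_mul ((t ^ d)⁻¹)).mono' hlm.aestronglyMeasurable
      (ae_of_all _ fun ω => ?_)
    rw [Real.norm_eq_abs, abs_of_nonneg (by positivity)]
    exact hpt ω
  calc (∫ ω, (if t < |η ω| then η ω ^ 2 else 0) ∂P')
      ≤ ∫ ω, (t ^ d)⁻¹ * (if t < |η ω| then |η ω| ^ (d + 2) else 0) ∂P' :=
        integral_mono hil (hint.const_mul _) hpt
    _ = (t ^ d)⁻¹ * ∫ ω, (if t < |η ω| then |η ω| ^ (d + 2) else 0) ∂P' := integral_const_mul _ _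

lemma integrable_abs_pow (P' : Measure Ω') [IsProbabilityMeasure P']
    (η : Ω' → ℝ) (hηm : AEMeasurable η P') (p : ℝ) (hp : 0 ≤ p) (q : ℕ) (hq : (q : ℝ) ≤ p)
    (hfin : (∫⁻ ω, ENNReal.ofReal (|η ω| ^ p) ∂P') < ⊤) :
    Integrable (fun ω => |η ω| ^ q) P' := by
  have habs : AEMeasurable (fun ω => |η ω|) P' := measurable_abs.comp_aemeasurable hηm
  have hrm : AEMeasurable (fun ω => |η ω| ^ p) P' :=
    (Real.continuous_rpow_const hp).measurable.comp_aemeasurable habs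
  have hintp : Integrable (fun ω => |η ω| ^ p) P' := by
    refine ⟨hrm.aestronglyMeasurable, ?_⟩
    rw [hasFiniteIntegral_iff_ofReal (ae_of_all _ fun ω => Real.rpow_nonneg (abs_nonneg _) p)]
    exact hfin
  have hg : Integrable (fun ω => |η ω| ^ p + 1) P' := hintp.add (integrable_const (1 : ℝ))
  refine hg.mono' (habs.pow_const q).aestronglyMeasurable (ae_of_all _ fun ω => ?_)
  rw [Real.norm_eq_abs, abs_of_nonneg (by positivity)]
  by_cases h : |η ω| ≤ 1
  · have h1 : |η ω| ^ q ≤ 1 := pow_le_one₀ (abs_nonneg _) h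
    have h2 : 0 ≤ |η ω| ^ p := Real.rpow_nonneg (abs_nonneg _) _
    linarith
  · push_neg at h
    have h1 : |η ω| ^ q = |η ω| ^ (q : ℝ) := (Real.rpow_natCast _ q).symm
    have h2 : |η ω| ^ (q : ℝ) ≤ |η ω| ^ p :=
      Real.rpow_le_rpow_of_exponent_le h.le hq
    linarith [h1 ▸ h2]

lemma integrable_tail_pow (P' : Measure Ω') [IsProbabilityMeasure P']
    (η : Ω' → ℝ) (hηm : AEMeasurable η P') (q : ℕ) (t : ℝ)
    (hint : Integrable (fun ω => |η ω| ^ q) P') :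
    Integrable (fun ω => if t < |η ω| then |η ω| ^ q else 0) P' := by
  have hm : Measurable (fun x : ℝ => if t < |x| then |x| ^ q else 0) :=
    Measurable.ite (measurableSet_lt measurable_const measurable_abs)
      (measurable_abs.pow_const q) measurable_const
  refine hint.mono' (hm.comp_aemeasurable hηm).aestronglyMeasurable
    (ae_of_all _ fun ω => ?_)
  rw [Real.norm_eq_abs]
  by_cases h : t < |η ω|
  · simp [h, abs_of_nonneg (pow_nonneg (abs_nonneg (η ω)) q)]
  · simp only [h, if_false, abs_zero]
    positivity



lemma trace_mul_transpose {N : ℕ} (M : Matrix (Fin N) (Fin N) ℝ) :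
    Matrix.trace (M * M.transpose) = ∑ i, ∑ j, (M i j) ^ 2 := by
  simp [Matrix.trace, Matrix.diag, Matrix.mul_apply, sq]

lemma trace_nonneg {N : ℕ} (M : Matrix (Fin N) (Fin N) ℝ) :
    0 ≤ Matrix.trace (M * M.transpose) := by
  rw [trace_mul_transpose]
  positivity

lemma opNorm_le_sqrt_trace {N : ℕ} (M : Matrix (Fin N) (Fin N) ℝ) :
    opNorm M ≤ Real.sqrt (Matrix.trace (M * M.transpose)) := by
  rw [trace_mul_transpose]
  unfold opNorm
  apply ContinuousLinearMap.opNorm_le_bound _ (Real.sqrt_nonneg _)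
  intro x
  rw [LinearMap.coe_toContinuousLinearMap']
  have hx : ‖x‖ = Real.sqrt (∑ j, (x j) ^ 2) := by
    rw [EuclideanSpace.norm_eq]
    congr 1
    refine Finset.sum_congr rfl fun j _ => ?_
    rw [Real.norm_eq_abs, sq_abs]
  have happ : ∀ i, (Matrix.toEuclideanLin M) x i = ∑ j, M i j * x j := by
    intro i
    rfl
  have hnv : ‖(Matrix.toEuclideanLin M) x‖
      = Real.sqrt (∑ i, (∑ j, M i j * x j) ^ 2) := by
    rw [EuclideanSpace.norm_eq]
    congr 1
    refine Finset.sum_congr rfl fun i _ => ?_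
    rw [happ i, Real.norm_eq_abs, sq_abs]
  rw [hnv, hx, ← Real.sqrt_mul (by positivity)]
  apply Real.sqrt_le_sqrt
  rw [Finset.sum_mul]
  refine Finset.sum_le_sum fun i _ => ?_
  calc (∑ j, M i j * x j) ^ 2 ≤ (∑ j, (M i j) ^ 2) * ∑ j, (x j) ^ 2 :=
        Finset.sum_mul_sq_le_sq_mul_sq _ _ _
    _ = (∑ j, (M i j) ^ 2) * ∑ j, (x j) ^ 2 := rfl



lemma main_bound {Ω : Type*} [MeasurableSpace Ω]
    (P : Measure Ω) (P' : Measure Ω') [IsProbabilityMeasure P] [IsProbabilityMeasure P']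
    (ξ₁ ξ₂ ζ : Ω' → ℝ) (σ ε : ℝ) (hσ : 0 ≤ σ)
    (hξ₁m : AEMeasurable ξ₁ P') (hξ₂m : AEMeasurable ξ₂ P') (hζm : AEMeasurable ζ P')
    (hm1 : (∫ ω, ξ₁ ω ∂P') = 0) (hm2 : (∫ ω, ξ₂ ω ∂P') = 0) (hmζ : (∫ ω, ζ ω ∂P') = 0)
    (hv1 : (∫ ω, ξ₁ ω ^ 2 ∂P') = 1) (hv2 : (∫ ω, ξ₂ ω ^ 2 ∂P') = 1)
    (hvζ : (∫ ω, ζ ω ^ 2 ∂P') = σ ^ 2)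
    (hint2₁ : Integrable (fun ω => ξ₁ ω ^ 2) P') (hint2₂ : Integrable (fun ω => ξ₂ ω ^ 2) P')
    (hint2ζ : Integrable (fun ω => ζ ω ^ 2) P')
    (hint6₁ : Integrable (fun ω => |ξ₁ ω| ^ 6) P') (hint6₂ : Integrable (fun ω => |ξ₂ ω| ^ 6) P')
    (hint4ζ : Integrable (fun ω => |ζ ω| ^ 4) P')
    {n : ℕ} (hn : 1 ≤ n) (t : ℝ) (ht_def : t = (n : ℝ) ^ (-ε) * Real.sqrt n)
    (Y tY hY : Ω → Matrix (Fin n) (Fin n) ℝ)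
    (hpair : ∀ p : {p : Fin n × Fin n // p.1 < p.2},
      IdentDistrib (fun ω => (Y ω p.1.1 p.1.2, Y ω p.1.2 p.1.1)) (fun ω' => (ξ₁ ω', ξ₂ ω')) P P')
    (hdiag : ∀ i : Fin n, IdentDistrib (fun ω => Y ω i i) ζ P P')
    (htY : ∀ ω i j, tY ω i j = trunc t (Y ω i j) - ∫ ω', trunc t (Y ω' i j) ∂P)
    (hhY : ∀ ω i j, hY ω i j = (if i = j then σ else 1) * tY ω i j
        / Real.sqrt (∫ ω', (tY ω' i j) ^ 2 ∂P)) :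
    0 ≤ (∫ ω, Matrix.trace (((Real.sqrt n)⁻¹ • (Y ω - hY ω)) *
        ((Real.sqrt n)⁻¹ • (Y ω - hY ω)).transpose) ∂P) ∧
    (n : ℝ) * (n : ℝ) ^ (2 * ε) * (∫ ω, Matrix.trace (((Real.sqrt n)⁻¹ • (Y ω - hY ω)) *
        ((Real.sqrt n)⁻¹ • (Y ω - hY ω)).transpose) ∂P)
      ≤ 4 * ((n : ℝ) ^ (6 * ε) * ∫ ω, (if t < |ξ₁ ω| then |ξ₁ ω| ^ 6 else 0) ∂P')
        + 4 * ((n : ℝ) ^ (6 * ε) * ∫ ω, (if t < |ξ₂ ω| then |ξ₂ ω| ^ 6 else 0) ∂P')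
        + 4 * ((n : ℝ) ^ (4 * ε) * ∫ ω, (if t < |ζ ω| then |ζ ω| ^ 4 else 0) ∂P') ∧
    (n : ℝ) * ((P {ω | (n : ℝ) ^ (-ε) <
        opNorm ((Real.sqrt n)⁻¹ • (Y ω - hY ω))}).toReal)
      ≤ (n : ℝ) * (n : ℝ) ^ (2 * ε) * (∫ ω, Matrix.trace (((Real.sqrt n)⁻¹ • (Y ω - hY ω)) *
        ((Real.sqrt n)⁻¹ • (Y ω - hY ω)).transpose) ∂P) := by
  classical
  have npos : (0 : ℝ) < n := by exact_mod_cast hn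
  have hnne : (n : ℝ) ≠ 0 := ne_of_gt npos
  have ht : 0 < t := by
    rw [ht_def]
    exact mul_pos (Real.rpow_pos_of_pos npos _) (Real.sqrt_pos.2 npos)
  set a : ℝ := (n : ℝ) ^ ε with ha_def
  have ha : 0 < a := Real.rpow_pos_of_pos npos _
  have hane : a ≠ 0 := ne_of_gt ha
  have h2ε : (n : ℝ) ^ (2 * ε) = a ^ 2 := by
    rw [mul_comm 2 ε, Real.rpow_mul npos.le, ha_def,
      show ((2 : ℝ) = ((2 : ℕ) : ℝ)) by norm_num, Real.rpow_natCast]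
  have h4ε : (n : ℝ) ^ (4 * ε) = a ^ 4 := by
    rw [mul_comm 4 ε, Real.rpow_mul npos.le, ha_def,
      show ((4 : ℝ) = ((4 : ℕ) : ℝ)) by norm_num, Real.rpow_natCast]
  have h6ε : (n : ℝ) ^ (6 * ε) = a ^ 6 := by
    rw [mul_comm 6 ε, Real.rpow_mul npos.le, ha_def,
      show ((6 : ℝ) = ((6 : ℕ) : ℝ)) by norm_num, Real.rpow_natCast]
  have hnege : (n : ℝ) ^ (-ε) = a⁻¹ := by
    rw [Real.rpow_neg npos.le, ha_def]
  have ht2 : t ^ 2 = a⁻¹ ^ 2 * (n : ℝ) := by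
    rw [ht_def, hnege, mul_pow, Real.sq_sqrt npos.le]
  have hti2 : (t ^ 2)⁻¹ = a ^ 2 * (n : ℝ)⁻¹ := by
    rw [ht2]
    field_simp
  have hti4 : (t ^ 4)⁻¹ = a ^ 4 * ((n : ℝ) ^ 2)⁻¹ := by
    have h44 : t ^ 4 = (t ^ 2) ^ 2 := by ring
    rw [h44, ht2]
    field_simp
  -- entry rewriting
  have hYhY : ∀ (i j : Fin n) (ω : Ω), Y ω i j - hY ω i j
      = Y ω i j - (if i = j then σ else 1)
        * (trunc t (Y ω i j) - ∫ ω', trunc t (Y ω' i j) ∂P) /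
        Real.sqrt (∫ ω', (trunc t (Y ω' i j) - ∫ ω'', trunc t (Y ω'' i j) ∂P) ^ 2 ∂P) := by
    intro i j ω
    rw [hhY ω i j]
    simp only [htY]
  -- atom tail integrals
  set T₁ : ℝ := ∫ ω, (if t < |ξ₁ ω| then ξ₁ ω ^ 2 else 0) ∂P' with hT₁_def
  set T₂ : ℝ := ∫ ω, (if t < |ξ₂ ω| then ξ₂ ω ^ 2 else 0) ∂P' with hT₂_def
  set Tζ : ℝ := ∫ ω, (if t < |ζ ω| then ζ ω ^ 2 else 0) ∂P' with hTζ_def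
  have hT₁nn : 0 ≤ T₁ := integral_nonneg fun ω => by
    by_cases h : t < |ξ₁ ω| <;> simp [h, sq_nonneg]
  have hT₂nn : 0 ≤ T₂ := integral_nonneg fun ω => by
    by_cases h : t < |ξ₂ ω| <;> simp [h, sq_nonneg]
  have hTζnn : 0 ≤ Tζ := integral_nonneg fun ω => by
    by_cases h : t < |ζ ω| <;> simp [h, sq_nonneg]
  -- per-entry bounds
  have key : ∀ i j : Fin n, Integrable (fun ω => (Y ω i j - hY ω i j) ^ 2) P ∧
      (∫ ω, (Y ω i j - hY ω i j) ^ 2 ∂P)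
        ≤ (if i = j then 4 * Tζ else 0) + (4 * T₁ + 4 * T₂) := by
    intro i j
    rcases lt_trichotomy i j with hij | hij | hij
    · have hij' : i ≠ j := ne_of_lt hij
      have hid : IdentDistrib (fun ω => Y ω i j) ξ₁ P P' :=
        (hpair ⟨(i, j), hij⟩).comp measurable_fst
      have hk := entry_key P P' hid hint2₁ hm1 1 t zero_le_one (by rw [hv1]; norm_num)
      have hfun : (fun ω => (Y ω i j - hY ω i j) ^ 2)
          = fun ω => (Y ω i j - 1
              * (trunc t (Y ω i j) - ∫ ω', trunc t (Y ω' i j) ∂P) /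
              Real.sqrt (∫ ω', (trunc t (Y ω' i j)
                - ∫ ω'', trunc t (Y ω'' i j) ∂P) ^ 2 ∂P)) ^ 2 := by
        funext ω
        rw [hYhY i j ω, if_neg hij']
      rw [hfun]
      refine ⟨hk.1, le_trans hk.2 ?_⟩
      rw [if_neg hij']
      linarith [hT₂nn]
    · subst hij
      have hid : IdentDistrib (fun ω => Y ω i i) ζ P P' := hdiag i
      have hk := entry_key P P' hid hint2ζ hmζ σ t hσ hvζ
      have hfun : (fun ω => (Y ω i i - hY ω i i) ^ 2)
          = fun ω => (Y ω i i - σ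
              * (trunc t (Y ω i i) - ∫ ω', trunc t (Y ω' i i) ∂P) /
              Real.sqrt (∫ ω', (trunc t (Y ω' i i)
                - ∫ ω'', trunc t (Y ω'' i i) ∂P) ^ 2 ∂P)) ^ 2 := by
        funext ω
        rw [hYhY i i ω, if_pos rfl]
      rw [hfun]
      refine ⟨hk.1, le_trans hk.2 ?_⟩
      rw [if_pos rfl]
      linarith [hT₁nn, hT₂nn]
    · have hij' : i ≠ j := ne_of_gt hij
      have hid : IdentDistrib (fun ω => Y ω i j) ξ₂ P P' :=
        (hpair ⟨(j, i), hij⟩).comp measurable_snd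
      have hk := entry_key P P' hid hint2₂ hm2 1 t zero_le_one (by rw [hv2]; norm_num)
      have hfun : (fun ω => (Y ω i j - hY ω i j) ^ 2)
          = fun ω => (Y ω i j - 1
              * (trunc t (Y ω i j) - ∫ ω', trunc t (Y ω' i j) ∂P) /
              Real.sqrt (∫ ω', (trunc t (Y ω' i j)
                - ∫ ω'', trunc t (Y ω'' i j) ∂P) ^ 2 ∂P)) ^ 2 := by
        funext ω
        rw [hYhY i j ω, if_neg hij']
      rw [hfun]
      refine ⟨hk.1, le_trans hk.2 ?_⟩
      rw [if_neg hij']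
      linarith [hT₁nn]
  -- trace pointwise formula
  have hsq : ((Real.sqrt n)⁻¹ : ℝ) ^ 2 = (n : ℝ)⁻¹ := by
    rw [inv_pow, Real.sq_sqrt npos.le]
  have htrace : ∀ ω, Matrix.trace (((Real.sqrt n)⁻¹ • (Y ω - hY ω)) *
      ((Real.sqrt n)⁻¹ • (Y ω - hY ω)).transpose)
      = (n : ℝ)⁻¹ * ∑ i, ∑ j, (Y ω i j - hY ω i j) ^ 2 := by
    intro ω
    rw [trace_mul_transpose, Finset.mul_sum]
    refine Finset.sum_congr rfl fun i _ => ?_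
    rw [Finset.mul_sum]
    refine Finset.sum_congr rfl fun j _ => ?_
    simp only [Matrix.smul_apply, Matrix.sub_apply, smul_eq_mul]
    rw [mul_pow, hsq]
  set S : ℝ := ∫ ω, Matrix.trace (((Real.sqrt n)⁻¹ • (Y ω - hY ω)) *
      ((Real.sqrt n)⁻¹ • (Y ω - hY ω)).transpose) ∂P with hS_def
  have hintsum : ∀ i : Fin n, Integrable (fun ω => ∑ j, (Y ω i j - hY ω i j) ^ 2) P :=
    fun i => integrable_finset_sum _ fun j _ => (key i j).1
  set SS : ℝ := ∑ i, ∑ j, ∫ ω, (Y ω i j - hY ω i j) ^ 2 ∂P with hSS_def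
  have hS1 : S = (n : ℝ)⁻¹ * SS := by
    rw [hS_def, integral_congr_ae (ae_of_all _ htrace), integral_const_mul, hSS_def]
    congr 1
    rw [integral_finset_sum _ fun i _ => hintsum i]
    exact Finset.sum_congr rfl fun i _ =>
      integral_finset_sum _ fun j _ => (key i j).1
  have hSnn : 0 ≤ S := by
    rw [hS_def]
    exact integral_nonneg fun ω => trace_nonneg _
  have hSSle : SS ≤ (n : ℝ) * (4 * Tζ) + (n : ℝ) ^ 2 * (4 * T₁ + 4 * T₂) := by
    calc SS ≤ ∑ i : Fin n, ∑ j : Fin n,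
        ((if i = j then 4 * Tζ else 0) + (4 * T₁ + 4 * T₂)) := by
          rw [hSS_def]
          exact Finset.sum_le_sum fun i _ => Finset.sum_le_sum fun j _ => (key i j).2
      _ = (n : ℝ) * (4 * Tζ) + (n : ℝ) ^ 2 * (4 * T₁ + 4 * T₂) := by
          simp [Finset.sum_add_distrib, Finset.sum_ite_eq, Finset.card_univ]
          ring
  -- tail comparisons
  have hT1le : T₁ ≤ (t ^ 4)⁻¹ * ∫ ω, (if t < |ξ₁ ω| then |ξ₁ ω| ^ 6 else 0) ∂P' := by
    have h := tail_le_pow P' ξ₁ hξ₁m t ht 4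
      (integrable_tail_pow P' ξ₁ hξ₁m 6 t hint6₁)
    exact h
  have hT2le : T₂ ≤ (t ^ 4)⁻¹ * ∫ ω, (if t < |ξ₂ ω| then |ξ₂ ω| ^ 6 else 0) ∂P' := by
    have h := tail_le_pow P' ξ₂ hξ₂m t ht 4
      (integrable_tail_pow P' ξ₂ hξ₂m 6 t hint6₂)
    exact h
  have hTζle : Tζ ≤ (t ^ 2)⁻¹ * ∫ ω, (if t < |ζ ω| then |ζ ω| ^ 4 else 0) ∂P' := by
    have h := tail_le_pow P' ζ hζm t ht 2
      (integrable_tail_pow P' ζ hζm 4 t hint4ζ)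
    exact h
  set I₆₁ : ℝ := ∫ ω, (if t < |ξ₁ ω| then |ξ₁ ω| ^ 6 else 0) ∂P' with hI₆₁_def
  set I₆₂ : ℝ := ∫ ω, (if t < |ξ₂ ω| then |ξ₂ ω| ^ 6 else 0) ∂P' with hI₆₂_def
  set I₄ : ℝ := ∫ ω, (if t < |ζ ω| then |ζ ω| ^ 4 else 0) ∂P' with hI₄_def
  have hI₆₁nn : 0 ≤ I₆₁ := integral_nonneg fun ω => by
    by_cases h : t < |ξ₁ ω|
    · simp only [h, if_true]; positivity
    · simp [h]
  have hI₆₂nn : 0 ≤ I₆₂ := integral_nonneg fun ω => by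
    by_cases h : t < |ξ₂ ω|
    · simp only [h, if_true]; positivity
    · simp [h]
  have hI₄nn : 0 ≤ I₄ := integral_nonneg fun ω => by
    by_cases h : t < |ζ ω|
    · simp only [h, if_true]; positivity
    · simp [h]
  -- Markov part
  have hgnn : 0 ≤ᵐ[P] fun ω => Matrix.trace (((Real.sqrt n)⁻¹ • (Y ω - hY ω)) *
      ((Real.sqrt n)⁻¹ • (Y ω - hY ω)).transpose) :=
    ae_of_all _ fun ω => trace_nonneg _
  have hgint : Integrable (fun ω => Matrix.trace (((Real.sqrt n)⁻¹ • (Y ω - hY ω)) *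
      ((Real.sqrt n)⁻¹ • (Y ω - hY ω)).transpose)) P := by
    rw [show (fun ω => Matrix.trace (((Real.sqrt n)⁻¹ • (Y ω - hY ω)) *
        ((Real.sqrt n)⁻¹ • (Y ω - hY ω)).transpose))
        = fun ω => (n : ℝ)⁻¹ * ∑ i, ∑ j, (Y ω i j - hY ω i j) ^ 2 from funext htrace]
    exact (integrable_finset_sum _ fun i _ => hintsum i).const_mul _
  have hmark := mul_meas_ge_le_integral_of_nonneg hgnn hgint (((n : ℝ) ^ (-ε)) ^ 2)
  have hsub : {ω | (n : ℝ) ^ (-ε) < opNorm ((Real.sqrt n)⁻¹ • (Y ω - hY ω))}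
      ⊆ {ω | ((n : ℝ) ^ (-ε)) ^ 2 ≤ Matrix.trace (((Real.sqrt n)⁻¹ • (Y ω - hY ω)) *
        ((Real.sqrt n)⁻¹ • (Y ω - hY ω)).transpose)} := by
    intro ω hω
    simp only [Set.mem_setOf_eq] at hω ⊢
    have h1 : (n : ℝ) ^ (-ε) < Real.sqrt (Matrix.trace (((Real.sqrt n)⁻¹ • (Y ω - hY ω)) *
        ((Real.sqrt n)⁻¹ • (Y ω - hY ω)).transpose)) :=
      lt_of_lt_of_le hω (opNorm_le_sqrt_trace _)
    exact ((Real.lt_sqrt (Real.rpow_nonneg npos.le _)).1 h1).le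
  have hple : ((P {ω | (n : ℝ) ^ (-ε) < opNorm ((Real.sqrt n)⁻¹ • (Y ω - hY ω))}).toReal)
      ≤ ((P {ω | ((n : ℝ) ^ (-ε)) ^ 2 ≤ Matrix.trace (((Real.sqrt n)⁻¹ • (Y ω - hY ω)) *
        ((Real.sqrt n)⁻¹ • (Y ω - hY ω)).transpose)}).toReal) :=
    ENNReal.toReal_mono (measure_ne_top _ _) (measure_mono hsub)
  have hmark' : (((n : ℝ) ^ (-ε)) ^ 2) * ((P {ω | ((n : ℝ) ^ (-ε)) ^ 2 ≤
      Matrix.trace (((Real.sqrt n)⁻¹ • (Y ω - hY ω)) *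
        ((Real.sqrt n)⁻¹ • (Y ω - hY ω)).transpose)}).toReal) ≤ S := hmark
  clear_value S SS T₁ T₂ Tζ I₆₁ I₆₂ I₄
  have hTζ' : (n : ℝ) * Tζ ≤ a ^ 2 * I₄ := by
    calc (n : ℝ) * Tζ ≤ (n : ℝ) * ((t ^ 2)⁻¹ * I₄) :=
          mul_le_mul_of_nonneg_left hTζle npos.le
      _ = a ^ 2 * I₄ := by rw [hti2]; field_simp
  have hT1' : (n : ℝ) ^ 2 * T₁ ≤ a ^ 4 * I₆₁ := by
    calc (n : ℝ) ^ 2 * T₁ ≤ (n : ℝ) ^ 2 * ((t ^ 4)⁻¹ * I₆₁) :=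
          mul_le_mul_of_nonneg_left hT1le (by positivity)
      _ = a ^ 4 * I₆₁ := by rw [hti4]; field_simp
  have hT2' : (n : ℝ) ^ 2 * T₂ ≤ a ^ 4 * I₆₂ := by
    calc (n : ℝ) ^ 2 * T₂ ≤ (n : ℝ) ^ 2 * ((t ^ 4)⁻¹ * I₆₂) :=
          mul_le_mul_of_nonneg_left hT2le (by positivity)
      _ = a ^ 4 * I₆₂ := by rw [hti4]; field_simp
  have hmain2 : (n : ℝ) * (n : ℝ) ^ (2 * ε) * S
      ≤ 4 * ((n : ℝ) ^ (6 * ε) * I₆₁) + 4 * ((n : ℝ) ^ (6 * ε) * I₆₂)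
        + 4 * ((n : ℝ) ^ (4 * ε) * I₄) := by
    rw [h2ε, h6ε, h4ε, hS1]
    have hstep1 : (n : ℝ) * a ^ 2 * ((n : ℝ)⁻¹ * SS) = a ^ 2 * SS := by
      field_simp
    rw [hstep1]
    calc a ^ 2 * SS ≤ a ^ 2 * ((n : ℝ) * (4 * Tζ) + (n : ℝ) ^ 2 * (4 * T₁ + 4 * T₂)) :=
          mul_le_mul_of_nonneg_left hSSle (sq_nonneg a)
      _ ≤ a ^ 2 * (4 * (a ^ 2 * I₄) + (4 * (a ^ 4 * I₆₁) + 4 * (a ^ 4 * I₆₂))) := by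
          refine mul_le_mul_of_nonneg_left ?_ (sq_nonneg a)
          linarith [hTζ', hT1', hT2']
      _ = 4 * (a ^ 6 * I₆₁) + 4 * (a ^ 6 * I₆₂) + 4 * (a ^ 4 * I₄) := by ring
  have hmain3 : (n : ℝ) * ((P {ω | (n : ℝ) ^ (-ε) <
      opNorm ((Real.sqrt n)⁻¹ • (Y ω - hY ω))}).toReal)
      ≤ (n : ℝ) * (n : ℝ) ^ (2 * ε) * S := by
    rw [h2ε]
    set p1 := (P {ω | (n : ℝ) ^ (-ε) < opNorm ((Real.sqrt n)⁻¹ • (Y ω - hY ω))}).toReal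
    set p2 := (P {ω | ((n : ℝ) ^ (-ε)) ^ 2 ≤ Matrix.trace (((Real.sqrt n)⁻¹ • (Y ω - hY ω)) *
        ((Real.sqrt n)⁻¹ • (Y ω - hY ω)).transpose)}).toReal
    have hBmark : ((n : ℝ) ^ (-ε)) ^ 2 * p2 ≤ S := hmark'
    have hp2nn : 0 ≤ p2 := ENNReal.toReal_nonneg
    calc (n : ℝ) * p1 ≤ (n : ℝ) * p2 := mul_le_mul_of_nonneg_left hple npos.le
      _ = ((n : ℝ) * a ^ 2) * (((n : ℝ) ^ (-ε)) ^ 2 * p2) := by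
          rw [hnege]
          field_simp
      _ ≤ ((n : ℝ) * a ^ 2) * S := by
          refine mul_le_mul_of_nonneg_left hBmark (by positivity)
      _ = (n : ℝ) * a ^ 2 * S := by ring
  exact ⟨hSnn, hmain2, hmain3⟩


end

end Stmt9Aux

/-- Truncation lemma: the truncated-and-rescaled matrix `X̂_N` is close to `X_N = Y_N/√N` in
Frobenius norm in expectation, and in operator norm with probability `1 − o(N⁻¹)`. -/
theorem stmt9
    (Ω' : Type) [MeasurableSpace Ω'] (P' : Measure Ω') [IsProbabilityMeasure P']
    (ξ₁ ξ₂ ζ : Ω' → ℝ) (σ : ℝ) (hσ : 0 ≤ σ)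
    (hC0 : CondC0 P' ξ₁ ξ₂ ζ (σ ^ 2))
    (ε : ℝ) (hε : 0 < ε)
    (hlim₁ : Tendsto (fun n : ℕ => (n : ℝ) ^ (6 * ε) *
      ∫ ω, (if (n : ℝ) ^ (-ε) * Real.sqrt n < |ξ₁ ω| then |ξ₁ ω| ^ 6 else 0) ∂P')
      atTop (𝓝 0))
    (hlim₂ : Tendsto (fun n : ℕ => (n : ℝ) ^ (6 * ε) *
      ∫ ω, (if (n : ℝ) ^ (-ε) * Real.sqrt n < |ξ₂ ω| then |ξ₂ ω| ^ 6 else 0) ∂P')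
      atTop (𝓝 0))
    (hlimζ : Tendsto (fun n : ℕ => (n : ℝ) ^ (4 * ε) *
      ∫ ω, (if (n : ℝ) ^ (-ε) * Real.sqrt n < |ζ ω| then |ζ ω| ^ 4 else 0) ∂P')
      atTop (𝓝 0))
    (Ω : ℕ → Type) [∀ n, MeasurableSpace (Ω n)] (P : ∀ n, Measure (Ω n))
    [∀ n, IsProbabilityMeasure (P n)]
    (Y : ∀ n : ℕ, Ω n → Matrix (Fin n) (Fin n) ℝ)
    (hell : ∀ n, IsEllipticRM (P n) P' ξ₁ ξ₂ ζ (Y n))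
    (tY : ∀ n : ℕ, Ω n → Matrix (Fin n) (Fin n) ℝ)
    (htY : ∀ n ω i j, tY n ω i j =
      (if |Y n ω i j| ≤ (n : ℝ) ^ (-ε) * Real.sqrt n then Y n ω i j else 0)
        - ∫ ω', (if |Y n ω' i j| ≤ (n : ℝ) ^ (-ε) * Real.sqrt n then Y n ω' i j else 0) ∂(P n))
    (hY : ∀ n : ℕ, Ω n → Matrix (Fin n) (Fin n) ℝ)
    (hhY : ∀ n ω i j, hY n ω i j =
      (if i = j then σ else 1) * tY n ω i j
        / Real.sqrt (∫ ω', (tY n ω' i j) ^ 2 ∂(P n))) :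
    Tendsto (fun n : ℕ => (n : ℝ) * (n : ℝ) ^ (2 * ε) *
        ∫ ω, Matrix.trace
          (((Real.sqrt n)⁻¹ • (Y n ω - hY n ω)) *
            ((Real.sqrt n)⁻¹ • (Y n ω - hY n ω)).transpose) ∂(P n))
      atTop (𝓝 0) ∧
    Tendsto (fun n : ℕ => (n : ℝ) *
        ((P n) {ω | (n : ℝ) ^ (-ε) <
          opNorm ((Real.sqrt n)⁻¹ • (Y n ω - hY n ω))}).toReal)
      atTop (𝓝 0) := by
  classical
  obtain ⟨hm1, hm2, hv1, hv2, hmζ, hvζ, τ, hτ, hfin1, hfin2, hfinζ⟩ := hC0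
  have hζm : AEMeasurable ζ P' := ((hell 1).2.2 (0 : Fin 1)).aemeasurable_snd
  have hpair2 := (hell 2).2.1 (⟨((0 : Fin 2), (1 : Fin 2)), by decide⟩ : {p : Fin 2 × Fin 2 // p.1 < p.2})
  have hξpm : AEMeasurable (fun ω' => (ξ₁ ω', ξ₂ ω')) P' := hpair2.aemeasurable_snd
  have hξ₁m : AEMeasurable ξ₁ P' := measurable_fst.comp_aemeasurable hξpm
  have hξ₂m : AEMeasurable ξ₂ P' := measurable_snd.comp_aemeasurable hξpm
  have h6τ : (0 : ℝ) ≤ 6 + τ := by linarith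
  have h4τ : (0 : ℝ) ≤ 4 + τ := by linarith
  have hint6₁ : Integrable (fun ω => |ξ₁ ω| ^ 6) P' :=
    Stmt9Aux.integrable_abs_pow P' ξ₁ hξ₁m (6 + τ) h6τ 6 (by push_cast; linarith) hfin1
  have hint6₂ : Integrable (fun ω => |ξ₂ ω| ^ 6) P' :=
    Stmt9Aux.integrable_abs_pow P' ξ₂ hξ₂m (6 + τ) h6τ 6 (by push_cast; linarith) hfin2
  have hint4ζ : Integrable (fun ω => |ζ ω| ^ 4) P' :=
    Stmt9Aux.integrable_abs_pow P' ζ hζm (4 + τ) h4τ 4 (by push_cast; linarith) hfinζ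
  have hint2₁ : Integrable (fun ω => ξ₁ ω ^ 2) P' := by
    have h := Stmt9Aux.integrable_abs_pow P' ξ₁ hξ₁m (6 + τ) h6τ 2 (by push_cast; linarith) hfin1
    simpa [sq_abs] using h
  have hint2₂ : Integrable (fun ω => ξ₂ ω ^ 2) P' := by
    have h := Stmt9Aux.integrable_abs_pow P' ξ₂ hξ₂m (6 + τ) h6τ 2 (by push_cast; linarith) hfin2
    simpa [sq_abs] using h
  have hint2ζ : Integrable (fun ω => ζ ω ^ 2) P' := by
    have h := Stmt9Aux.integrable_abs_pow P' ζ hζm (4 + τ) h4τ 2 (by push_cast; linarith) hfinζ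
    simpa [sq_abs] using h
  have main := fun (n : ℕ) (hn : 1 ≤ n) =>
    Stmt9Aux.main_bound (P n) P' ξ₁ ξ₂ ζ σ ε hσ hξ₁m hξ₂m hζm hm1 hm2 hmζ hv1 hv2 hvζ
      hint2₁ hint2₂ hint2ζ hint6₁ hint6₂ hint4ζ hn ((n : ℝ) ^ (-ε) * Real.sqrt n) rfl
      (Y n) (tY n) (hY n) (hell n).2.1 (hell n).2.2
      (fun ω i j => by rw [htY n ω i j]; rfl) (hhY n)
  have hupper : Tendsto (fun n : ℕ =>
      4 * ((n : ℝ) ^ (6 * ε) *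
        ∫ ω, (if (n : ℝ) ^ (-ε) * Real.sqrt n < |ξ₁ ω| then |ξ₁ ω| ^ 6 else 0) ∂P')
      + 4 * ((n : ℝ) ^ (6 * ε) *
        ∫ ω, (if (n : ℝ) ^ (-ε) * Real.sqrt n < |ξ₂ ω| then |ξ₂ ω| ^ 6 else 0) ∂P')
      + 4 * ((n : ℝ) ^ (4 * ε) *
        ∫ ω, (if (n : ℝ) ^ (-ε) * Real.sqrt n < |ζ ω| then |ζ ω| ^ 4 else 0) ∂P'))
      atTop (𝓝 0) := by
    have h := ((hlim₁.const_mul (4 : ℝ)).add (hlim₂.const_mul (4 : ℝ))).add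
      (hlimζ.const_mul (4 : ℝ))
    simpa using h
  have goal1 : Tendsto (fun n : ℕ => (n : ℝ) * (n : ℝ) ^ (2 * ε) *
      ∫ ω, Matrix.trace
        (((Real.sqrt n)⁻¹ • (Y n ω - hY n ω)) *
          ((Real.sqrt n)⁻¹ • (Y n ω - hY n ω)).transpose) ∂(P n)) atTop (𝓝 0) := by
    refine tendsto_of_tendsto_of_tendsto_of_le_of_le' tendsto_const_nhds hupper ?_ ?_
    · filter_upwards [eventually_ge_atTop 1] with n hn
      exact mul_nonneg (mul_nonneg (Nat.cast_nonneg n)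
        (Real.rpow_nonneg (Nat.cast_nonneg n) _)) (main n hn).1
    · filter_upwards [eventually_ge_atTop 1] with n hn
      exact (main n hn).2.1
  refine ⟨goal1, ?_⟩
  refine tendsto_of_tendsto_of_tendsto_of_le_of_le' tendsto_const_nhds goal1 ?_ ?_
  · exact Filter.Eventually.of_forall fun n =>
      mul_nonneg (Nat.cast_nonneg n) ENNReal.toReal_nonneg
  · filter_upwards [eventually_ge_atTop 1] with n hn
    exact (main n hn).2.2
end

section
/- Let (ξ₁,ξ₂) be a random vector in ℝ² such that ξ₁ and ξ₂ each have mean zero and unit variance and E|ξ₁|^{6+τ} + E|ξ₂|^{6+τ} < ∞ for some τ > 0, and set ρ := E[ξ₁ξ₂]. Let ε > 0 be such that N^{6ε}·E[|ξ_i|⁶ 1_{|ξ_i| > N^{1/2−ε}}] → 0 for i = 1,2. For each N define ξ̃_i := ξ_i·1_{|ξ_i| ≤ N^{1/2−ε}} − E[ξ_i·1_{|ξ_i| ≤ N^{1/2−ε}}] and, for N large enough that Var(ξ̃_i) > 0, define ξ̂_i := ξ̃_i/√Var(ξ̃_i) and ρ̂_N := E[ξ̂₁ ξ̂₂]. Then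 N·(ρ̂_N − ρ) → 0 as N → ∞. -/
open MeasureTheory Filter Topology


/-- From finite (6+τ)-moment, get integrability of |ξ|^6. -/
lemma aux_int6 {Ω : Type} [MeasurableSpace Ω] (P : Measure Ω) [IsProbabilityMeasure P]
    (ξ : Ω → ℝ) (hmeas : Measurable ξ) (τ : ℝ) (hτ : 0 < τ)
    (hmom : (∫⁻ ω, ENNReal.ofReal (|ξ ω| ^ (6 + τ)) ∂P) < ⊤) :
    Integrable (fun ω => |ξ ω| ^ 6) P := by
  have hmeasr : Measurable (fun ω => |ξ ω| ^ (6 + τ)) := (hmeas.abs).pow_const _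
  have hint : Integrable (fun ω => |ξ ω| ^ (6 + τ)) P := by
    refine ⟨hmeasr.aestronglyMeasurable, ?_⟩
    rw [hasFiniteIntegral_iff_ofReal]
    · convert hmom using 2 with ω
    · exact Eventually.of_forall fun ω => Real.rpow_nonneg (abs_nonneg _) _
  refine (hint.add (integrable_const 1)).mono'
    ((hmeas.abs.pow_const 6).aestronglyMeasurable) ?_
  refine Eventually.of_forall fun ω => ?_
  rw [Real.norm_eq_abs, abs_of_nonneg (by positivity), Pi.add_apply]
  show |ξ ω| ^ 6 ≤ |ξ ω| ^ (6 + τ) + 1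
  rcases le_or_gt (|ξ ω|) 1 with h | h
  · have : |ξ ω| ^ 6 ≤ 1 := pow_le_one₀ (abs_nonneg _) h
    have h2 : (0:ℝ) ≤ |ξ ω| ^ (6 + τ) := Real.rpow_nonneg (abs_nonneg _) _
    linarith
  · have h1 : |ξ ω| ^ (6:ℝ) ≤ |ξ ω| ^ (6 + τ) :=
      Real.rpow_le_rpow_of_exponent_le h.le (by linarith)
    have h2 : |ξ ω| ^ (6:ℝ) = |ξ ω| ^ (6:ℕ) := by
      rw [← Real.rpow_natCast]; norm_num
    rw [h2] at h1
    linarith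

lemma aux_trunc {Ω : Type} [MeasurableSpace Ω] (P : Measure Ω) [IsProbabilityMeasure P]
    (ξ : Ω → ℝ) (hmeas : Measurable ξ)
    (hint6 : Integrable (fun ω => |ξ ω| ^ 6) P)
    (hmean : (∫ ω, ξ ω ∂P) = 0) (hvar : (∫ ω, (ξ ω) ^ 2 ∂P) = 1)
    (t : ℝ) (ht : 0 < t) :
    0 ≤ (∫ ω, (if t < |ξ ω| then (ξ ω) ^ 2 else 0) ∂P)
    ∧ t ^ 4 * (∫ ω, (if t < |ξ ω| then (ξ ω) ^ 2 else 0) ∂P)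
        ≤ (∫ ω, (if t < |ξ ω| then |ξ ω| ^ 6 else 0) ∂P)
    ∧ (∫ ω, (if |ξ ω| ≤ t then ξ ω else 0) ^ 2 ∂P)
        = 1 - (∫ ω, (if t < |ξ ω| then (ξ ω) ^ 2 else 0) ∂P)
    ∧ |∫ ω, (if |ξ ω| ≤ t then ξ ω else 0) ∂P| * t ^ 5
        ≤ (∫ ω, (if t < |ξ ω| then |ξ ω| ^ 6 else 0) ∂P) := by
  have habs : ∀ a : ℝ, |a| ≤ |a| ^ 6 + 1 := by
    intro a
    rcases le_or_gt (|a|) 1 with h | h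
    · have : (0:ℝ) ≤ |a| ^ 6 := by positivity
      linarith
    · have := le_self_pow₀ h.le (n := 6) (by norm_num)
      linarith
  have hintξ : Integrable ξ P := by
    refine (hint6.add (integrable_const 1)).mono' hmeas.aestronglyMeasurable ?_
    exact Eventually.of_forall fun ω => by simpa using habs (ξ ω)
  have hintsq : Integrable (fun ω => (ξ ω) ^ 2) P := by
    refine (hint6.add (integrable_const 1)).mono' ((hmeas.pow_const 2).aestronglyMeasurable) ?_
    refine Eventually.of_forall fun ω => ?_
    have h1 : (ξ ω) ^ 2 = |ξ ω| ^ 2 := (sq_abs _).symm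
    rcases le_or_gt (|ξ ω|) 1 with h | h
    · have h2 : |ξ ω| ^ 2 ≤ 1 := pow_le_one₀ (abs_nonneg _) h
      have : (0:ℝ) ≤ |ξ ω| ^ 6 := by positivity
      simp only [Real.norm_eq_abs, Pi.add_apply, abs_pow, sq_abs]
      rw [← sq_abs]; linarith
    · have h2 : |ξ ω| ^ 2 ≤ |ξ ω| ^ 6 := pow_le_pow_right₀ h.le (by norm_num)
      simp only [Real.norm_eq_abs, Pi.add_apply, abs_pow, sq_abs]
      rw [← sq_abs]; linarith
  have hS : MeasurableSet {ω | |ξ ω| ≤ t} := measurableSet_le hmeas.abs measurable_const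
  have hS' : MeasurableSet {ω | t < |ξ ω|} := measurableSet_lt measurable_const hmeas.abs
  -- integrable pieces
  have hintX : Integrable (fun ω => if |ξ ω| ≤ t then ξ ω else 0) P := by
    refine hintξ.abs.mono' ((Measurable.ite hS hmeas measurable_const).aestronglyMeasurable) ?_
    refine Eventually.of_forall fun ω => ?_
    simp only [Real.norm_eq_abs]
    split_ifs <;> simp [abs_nonneg]
  have hinth : Integrable (fun ω => if t < |ξ ω| then ξ ω else 0) P := by
    refine hintξ.abs.mono' ((Measurable.ite hS' hmeas measurable_const).aestronglyMeasurable) ?_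
    refine Eventually.of_forall fun ω => ?_
    simp only [Real.norm_eq_abs]
    split_ifs <;> simp [abs_nonneg]
  have hintq : Integrable (fun ω => if t < |ξ ω| then (ξ ω) ^ 2 else 0) P := by
    refine hintsq.abs.mono'
      ((Measurable.ite hS' (hmeas.pow_const 2) measurable_const).aestronglyMeasurable) ?_
    refine Eventually.of_forall fun ω => ?_
    simp only [Real.norm_eq_abs]
    split_ifs <;> simp [abs_nonneg, sq_nonneg]
  have hintXsq : Integrable (fun ω => (if |ξ ω| ≤ t then ξ ω else 0) ^ 2) P := by
    refine hintsq.abs.mono'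
      (((Measurable.ite hS hmeas measurable_const).pow_const 2).aestronglyMeasurable) ?_
    refine Eventually.of_forall fun ω => ?_
    simp only [Real.norm_eq_abs]
    split_ifs <;> simp [abs_nonneg, sq_nonneg, abs_pow]
  have hintδ : Integrable (fun ω => if t < |ξ ω| then |ξ ω| ^ 6 else 0) P := by
    refine hint6.abs.mono'
      ((Measurable.ite hS' (hmeas.abs.pow_const 6) measurable_const).aestronglyMeasurable) ?_
    refine Eventually.of_forall fun ω => ?_
    simp only [Real.norm_eq_abs]
    split_ifs <;> simp [abs_nonneg, abs_pow]
  have hintp : Integrable (fun ω => if t < |ξ ω| then |ξ ω| else 0) P := by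
    refine hintξ.abs.mono'
      ((Measurable.ite hS' hmeas.abs measurable_const).aestronglyMeasurable) ?_
    refine Eventually.of_forall fun ω => ?_
    simp only [Real.norm_eq_abs]
    split_ifs <;> simp [abs_nonneg]
  -- q ≥ 0
  have hq0 : 0 ≤ (∫ ω, (if t < |ξ ω| then (ξ ω) ^ 2 else 0) ∂P) := by
    refine integral_nonneg fun ω => ?_
    split_ifs <;> simp [sq_nonneg]
  refine ⟨hq0, ?_, ?_, ?_⟩
  · -- t^4 q ≤ δ
    rw [← integral_const_mul]
    refine integral_mono (hintq.const_mul _) hintδ fun ω => ?_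
    simp only
    split_ifs with h
    · have h4 : t ^ 4 ≤ |ξ ω| ^ 4 := pow_le_pow_left₀ ht.le h.le 4
      have : |ξ ω| ^ 6 = |ξ ω| ^ 4 * |ξ ω| ^ 2 := by ring
      rw [this, ← sq_abs (ξ ω)]
      exact mul_le_mul_of_nonneg_right h4 (by positivity)
    · simp
  · -- ∫ X^2 = 1 - q
    have hsplit : (∫ ω, (ξ ω) ^ 2 ∂P)
        = (∫ ω, (if |ξ ω| ≤ t then ξ ω else 0) ^ 2 ∂P)
          + (∫ ω, (if t < |ξ ω| then (ξ ω) ^ 2 else 0) ∂P) := by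
      rw [← integral_add hintXsq hintq]
      refine integral_congr_ae (Eventually.of_forall fun ω => ?_)
      simp only
      rcases le_or_gt (|ξ ω|) t with h | h
      · rw [if_pos h, if_neg (not_lt.mpr h)]; ring
      · rw [if_neg (not_le.mpr h), if_pos h]; ring
    rw [hvar] at hsplit
    linarith
  · -- |m| t^5 ≤ δ
    have hsplit : (∫ ω, ξ ω ∂P)
        = (∫ ω, (if |ξ ω| ≤ t then ξ ω else 0) ∂P)
          + (∫ ω, (if t < |ξ ω| then ξ ω else 0) ∂P) := by
      rw [← integral_add hintX hinth]
      refine integral_congr_ae (Eventually.of_forall fun ω => ?_)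
      simp only
      rcases le_or_gt (|ξ ω|) t with h | h
      · rw [if_pos h, if_neg (not_lt.mpr h)]; ring
      · rw [if_neg (not_le.mpr h), if_pos h]; ring
    rw [hmean] at hsplit
    have hm : |∫ ω, (if |ξ ω| ≤ t then ξ ω else 0) ∂P|
        = |∫ ω, (if t < |ξ ω| then ξ ω else 0) ∂P| := by
      rw [show (∫ ω, (if |ξ ω| ≤ t then ξ ω else 0) ∂P)
          = -(∫ ω, (if t < |ξ ω| then ξ ω else 0) ∂P) by linarith, abs_neg]
    rw [hm]
    have h1 : |∫ ω, (if t < |ξ ω| then ξ ω else 0) ∂P|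
        ≤ ∫ ω, (if t < |ξ ω| then |ξ ω| else 0) ∂P := by
      have hn := norm_integral_le_integral_norm (μ := P)
        (f := fun ω => if t < |ξ ω| then ξ ω else 0)
      simp only [Real.norm_eq_abs] at hn
      refine hn.trans ?_
      refine integral_mono hinth.abs hintp fun ω => ?_
      simp only
      split_ifs <;> simp [abs_nonneg]
    have h2 : t ^ 5 * (∫ ω, (if t < |ξ ω| then |ξ ω| else 0) ∂P)
        ≤ (∫ ω, (if t < |ξ ω| then |ξ ω| ^ 6 else 0) ∂P) := by
      rw [← integral_const_mul]
      refine integral_mono (hintp.const_mul _) hintδ fun ω => ?_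
      simp only
      split_ifs with h
      · have h5 : t ^ 5 ≤ |ξ ω| ^ 5 := pow_le_pow_left₀ ht.le h.le 5
        have : |ξ ω| ^ 6 = |ξ ω| ^ 5 * |ξ ω| := by ring
        rw [this]
        exact mul_le_mul_of_nonneg_right h5 (abs_nonneg _)
      · simp
    have hp0 : 0 ≤ (∫ ω, (if t < |ξ ω| then |ξ ω| else 0) ∂P) := by
      refine integral_nonneg fun ω => ?_
      split_ifs <;> simp [abs_nonneg]
    nlinarith [mul_le_mul_of_nonneg_right h1 (pow_nonneg ht.le 5), pow_pos ht 5]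

lemma aux_intξ {Ω : Type} [MeasurableSpace Ω] (P : Measure Ω) [IsProbabilityMeasure P]
    (ξ : Ω → ℝ) (hmeas : Measurable ξ) (hint6 : Integrable (fun ω => |ξ ω| ^ 6) P) :
    Integrable ξ P := by
  refine (hint6.add (integrable_const 1)).mono' hmeas.aestronglyMeasurable ?_
  refine Eventually.of_forall fun ω => ?_
  simp only [Real.norm_eq_abs, Pi.add_apply]
  rcases le_or_gt (|ξ ω|) 1 with h | h
  · have : (0:ℝ) ≤ |ξ ω| ^ 6 := by positivity
    linarith
  · have := le_self_pow₀ h.le (n := 6) (by norm_num)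
    linarith

lemma aux_intsq {Ω : Type} [MeasurableSpace Ω] (P : Measure Ω) [IsProbabilityMeasure P]
    (ξ : Ω → ℝ) (hmeas : Measurable ξ) (hint6 : Integrable (fun ω => |ξ ω| ^ 6) P) :
    Integrable (fun ω => (ξ ω) ^ 2) P := by
  refine (hint6.add (integrable_const 1)).mono' ((hmeas.pow_const 2).aestronglyMeasurable) ?_
  refine Eventually.of_forall fun ω => ?_
  simp only [Real.norm_eq_abs, Pi.add_apply, abs_pow, sq_abs]
  rw [← sq_abs]
  rcases le_or_gt (|ξ ω|) 1 with h | h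
  · have h2 : |ξ ω| ^ 2 ≤ 1 := pow_le_one₀ (abs_nonneg _) h
    have : (0:ℝ) ≤ |ξ ω| ^ 6 := by positivity
    linarith
  · have h2 : |ξ ω| ^ 2 ≤ |ξ ω| ^ 6 := pow_le_pow_right₀ h.le (by norm_num)
    linarith

lemma aux_int_le {Ω : Type} [MeasurableSpace Ω] (P : Measure Ω) [IsProbabilityMeasure P]
    (ξ f : Ω → ℝ) (hmξ : Measurable ξ) (hmf : Measurable f) (hint : Integrable f P) (t : ℝ) :
    Integrable (fun ω => if |ξ ω| ≤ t then f ω else 0) P := by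
  refine hint.abs.mono' ((Measurable.ite (measurableSet_le hmξ.abs measurable_const)
    hmf measurable_const).aestronglyMeasurable) (Eventually.of_forall fun ω => ?_)
  simp only [Real.norm_eq_abs]
  split_ifs <;> simp [abs_nonneg]

lemma aux_int_lt {Ω : Type} [MeasurableSpace Ω] (P : Measure Ω) [IsProbabilityMeasure P]
    (ξ f : Ω → ℝ) (hmξ : Measurable ξ) (hmf : Measurable f) (hint : Integrable f P) (t : ℝ) :
    Integrable (fun ω => if t < |ξ ω| then f ω else 0) P := by
  refine hint.abs.mono' ((Measurable.ite (measurableSet_lt measurable_const hmξ.abs)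
    hmf measurable_const).aestronglyMeasurable) (Eventually.of_forall fun ω => ?_)
  simp only [Real.norm_eq_abs]
  split_ifs <;> simp [abs_nonneg]

lemma aux_amgm (a b x y : ℝ) (ha : 0 < a) (hb : 0 < b) (hab : a * b = 1) :
    |x * y| ≤ a / 2 * x ^ 2 + b / 2 * y ^ 2 := by
  rw [abs_le]
  constructor
  · nlinarith [sq_nonneg (a * x + y), sq_nonneg x, sq_nonneg y, mul_pos ha hb]
  · nlinarith [sq_nonneg (a * x - y), sq_nonneg x, sq_nonneg y, mul_pos ha hb]

set_option maxHeartbeats 2000000 in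
/-- The correlation of the truncated, recentered and renormalized atom variables converges to
`ρ` at rate `o(N⁻¹)`. -/
theorem stmt11 (Ω : Type) [MeasurableSpace Ω] (P : Measure Ω) [IsProbabilityMeasure P]
    (ξ₁ ξ₂ : Ω → ℝ) (hmeas₁ : Measurable ξ₁) (hmeas₂ : Measurable ξ₂)
    (hmean₁ : (∫ ω, ξ₁ ω ∂P) = 0) (hmean₂ : (∫ ω, ξ₂ ω ∂P) = 0)
    (hvar₁ : (∫ ω, (ξ₁ ω) ^ 2 ∂P) = 1) (hvar₂ : (∫ ω, (ξ₂ ω) ^ 2 ∂P) = 1)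
    (τ : ℝ) (hτ : 0 < τ)
    (hmom₁ : (∫⁻ ω, ENNReal.ofReal (|ξ₁ ω| ^ (6 + τ)) ∂P) < ⊤)
    (hmom₂ : (∫⁻ ω, ENNReal.ofReal (|ξ₂ ω| ^ (6 + τ)) ∂P) < ⊤)
    (ρ : ℝ) (hρ : ρ = ∫ ω, ξ₁ ω * ξ₂ ω ∂P)
    (ε : ℝ) (hε : 0 < ε)
    (hlim₁ : Tendsto (fun n : ℕ => (n : ℝ) ^ (6 * ε) *
        ∫ ω, (if (n : ℝ) ^ ((1 : ℝ) / 2 - ε) < |ξ₁ ω| then |ξ₁ ω| ^ 6 else 0) ∂P)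
      atTop (𝓝 0))
    (hlim₂ : Tendsto (fun n : ℕ => (n : ℝ) ^ (6 * ε) *
        ∫ ω, (if (n : ℝ) ^ ((1 : ℝ) / 2 - ε) < |ξ₂ ω| then |ξ₂ ω| ^ 6 else 0) ∂P)
      atTop (𝓝 0))
    (tξ₁ tξ₂ : ℕ → Ω → ℝ)
    (htξ₁ : ∀ n ω, tξ₁ n ω =
      (if |ξ₁ ω| ≤ (n : ℝ) ^ ((1 : ℝ) / 2 - ε) then ξ₁ ω else 0)
        - ∫ ω', (if |ξ₁ ω'| ≤ (n : ℝ) ^ ((1 : ℝ) / 2 - ε) then ξ₁ ω' else 0) ∂P)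
    (htξ₂ : ∀ n ω, tξ₂ n ω =
      (if |ξ₂ ω| ≤ (n : ℝ) ^ ((1 : ℝ) / 2 - ε) then ξ₂ ω else 0)
        - ∫ ω', (if |ξ₂ ω'| ≤ (n : ℝ) ^ ((1 : ℝ) / 2 - ε) then ξ₂ ω' else 0) ∂P)
    (ρhat : ℕ → ℝ)
    (hρhat : ∀ n, ρhat n =
      (∫ ω, tξ₁ n ω * tξ₂ n ω ∂P) /
        (Real.sqrt (∫ ω, (tξ₁ n ω) ^ 2 ∂P) * Real.sqrt (∫ ω, (tξ₂ n ω) ^ 2 ∂P))) :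
    Tendsto (fun n : ℕ => (n : ℝ) * (ρhat n - ρ)) atTop (𝓝 0) := by
  have hint6₁ := aux_int6 P ξ₁ hmeas₁ τ hτ hmom₁
  have hint6₂ := aux_int6 P ξ₂ hmeas₂ τ hτ hmom₂
  have hintξ₁ := aux_intξ P ξ₁ hmeas₁ hint6₁
  have hintξ₂ := aux_intξ P ξ₂ hmeas₂ hint6₂
  have hintsq₁ := aux_intsq P ξ₁ hmeas₁ hint6₁
  have hintsq₂ := aux_intsq P ξ₂ hmeas₂ hint6₂
  have hint12 : Integrable (fun ω => ξ₁ ω * ξ₂ ω) P := by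
    refine ((hintsq₁.add hintsq₂).const_mul (1/2 : ℝ)).mono'
      ((hmeas₁.mul hmeas₂).aestronglyMeasurable) (Eventually.of_forall fun ω => ?_)
    simp only [Real.norm_eq_abs, Pi.add_apply]
    rcases abs_cases (ξ₁ ω * ξ₂ ω) with ⟨h, _⟩ | ⟨h, _⟩ <;> rw [h] <;>
      nlinarith [sq_nonneg (ξ₁ ω - ξ₂ ω), sq_nonneg (ξ₁ ω + ξ₂ ω)]
  -- abbreviations
  set T : ℕ → ℝ := fun n => (n : ℝ) ^ ((1 : ℝ)/2 - ε) with hT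
  set δ₁ : ℕ → ℝ := fun n => ∫ ω, (if T n < |ξ₁ ω| then |ξ₁ ω| ^ 6 else 0) ∂P with hδ₁
  set δ₂ : ℕ → ℝ := fun n => ∫ ω, (if T n < |ξ₂ ω| then |ξ₂ ω| ^ 6 else 0) ∂P with hδ₂
  set q₁ : ℕ → ℝ := fun n => ∫ ω, (if T n < |ξ₁ ω| then (ξ₁ ω) ^ 2 else 0) ∂P with hq₁
  set q₂ : ℕ → ℝ := fun n => ∫ ω, (if T n < |ξ₂ ω| then (ξ₂ ω) ^ 2 else 0) ∂P with hq₂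
  set m₁ : ℕ → ℝ := fun n => ∫ ω, (if |ξ₁ ω| ≤ T n then ξ₁ ω else 0) ∂P with hm₁
  set m₂ : ℕ → ℝ := fun n => ∫ ω, (if |ξ₂ ω| ≤ T n then ξ₂ ω else 0) ∂P with hm₂
  set v₁ : ℕ → ℝ := fun n => ∫ ω, (tξ₁ n ω) ^ 2 ∂P with hv₁
  set v₂ : ℕ → ℝ := fun n => ∫ ω, (tξ₂ n ω) ^ 2 ∂P with hv₂
  set C : ℕ → ℝ := fun n => ∫ ω, tξ₁ n ω * tξ₂ n ω ∂P with hCd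
  -- restated hypotheses
  have hD₁ : Tendsto (fun n : ℕ => (n : ℝ) ^ (6 * ε) * δ₁ n) atTop (𝓝 0) := by
    simp only [hδ₁, hT]; exact hlim₁
  have hD₂ : Tendsto (fun n : ℕ => (n : ℝ) ^ (6 * ε) * δ₂ n) atTop (𝓝 0) := by
    simp only [hδ₂, hT]; exact hlim₂
  have htξ₁' : ∀ n ω, tξ₁ n ω = (if |ξ₁ ω| ≤ T n then ξ₁ ω else 0) - m₁ n := by
    intro n ω; simp only [hm₁, hT]; exact htξ₁ n ω
  have htξ₂' : ∀ n ω, tξ₂ n ω = (if |ξ₂ ω| ≤ T n then ξ₂ ω else 0) - m₂ n := by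
    intro n ω; simp only [hm₂, hT]; exact htξ₂ n ω
  have hρhat' : ∀ n, ρhat n = C n / (Real.sqrt (v₁ n) * Real.sqrt (v₂ n)) := by
    intro n; simp only [hCd, hv₁, hv₂]; exact hρhat n
  -- key truncation facts
  have key₁ : ∀ n : ℕ, 0 < T n →
      0 ≤ q₁ n ∧ (T n) ^ 4 * q₁ n ≤ δ₁ n
      ∧ (∫ ω, (if |ξ₁ ω| ≤ T n then ξ₁ ω else 0) ^ 2 ∂P) = 1 - q₁ n
      ∧ |m₁ n| * (T n) ^ 5 ≤ δ₁ n := by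
    intro n ht
    simp only [hδ₁, hq₁, hm₁]
    exact aux_trunc P ξ₁ hmeas₁ hint6₁ hmean₁ hvar₁ (T n) ht
  have key₂ : ∀ n : ℕ, 0 < T n →
      0 ≤ q₂ n ∧ (T n) ^ 4 * q₂ n ≤ δ₂ n
      ∧ (∫ ω, (if |ξ₂ ω| ≤ T n then ξ₂ ω else 0) ^ 2 ∂P) = 1 - q₂ n
      ∧ |m₂ n| * (T n) ^ 5 ≤ δ₂ n := by
    intro n ht
    simp only [hδ₂, hq₂, hm₂]
    exact aux_trunc P ξ₂ hmeas₂ hint6₂ hmean₂ hvar₂ (T n) ht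
  have hTpos : ∀ n : ℕ, 1 ≤ n → 0 < T n := by
    intro n hn
    have : (0:ℝ) < (n : ℝ) := by exact_mod_cast hn
    exact Real.rpow_pos_of_pos this _
  have hδ₁0 : ∀ n, 0 ≤ δ₁ n := by
    intro n; simp only [hδ₁]
    refine integral_nonneg fun ω => ?_
    split_ifs <;> positivity
  have hδ₂0 : ∀ n, 0 ≤ δ₂ n := by
    intro n; simp only [hδ₂]
    refine integral_nonneg fun ω => ?_
    split_ifs <;> positivity
  -- integrability of truncated variables
  have hintX₁ : ∀ n, Integrable (fun ω => if |ξ₁ ω| ≤ T n then ξ₁ ω else 0) P :=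
    fun n => aux_int_le P ξ₁ ξ₁ hmeas₁ hmeas₁ hintξ₁ (T n)
  have hintX₂ : ∀ n, Integrable (fun ω => if |ξ₂ ω| ≤ T n then ξ₂ ω else 0) P :=
    fun n => aux_int_le P ξ₂ ξ₂ hmeas₂ hmeas₂ hintξ₂ (T n)
  have hintXsq₁ : ∀ n, Integrable (fun ω => (if |ξ₁ ω| ≤ T n then ξ₁ ω else 0) ^ 2) P := by
    intro n
    refine (aux_int_le P ξ₁ (fun ω => (ξ₁ ω)^2) hmeas₁ (hmeas₁.pow_const 2) hintsq₁
      (T n)).congr (Eventually.of_forall fun ω => ?_)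
    dsimp only
    split_ifs <;> ring
  have hintXsq₂ : ∀ n, Integrable (fun ω => (if |ξ₂ ω| ≤ T n then ξ₂ ω else 0) ^ 2) P := by
    intro n
    refine (aux_int_le P ξ₂ (fun ω => (ξ₂ ω)^2) hmeas₂ (hmeas₂.pow_const 2) hintsq₂
      (T n)).congr (Eventually.of_forall fun ω => ?_)
    dsimp only
    split_ifs <;> ring
  have hintXX : ∀ n, Integrable
      (fun ω => (if |ξ₁ ω| ≤ T n then ξ₁ ω else 0) * (if |ξ₂ ω| ≤ T n then ξ₂ ω else 0)) P := by
    intro n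
    refine hint12.abs.mono'
      (((Measurable.ite (measurableSet_le hmeas₁.abs measurable_const) hmeas₁ measurable_const).mul
        (Measurable.ite (measurableSet_le hmeas₂.abs measurable_const) hmeas₂
          measurable_const)).aestronglyMeasurable)
      (Eventually.of_forall fun ω => ?_)
    simp only [Real.norm_eq_abs, abs_mul]
    split_ifs <;>
      simp [abs_nonneg, mul_nonneg (abs_nonneg (ξ₁ ω)) (abs_nonneg (ξ₂ ω))]
  -- formula for C
  have hCeq : ∀ n, C n =
      (∫ ω, (if |ξ₁ ω| ≤ T n then ξ₁ ω else 0) * (if |ξ₂ ω| ≤ T n then ξ₂ ω else 0) ∂P)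
        - m₁ n * m₂ n := by
    intro n
    have e : (fun ω => tξ₁ n ω * tξ₂ n ω) = fun ω =>
        ((if |ξ₁ ω| ≤ T n then ξ₁ ω else 0) * (if |ξ₂ ω| ≤ T n then ξ₂ ω else 0)
          - m₂ n * (if |ξ₁ ω| ≤ T n then ξ₁ ω else 0))
          - m₁ n * (if |ξ₂ ω| ≤ T n then ξ₂ ω else 0) + m₁ n * m₂ n := by
      funext ω; rw [htξ₁' n ω, htξ₂' n ω]; ring
    have : C n = ∫ ω, (((if |ξ₁ ω| ≤ T n then ξ₁ ω else 0) * (if |ξ₂ ω| ≤ T n then ξ₂ ω else 0)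
          - m₂ n * (if |ξ₁ ω| ≤ T n then ξ₁ ω else 0))
          - m₁ n * (if |ξ₂ ω| ≤ T n then ξ₂ ω else 0) + m₁ n * m₂ n) ∂P := by
      rw [hCd]; simp only; rw [e]
    have hJ1 : Integrable (fun ω => (if |ξ₁ ω| ≤ T n then ξ₁ ω else 0) * (if |ξ₂ ω| ≤ T n then ξ₂ ω else 0)
        - m₂ n * (if |ξ₁ ω| ≤ T n then ξ₁ ω else 0)) P :=
      (hintXX n).sub ((hintX₁ n).const_mul (m₂ n))
    have hJ2 : Integrable (fun ω => (if |ξ₁ ω| ≤ T n then ξ₁ ω else 0) * (if |ξ₂ ω| ≤ T n then ξ₂ ω else 0)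
        - m₂ n * (if |ξ₁ ω| ≤ T n then ξ₁ ω else 0)
        - m₁ n * (if |ξ₂ ω| ≤ T n then ξ₂ ω else 0)) P :=
      hJ1.sub ((hintX₂ n).const_mul (m₁ n))
    have hJ3 : Integrable (fun ω => m₂ n * (if |ξ₁ ω| ≤ T n then ξ₁ ω else 0)) P :=
      (hintX₁ n).const_mul (m₂ n)
    have hJ4 : Integrable (fun ω => m₁ n * (if |ξ₂ ω| ≤ T n then ξ₂ ω else 0)) P :=
      (hintX₂ n).const_mul (m₁ n)
    rw [this, integral_add hJ2 (integrable_const _), integral_sub hJ1 hJ4,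
      integral_sub (hintXX n) hJ3, integral_const_mul, integral_const_mul, integral_const]
    have e₁ : (∫ ω, (if |ξ₁ ω| ≤ T n then ξ₁ ω else 0) ∂P) = m₁ n := by rw [hm₁]
    have e₂ : (∫ ω, (if |ξ₂ ω| ≤ T n then ξ₂ ω else 0) ∂P) = m₂ n := by rw [hm₂]
    rw [e₁, e₂]
    simp [measure_univ]
    ring
  -- formula for v₁, v₂
  have hveq₁ : ∀ n, v₁ n =
      (∫ ω, (if |ξ₁ ω| ≤ T n then ξ₁ ω else 0) ^ 2 ∂P) - (m₁ n) ^ 2 := by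
    intro n
    have e : (fun ω => (tξ₁ n ω) ^ 2) = fun ω =>
        ((if |ξ₁ ω| ≤ T n then ξ₁ ω else 0) ^ 2
          - 2 * m₁ n * (if |ξ₁ ω| ≤ T n then ξ₁ ω else 0)) + (m₁ n) ^ 2 := by
      funext ω; rw [htξ₁' n ω]; ring
    have : v₁ n = ∫ ω, (((if |ξ₁ ω| ≤ T n then ξ₁ ω else 0) ^ 2
          - 2 * m₁ n * (if |ξ₁ ω| ≤ T n then ξ₁ ω else 0)) + (m₁ n) ^ 2) ∂P := by
      rw [hv₁]; simp only; rw [e]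
    have hI1 : Integrable (fun ω => (if |ξ₁ ω| ≤ T n then ξ₁ ω else 0) ^ 2
        - 2 * m₁ n * (if |ξ₁ ω| ≤ T n then ξ₁ ω else 0)) P :=
      (hintXsq₁ n).sub ((hintX₁ n).const_mul (2 * m₁ n))
    have hI2 : Integrable (fun ω => 2 * m₁ n * (if |ξ₁ ω| ≤ T n then ξ₁ ω else 0)) P :=
      (hintX₁ n).const_mul (2 * m₁ n)
    rw [this, integral_add hI1 (integrable_const _),
      integral_sub (hintXsq₁ n) hI2, integral_const_mul]
    have e₁ : (∫ ω, (if |ξ₁ ω| ≤ T n then ξ₁ ω else 0) ∂P) = m₁ n := by rw [hm₁]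
    rw [e₁]
    simp [measure_univ]
    ring
  have hveq₂ : ∀ n, v₂ n =
      (∫ ω, (if |ξ₂ ω| ≤ T n then ξ₂ ω else 0) ^ 2 ∂P) - (m₂ n) ^ 2 := by
    intro n
    have e : (fun ω => (tξ₂ n ω) ^ 2) = fun ω =>
        ((if |ξ₂ ω| ≤ T n then ξ₂ ω else 0) ^ 2
          - 2 * m₂ n * (if |ξ₂ ω| ≤ T n then ξ₂ ω else 0)) + (m₂ n) ^ 2 := by
      funext ω; rw [htξ₂' n ω]; ring
    have : v₂ n = ∫ ω, (((if |ξ₂ ω| ≤ T n then ξ₂ ω else 0) ^ 2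
          - 2 * m₂ n * (if |ξ₂ ω| ≤ T n then ξ₂ ω else 0)) + (m₂ n) ^ 2) ∂P := by
      rw [hv₂]; simp only; rw [e]
    have hI1 : Integrable (fun ω => (if |ξ₂ ω| ≤ T n then ξ₂ ω else 0) ^ 2
        - 2 * m₂ n * (if |ξ₂ ω| ≤ T n then ξ₂ ω else 0)) P :=
      (hintXsq₂ n).sub ((hintX₂ n).const_mul (2 * m₂ n))
    have hI2 : Integrable (fun ω => 2 * m₂ n * (if |ξ₂ ω| ≤ T n then ξ₂ ω else 0)) P :=
      (hintX₂ n).const_mul (2 * m₂ n)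
    rw [this, integral_add hI1 (integrable_const _),
      integral_sub (hintXsq₂ n) hI2, integral_const_mul]
    have e₂ : (∫ ω, (if |ξ₂ ω| ≤ T n then ξ₂ ω else 0) ∂P) = m₂ n := by rw [hm₂]
    rw [e₂]
    simp [measure_univ]
    ring
  -- cross-term estimate
  have hcross : ∀ n : ℕ, ∀ a b : ℝ, 0 < a → 0 < b → a * b = 1 →
      |(∫ ω, (if |ξ₁ ω| ≤ T n then ξ₁ ω else 0) * (if |ξ₂ ω| ≤ T n then ξ₂ ω else 0) ∂P) - ρ|
        ≤ a / 2 * (q₁ n + q₂ n) + b := by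
    intro n a b ha hb hab
    have hBnd1 : Integrable (fun ω => if T n < |ξ₁ ω| then a/2 * (ξ₁ ω)^2 else 0) P :=
      aux_int_lt P ξ₁ _ hmeas₁ ((hmeas₁.pow_const 2).const_mul _) (hintsq₁.const_mul _) (T n)
    have hBnd2 : Integrable (fun ω => if T n < |ξ₂ ω| then a/2 * (ξ₂ ω)^2 else 0) P :=
      aux_int_lt P ξ₂ _ hmeas₂ ((hmeas₂.pow_const 2).const_mul _) (hintsq₂.const_mul _) (T n)
    have hBnd3 : Integrable (fun ω => b/2 * (ξ₁ ω)^2 + b/2 * (ξ₂ ω)^2) P :=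
      (hintsq₁.const_mul _).add (hintsq₂.const_mul _)
    have hBnd12 : Integrable (fun ω => (if T n < |ξ₁ ω| then a/2 * (ξ₁ ω)^2 else 0)
        + (if T n < |ξ₂ ω| then a/2 * (ξ₂ ω)^2 else 0)) P := hBnd1.add hBnd2
    have hBnd : Integrable (fun ω => ((if T n < |ξ₁ ω| then a/2 * (ξ₁ ω)^2 else 0)
        + (if T n < |ξ₂ ω| then a/2 * (ξ₂ ω)^2 else 0))
        + (b/2 * (ξ₁ ω)^2 + b/2 * (ξ₂ ω)^2)) P := hBnd12.add hBnd3
    have hdiffint : Integrable (fun ω => ξ₁ ω * ξ₂ ω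
        - (if |ξ₁ ω| ≤ T n then ξ₁ ω else 0) * (if |ξ₂ ω| ≤ T n then ξ₂ ω else 0)) P :=
      hint12.sub (hintXX n)
    have hdiff : (∫ ω, (ξ₁ ω * ξ₂ ω
        - (if |ξ₁ ω| ≤ T n then ξ₁ ω else 0) * (if |ξ₂ ω| ≤ T n then ξ₂ ω else 0)) ∂P)
        = ρ - (∫ ω, (if |ξ₁ ω| ≤ T n then ξ₁ ω else 0) * (if |ξ₂ ω| ≤ T n then ξ₂ ω else 0) ∂P) := by
      rw [integral_sub hint12 (hintXX n), ← hρ]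
    have hpt : ∀ ω, |ξ₁ ω * ξ₂ ω
        - (if |ξ₁ ω| ≤ T n then ξ₁ ω else 0) * (if |ξ₂ ω| ≤ T n then ξ₂ ω else 0)|
        ≤ ((if T n < |ξ₁ ω| then a/2 * (ξ₁ ω)^2 else 0)
          + (if T n < |ξ₂ ω| then a/2 * (ξ₂ ω)^2 else 0))
          + (b/2 * (ξ₁ ω)^2 + b/2 * (ξ₂ ω)^2) := by
      intro ω
      rcases le_or_gt (|ξ₁ ω|) (T n) with h1 | h1
      · rcases le_or_gt (|ξ₂ ω|) (T n) with h2 | h2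
        · rw [if_pos h1, if_pos h2, if_neg (not_lt.mpr h1), if_neg (not_lt.mpr h2)]
          simp only [sub_self, abs_zero, zero_add]
          positivity
        · rw [if_pos h1, if_neg (not_le.mpr h2), if_neg (not_lt.mpr h1), if_pos h2, mul_zero,
            sub_zero]
          have := aux_amgm a b (ξ₂ ω) (ξ₁ ω) ha hb hab
          rw [mul_comm (ξ₂ ω) (ξ₁ ω)] at this
          nlinarith [sq_nonneg (ξ₂ ω)]
      · rw [if_neg (not_le.mpr h1), if_pos h1, zero_mul, sub_zero]
        have := aux_amgm a b (ξ₁ ω) (ξ₂ ω) ha hb hab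
        have h2 : (0:ℝ) ≤ (if T n < |ξ₂ ω| then a/2 * (ξ₂ ω)^2 else 0) := by
          split_ifs <;> positivity
        nlinarith [sq_nonneg (ξ₂ ω), sq_nonneg (ξ₁ ω)]
    have habs : |(∫ ω, (if |ξ₁ ω| ≤ T n then ξ₁ ω else 0) * (if |ξ₂ ω| ≤ T n then ξ₂ ω else 0) ∂P) - ρ|
        ≤ ∫ ω, (((if T n < |ξ₁ ω| then a/2 * (ξ₁ ω)^2 else 0)
          + (if T n < |ξ₂ ω| then a/2 * (ξ₂ ω)^2 else 0))
          + (b/2 * (ξ₁ ω)^2 + b/2 * (ξ₂ ω)^2)) ∂P := by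
      rw [abs_sub_comm, ← hdiff]
      have hn := norm_integral_le_integral_norm (μ := P) (f := fun ω => ξ₁ ω * ξ₂ ω
        - (if |ξ₁ ω| ≤ T n then ξ₁ ω else 0) * (if |ξ₂ ω| ≤ T n then ξ₂ ω else 0))
      simp only [Real.norm_eq_abs] at hn
      refine hn.trans ?_
      refine integral_mono hdiffint.abs hBnd fun ω => hpt ω
    refine habs.trans ?_
    rw [integral_add hBnd12 hBnd3, integral_add hBnd1 hBnd2, integral_add
      (hintsq₁.const_mul (b/2) : Integrable (fun ω => b/2 * (ξ₁ ω)^2) P)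
      (hintsq₂.const_mul (b/2) : Integrable (fun ω => b/2 * (ξ₂ ω)^2) P)]
    have e1 : (∫ ω, (if T n < |ξ₁ ω| then a/2 * (ξ₁ ω)^2 else 0) ∂P) = a/2 * q₁ n := by
      rw [hq₁, ← integral_const_mul]
      refine integral_congr_ae (Eventually.of_forall fun ω => ?_)
      dsimp only
      split_ifs <;> ring
    have e2 : (∫ ω, (if T n < |ξ₂ ω| then a/2 * (ξ₂ ω)^2 else 0) ∂P) = a/2 * q₂ n := by
      rw [hq₂, ← integral_const_mul]
      refine integral_congr_ae (Eventually.of_forall fun ω => ?_)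
      dsimp only
      split_ifs <;> ring
    rw [e1, e2, integral_const_mul, integral_const_mul, hvar₁, hvar₂]
    have : a * b = 1 := hab
    nlinarith []
  -- rpow facts
  have hNfact : ∀ n : ℕ, 1 ≤ n → (1:ℝ) ≤ (n:ℝ) ∧ (0:ℝ) < (n:ℝ) := by
    intro n hn
    have h1 : (1:ℝ) ≤ (n:ℝ) := by exact_mod_cast hn
    exact ⟨h1, by linarith⟩
  have ht4 : ∀ n : ℕ, 1 ≤ n → (T n) ^ 4 = (n:ℝ) ^ (2 - 4*ε) := by
    intro n hn
    obtain ⟨hN, hN0⟩ := hNfact n hn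
    rw [hT]
    dsimp only
    rw [← Real.rpow_natCast ((n:ℝ) ^ ((1:ℝ)/2 - ε)) 4, ← Real.rpow_mul hN0.le]
    congr 1
    push_cast
    ring
  have ht5 : ∀ n : ℕ, 1 ≤ n → (T n) ^ 5 = (n:ℝ) ^ ((5:ℝ)/2 - 5*ε) := by
    intro n hn
    obtain ⟨hN, hN0⟩ := hNfact n hn
    rw [hT]
    dsimp only
    rw [← Real.rpow_natCast ((n:ℝ) ^ ((1:ℝ)/2 - ε)) 5, ← Real.rpow_mul hN0.le]
    congr 1
    push_cast
    ring
  -- N q ≤ N^{6ε} δ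
  have hNq : ∀ n : ℕ, 1 ≤ n → ∀ q δ : ℝ, 0 ≤ q → (T n) ^ 4 * q ≤ δ →
      (n:ℝ) * q ≤ (n:ℝ) ^ (6*ε) * δ := by
    intro n hn q δ hq0 hqb
    obtain ⟨hN, hN0⟩ := hNfact n hn
    have c1 : (n:ℝ) ≤ (n:ℝ) ^ (6*ε) * (T n) ^ 4 := by
      rw [ht4 n hn, ← Real.rpow_add hN0]
      calc (n:ℝ) = (n:ℝ) ^ (1:ℝ) := (Real.rpow_one _).symm
        _ ≤ _ := Real.rpow_le_rpow_of_exponent_le hN (by linarith)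
    calc (n:ℝ) * q ≤ ((n:ℝ) ^ (6*ε) * (T n) ^ 4) * q := mul_le_mul_of_nonneg_right c1 hq0
      _ = (n:ℝ) ^ (6*ε) * ((T n) ^ 4 * q) := by ring
      _ ≤ (n:ℝ) ^ (6*ε) * δ := by
          refine mul_le_mul_of_nonneg_left hqb ?_
          positivity
  -- N |m| |m'| ≤ D D'
  have hNm : ∀ n : ℕ, 1 ≤ n → ∀ m m' δ δ' : ℝ, 0 ≤ δ → 0 ≤ δ' →
      |m| * (T n) ^ 5 ≤ δ → |m'| * (T n) ^ 5 ≤ δ' →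
      (n:ℝ) * (|m| * |m'|) ≤ ((n:ℝ) ^ (6*ε) * δ) * ((n:ℝ) ^ (6*ε) * δ') := by
    intro n hn m m' δ δ' hδ hδ' hm hm'
    obtain ⟨hN, hN0⟩ := hNfact n hn
    have htpos : 0 < T n := hTpos n hn
    have c1 : (n:ℝ) ≤ (n:ℝ) ^ (6*ε) * (n:ℝ) ^ (6*ε) * ((T n) ^ 5 * (T n) ^ 5) := by
      rw [ht5 n hn, ← Real.rpow_add hN0, ← Real.rpow_add hN0, ← Real.rpow_add hN0]
      calc (n:ℝ) = (n:ℝ) ^ (1:ℝ) := (Real.rpow_one _).symm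
        _ ≤ _ := Real.rpow_le_rpow_of_exponent_le hN (by linarith)
    have hsq : (|m| * (T n) ^ 5) * (|m'| * (T n) ^ 5) ≤ δ * δ' :=
      mul_le_mul hm hm' (by positivity) hδ
    calc (n:ℝ) * (|m| * |m'|)
        ≤ ((n:ℝ) ^ (6*ε) * (n:ℝ) ^ (6*ε) * ((T n) ^ 5 * (T n) ^ 5)) * (|m| * |m'|) :=
          mul_le_mul_of_nonneg_right c1 (by positivity)
      _ = (n:ℝ) ^ (6*ε) * (n:ℝ) ^ (6*ε) * ((|m| * (T n) ^ 5) * (|m'| * (T n) ^ 5)) := by ring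
      _ ≤ (n:ℝ) ^ (6*ε) * (n:ℝ) ^ (6*ε) * (δ * δ') := by
          refine mul_le_mul_of_nonneg_left hsq ?_
          positivity
      _ = ((n:ℝ) ^ (6*ε) * δ) * ((n:ℝ) ^ (6*ε) * δ') := by ring
  -- variance asymptotics
  have hKvgen : ∀ (v q m δD : ℕ → ℝ),
      (∀ n : ℕ, 0 < T n → 0 ≤ q n ∧ (T n) ^ 4 * q n ≤ δD n ∧ |m n| * (T n) ^ 5 ≤ δD n) →
      (∀ n, 0 ≤ δD n) →
      (∀ n : ℕ, 1 ≤ n → v n - 1 = -(q n + (m n) ^ 2)) →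
      Tendsto (fun n : ℕ => (n:ℝ) ^ (6*ε) * δD n) atTop (𝓝 0) →
      Tendsto (fun n : ℕ => (n:ℝ) * (v n - 1)) atTop (𝓝 0) := by
    intro v q m δD hkey hδ0 hveq hD
    refine squeeze_zero_norm' (a := fun n : ℕ => (n:ℝ) ^ (6*ε) * δD n
      + ((n:ℝ) ^ (6*ε) * δD n) * ((n:ℝ) ^ (6*ε) * δD n)) ?_ ?_
    · filter_upwards [eventually_ge_atTop 1] with n hn
      obtain ⟨hq0, hqb, hmb⟩ := hkey n (hTpos n hn)
      obtain ⟨hN, hN0⟩ := hNfact n hn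
      have h1 : (n:ℝ) * q n ≤ (n:ℝ) ^ (6*ε) * δD n := hNq n hn _ _ hq0 hqb
      have h2 : (n:ℝ) * (|m n| * |m n|) ≤ ((n:ℝ) ^ (6*ε) * δD n) * ((n:ℝ) ^ (6*ε) * δD n) :=
        hNm n hn _ _ _ _ (hδ0 n) (hδ0 n) hmb hmb
      rw [abs_mul_abs_self] at h2
      rw [Real.norm_eq_abs, hveq n hn, abs_mul, abs_neg,
        abs_of_nonneg (add_nonneg hq0 (sq_nonneg _)), abs_of_nonneg hN0.le]
      have e : (n:ℝ) * (q n + (m n) ^ 2) = (n:ℝ) * q n + (n:ℝ) * ((m n) * (m n)) := by ring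
      rw [e]
      linarith
    · have := (hD.add (hD.mul hD))
      simpa using this
  have hKv₁ : Tendsto (fun n : ℕ => (n:ℝ) * (v₁ n - 1)) atTop (𝓝 0) := by
    refine hKvgen v₁ q₁ m₁ δ₁ (fun n ht => ?_) hδ₁0 (fun n hn => ?_) hD₁
    · obtain ⟨hq0, hqb, _, hmb⟩ := key₁ n ht
      exact ⟨hq0, hqb, hmb⟩
    · obtain ⟨_, _, hXsq, _⟩ := key₁ n (hTpos n hn)
      rw [hveq₁ n, hXsq]; ring
  have hKv₂ : Tendsto (fun n : ℕ => (n:ℝ) * (v₂ n - 1)) atTop (𝓝 0) := by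
    refine hKvgen v₂ q₂ m₂ δ₂ (fun n ht => ?_) hδ₂0 (fun n hn => ?_) hD₂
    · obtain ⟨hq0, hqb, _, hmb⟩ := key₂ n ht
      exact ⟨hq0, hqb, hmb⟩
    · obtain ⟨_, _, hXsq, _⟩ := key₂ n (hTpos n hn)
      rw [hveq₂ n, hXsq]; ring
  have h2ε : Tendsto (fun n : ℕ => (n:ℝ) ^ (-(2*ε))) atTop (𝓝 0) :=
    (tendsto_rpow_neg_atTop (by linarith)).comp tendsto_natCast_atTop_atTop
  have hKc : Tendsto (fun n : ℕ => (n:ℝ) * (C n - ρ)) atTop (𝓝 0) := by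
    refine squeeze_zero_norm' (a := fun n : ℕ =>
      ((n:ℝ) ^ (6*ε) * δ₁ n + (n:ℝ) ^ (6*ε) * δ₂ n)/2 + (n:ℝ) ^ (-(2*ε))
        + ((n:ℝ) ^ (6*ε) * δ₁ n) * ((n:ℝ) ^ (6*ε) * δ₂ n)) ?_ ?_
    · filter_upwards [eventually_ge_atTop 1] with n hn
      obtain ⟨hN, hN0⟩ := hNfact n hn
      obtain ⟨hq10, hq1b, _, hm1b⟩ := key₁ n (hTpos n hn)
      obtain ⟨hq20, hq2b, _, hm2b⟩ := key₂ n (hTpos n hn)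
      have ha : 0 < (n:ℝ) ^ ((1:ℝ)+2*ε) := Real.rpow_pos_of_pos hN0 _
      have hb : 0 < (n:ℝ) ^ (-((1:ℝ)+2*ε)) := Real.rpow_pos_of_pos hN0 _
      have hab : (n:ℝ) ^ ((1:ℝ)+2*ε) * (n:ℝ) ^ (-((1:ℝ)+2*ε)) = 1 := by
        rw [← Real.rpow_add hN0, show (1:ℝ)+2*ε + -((1:ℝ)+2*ε) = 0 by ring, Real.rpow_zero]
      have hcr := hcross n _ _ ha hb hab
      have hNa : (n:ℝ) * (n:ℝ) ^ ((1:ℝ)+2*ε) = (n:ℝ) ^ (6*ε) * (T n) ^ 4 := by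
        have e : (n:ℝ) * (n:ℝ) ^ ((1:ℝ)+2*ε) = (n:ℝ) ^ (1:ℝ) * (n:ℝ) ^ ((1:ℝ)+2*ε) := by
          rw [Real.rpow_one]
        rw [e, ← Real.rpow_add hN0, ht4 n hn, ← Real.rpow_add hN0]
        congr 1
        ring
      have hP1 : ((n:ℝ) * (n:ℝ) ^ ((1:ℝ)+2*ε)) * q₁ n ≤ (n:ℝ) ^ (6*ε) * δ₁ n := by
        rw [hNa, mul_assoc]
        refine mul_le_mul_of_nonneg_left hq1b ?_
        positivity
      have hP2 : ((n:ℝ) * (n:ℝ) ^ ((1:ℝ)+2*ε)) * q₂ n ≤ (n:ℝ) ^ (6*ε) * δ₂ n := by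
        rw [hNa, mul_assoc]
        refine mul_le_mul_of_nonneg_left hq2b ?_
        positivity
      have hNb : (n:ℝ) * (n:ℝ) ^ (-((1:ℝ)+2*ε)) = (n:ℝ) ^ (-(2*ε)) := by
        have e : (n:ℝ) * (n:ℝ) ^ (-((1:ℝ)+2*ε)) = (n:ℝ) ^ (1:ℝ) * (n:ℝ) ^ (-((1:ℝ)+2*ε)) := by
          rw [Real.rpow_one]
        rw [e, ← Real.rpow_add hN0]
        congr 1
        ring
      have hP3 := hNm n hn (m₁ n) (m₂ n) (δ₁ n) (δ₂ n) (hδ₁0 n) (hδ₂0 n) hm1b hm2b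
      have hCr : |C n - ρ| ≤
          |(∫ ω, (if |ξ₁ ω| ≤ T n then ξ₁ ω else 0) * (if |ξ₂ ω| ≤ T n then ξ₂ ω else 0) ∂P) - ρ|
            + |m₁ n| * |m₂ n| := by
        have e : C n - ρ =
            ((∫ ω, (if |ξ₁ ω| ≤ T n then ξ₁ ω else 0) * (if |ξ₂ ω| ≤ T n then ξ₂ ω else 0) ∂P) - ρ)
              - m₁ n * m₂ n := by
          rw [hCeq n]; ring
        rw [e]
        refine (abs_sub _ _).trans (le_of_eq ?_)
        rw [abs_mul]
      rw [Real.norm_eq_abs, abs_mul, abs_of_nonneg hN0.le]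
      have step1 : (n:ℝ) * |C n - ρ| ≤ (n:ℝ) * (((n:ℝ) ^ ((1:ℝ)+2*ε))/2 * (q₁ n + q₂ n)
          + (n:ℝ) ^ (-((1:ℝ)+2*ε)) + |m₁ n| * |m₂ n|) := by
        refine mul_le_mul_of_nonneg_left ?_ hN0.le
        calc |C n - ρ| ≤ _ + |m₁ n| * |m₂ n| := hCr
          _ ≤ _ := by linarith [hcr]
      have step2 : (n:ℝ) * (((n:ℝ) ^ ((1:ℝ)+2*ε))/2 * (q₁ n + q₂ n)
          + (n:ℝ) ^ (-((1:ℝ)+2*ε)) + |m₁ n| * |m₂ n|)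
          = (((n:ℝ) * (n:ℝ) ^ ((1:ℝ)+2*ε)) * q₁ n + ((n:ℝ) * (n:ℝ) ^ ((1:ℝ)+2*ε)) * q₂ n)/2
            + (n:ℝ) * (n:ℝ) ^ (-((1:ℝ)+2*ε)) + (n:ℝ) * (|m₁ n| * |m₂ n|) := by
        ring
      rw [step2] at step1
      rw [hNb] at step1
      linarith
    · have := (((hD₁.add hD₂).div_const 2).add h2ε).add (hD₁.mul hD₂)
      simpa using this
  -- v → 1
  have hone : Tendsto (fun n : ℕ => 1/(n:ℝ)) atTop (𝓝 0) := tendsto_one_div_atTop_nhds_zero_nat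
  have hvlim : ∀ Kv : ℕ → ℝ, ∀ v : ℕ → ℝ, (∀ n, Kv n = (n:ℝ) * (v n - 1)) →
      Tendsto Kv atTop (𝓝 0) → Tendsto v atTop (𝓝 1) := by
    intro Kv v hKv hK
    have h0 : Tendsto (fun n : ℕ => Kv n * (1/(n:ℝ))) atTop (𝓝 0) := by
      simpa using hK.mul hone
    have heq : (fun n : ℕ => Kv n * (1/(n:ℝ))) =ᶠ[atTop] fun n => v n - 1 := by
      filter_upwards [eventually_ge_atTop 1] with n hn
      obtain ⟨hN, hN0⟩ := hNfact n hn
      rw [hKv n]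
      field_simp
    have h1 : Tendsto (fun n : ℕ => v n - 1) atTop (𝓝 0) := Tendsto.congr' heq h0
    have h2 : Tendsto (fun n : ℕ => (v n - 1) + 1) atTop (𝓝 (0 + 1)) :=
      h1.add tendsto_const_nhds
    simpa using h2
  have hv₁lim : Tendsto v₁ atTop (𝓝 1) := hvlim _ v₁ (fun n => rfl) hKv₁
  have hv₂lim : Tendsto v₂ atTop (𝓝 1) := hvlim _ v₂ (fun n => rfl) hKv₂
  have hs : Tendsto (fun n : ℕ => Real.sqrt (v₁ n) * Real.sqrt (v₂ n)) atTop (𝓝 1) := by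
    have h1 : Tendsto (fun n : ℕ => Real.sqrt (v₁ n)) atTop (𝓝 1) := by
      have := (Real.continuous_sqrt.tendsto 1).comp hv₁lim
      simpa [Function.comp_def] using this
    have h2 : Tendsto (fun n : ℕ => Real.sqrt (v₂ n)) atTop (𝓝 1) := by
      have := (Real.continuous_sqrt.tendsto 1).comp hv₂lim
      simpa [Function.comp_def] using this
    simpa using h1.mul h2
  have hev₁ : ∀ᶠ n : ℕ in atTop, (1:ℝ)/2 ≤ v₁ n :=
    hv₁lim.eventually (eventually_ge_nhds (by norm_num : (1:ℝ)/2 < 1))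
  have hev₂ : ∀ᶠ n : ℕ in atTop, (1:ℝ)/2 ≤ v₂ n :=
    hv₂lim.eventually (eventually_ge_nhds (by norm_num : (1:ℝ)/2 < 1))
  have hKs : Tendsto (fun n : ℕ =>
      (n:ℝ) * (Real.sqrt (v₁ n) * Real.sqrt (v₂ n) - 1)) atTop (𝓝 0) := by
    have hden : Tendsto (fun n : ℕ => Real.sqrt (v₁ n) * Real.sqrt (v₂ n) + 1) atTop (𝓝 2) := by
      have := hs.add (tendsto_const_nhds (x := (1:ℝ)))
      norm_num at this
      exact this
    have hnum : Tendsto (fun n : ℕ =>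
        ((n:ℝ) * (v₁ n - 1)) * v₂ n + (n:ℝ) * (v₂ n - 1)) atTop (𝓝 0) := by
      have := (hKv₁.mul hv₂lim).add hKv₂
      simpa using this
    have hquot := hnum.div hden (by norm_num)
    have hquot' : Tendsto (fun n : ℕ => (((n:ℝ) * (v₁ n - 1)) * v₂ n + (n:ℝ) * (v₂ n - 1))
        / (Real.sqrt (v₁ n) * Real.sqrt (v₂ n) + 1)) atTop (𝓝 0) := by
      simpa [Pi.div_def] using hquot
    refine Tendsto.congr' ?_ hquot'
    filter_upwards [eventually_ge_atTop 1, hev₁, hev₂] with n hn h1 h2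
    have hv₁0 : (0:ℝ) ≤ v₁ n := by linarith
    have hv₂0 : (0:ℝ) ≤ v₂ n := by linarith
    have hsq : (Real.sqrt (v₁ n) * Real.sqrt (v₂ n)) * (Real.sqrt (v₁ n) * Real.sqrt (v₂ n))
        = v₁ n * v₂ n := by
      rw [mul_mul_mul_comm, Real.mul_self_sqrt hv₁0, Real.mul_self_sqrt hv₂0]
    have hden0 : Real.sqrt (v₁ n) * Real.sqrt (v₂ n) + 1 ≠ 0 := by positivity
    rw [div_eq_iff hden0]
    linear_combination (-(n:ℝ)) * hsq
  -- final assembly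
  have hfinal := (hKc.sub ((tendsto_const_nhds (x := ρ)).mul hKs)).div hs one_ne_zero
  have hfinal' : Tendsto (fun n : ℕ =>
      ((n:ℝ) * (C n - ρ) - ρ * ((n:ℝ) * (Real.sqrt (v₁ n) * Real.sqrt (v₂ n) - 1)))
        / (Real.sqrt (v₁ n) * Real.sqrt (v₂ n))) atTop (𝓝 0) := by
    simpa [Pi.div_def] using hfinal
  refine Tendsto.congr' ?_ hfinal'
  filter_upwards [eventually_ge_atTop 1, hev₁, hev₂] with n hn h1 h2
  have hv₁0 : (0:ℝ) < v₁ n := by linarith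
  have hv₂0 : (0:ℝ) < v₂ n := by linarith
  have hs1 : 0 < Real.sqrt (v₁ n) := Real.sqrt_pos.mpr hv₁0
  have hs2 : 0 < Real.sqrt (v₂ n) := Real.sqrt_pos.mpr hv₂0
  have hne : Real.sqrt (v₁ n) * Real.sqrt (v₂ n) ≠ 0 := by positivity
  rw [hρhat' n]
  field_simp
  ring
end

section
/- Let N ≥ 2 and let A be an N×N complex matrix written in block form A = [[a, r],[c, A']], where a ∈ ℂ, r is a 1×(N−1) row vector, c is an (N−1)×1 column vector, and A' is an (N−1)×(N−1) matrix. Assume A and A' are invertible and a − r A'^{−1} c ≠ 0. Then tr(A^{−1}) − tr(A'^{−1}) = (1 + r A'^{−2} c)/(a − r A'^{−1} c). -/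
open Matrix

lemma trace_fromBlocks' {m n R : Type*} [Fintype m] [Fintype n] [AddCommMonoid R]
    (A : Matrix m m R) (B : Matrix m n R) (C : Matrix n m R) (D : Matrix n n R) :
    Matrix.trace (Matrix.fromBlocks A B C D) = Matrix.trace A + Matrix.trace D := by
  simp [Matrix.trace, Fintype.sum_sum_type, Matrix.fromBlocks]

/-- Trace identity for the resolvent of a matrix and its principal `(N-1) × (N-1)` submatrix:
`tr A⁻¹ − tr A'⁻¹ = (1 + r A'⁻² c)/(a − r A'⁻¹ c)`. -/
theorem stmt13 (n : ℕ) (hn : 1 ≤ n) (a : ℂ)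
    (r : Matrix (Fin 1) (Fin n) ℂ) (c : Matrix (Fin n) (Fin 1) ℂ)
    (A' : Matrix (Fin n) (Fin n) ℂ)
    (A : Matrix (Fin 1 ⊕ Fin n) (Fin 1 ⊕ Fin n) ℂ)
    (hA : A = Matrix.fromBlocks (Matrix.of fun _ _ => a) r c A')
    (hAinv : IsUnit A.det) (hA'inv : IsUnit A'.det)
    (hschur : a - (r * A'⁻¹ * c) 0 0 ≠ 0) :
    Matrix.trace A⁻¹ - Matrix.trace A'⁻¹ =
      (1 + (r * A'⁻¹ * A'⁻¹ * c) 0 0) / (a - (r * A'⁻¹ * c) 0 0) := by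
  subst hA
  letI iA' : Invertible A' := A'.invertibleOfIsUnitDet hA'inv
  have hinvA' : ⅟A' = A'⁻¹ := invOf_eq_nonsing_inv A'
  set S : Matrix (Fin 1) (Fin 1) ℂ :=
    (Matrix.of fun _ _ => a) - r * ⅟A' * c with hS
  have hSentry : S 0 0 = a - (r * A'⁻¹ * c) 0 0 := by
    simp [hS, hinvA']
  have hSdet : IsUnit S.det := by
    rw [Matrix.det_fin_one, hSentry]; exact Ne.isUnit hschur
  letI iS : Invertible S := S.invertibleOfIsUnitDet hSdet
  letI iA : Invertible (Matrix.fromBlocks (Matrix.of fun _ _ => a) r c A') :=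
    (Matrix.fromBlocks (Matrix.of fun _ _ => a) r c A').invertibleOfIsUnitDet hAinv
  have hinvA := invOf_eq_nonsing_inv (Matrix.fromBlocks (Matrix.of fun _ _ => a) r c A')
  rw [← hinvA, Matrix.invOf_fromBlocks₂₂_eq, trace_fromBlocks']
  have hSinv : ⅟S = S⁻¹ := invOf_eq_nonsing_inv S
  have hSinventry : (⅟S) 0 0 = (S 0 0)⁻¹ := by
    rw [hSinv, Matrix.inv_def]
    simp [Matrix.det_fin_one, Matrix.adjugate_fin_one, Ring.inverse_eq_inv']
  have htr2 : Matrix.trace (⅟A' + ⅟A' * c * ⅟S * r * ⅟A')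
      = Matrix.trace A'⁻¹ + ((r * A'⁻¹ * A'⁻¹ * c) 0 0) * (S 0 0)⁻¹ := by
    rw [Matrix.trace_add, hinvA']
    congr 1
    have : A'⁻¹ * c * ⅟S * r * A'⁻¹ = (A'⁻¹ * c) * (⅟S * r * A'⁻¹) := by
      simp only [Matrix.mul_assoc]
    rw [this, Matrix.trace_mul_comm]
    have : ⅟S * r * A'⁻¹ * (A'⁻¹ * c) = ⅟S * (r * A'⁻¹ * A'⁻¹ * c) := by
      simp only [Matrix.mul_assoc]
    rw [this, Matrix.trace_fin_one]
    simp [Matrix.mul_apply, Fin.sum_univ_one, hSinventry, mul_comm]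
  rw [htr2, Matrix.trace_fin_one, hSinventry, hSentry]
  field_simp
  ring
end

section
/- For ϱ ∈ [−1,1] with |ϱ| < 1, let E_ϱ := {z ∈ ℂ : (Re z)²/(1+ϱ)² + (Im z)²/(1−ϱ)² < 1}, with E₁ := [−2,2] and E₋₁ the segment from −2i to 2i. Fix δ > 0, ρ ∈ [−1,1], and z ∈ ℂ with dist(z, E_ρ) > δ. Then: (a) for every ϱ ∈ [−1,1] with dist(z, E_ϱ) > 0 there is a unique complex number m_ϱ(z) with |m_ϱ(z)| < 1 satisfying ϱ·m_ϱ(z)² + z·m_ϱ(z) + 1 = 0; and (b) for any sequence ρ_N ∈ [−1,1] with ρ_N → ρ as N → ∞ (so that dist(z, E_{ρ_N}) > 0 for all N large), one has m_{ρ_N}(z) → m_ρ(z) as N → ∞. -/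
open MeasureTheory Filter Topology

theorem keyineq (a b c d p : ℝ) (hp1 : -1 < p) (hp2 : p < 1)
    (hu : a^2 + b^2 ≤ 1) (hv : c^2 + d^2 ≤ 1)
    (hre : a*c - b*d = p) (him : a*d + b*c = 0)
    (hs : 0 < a^2 + b^2) :
    (a+c)^2/(1+p)^2 + (b+d)^2/(1-p)^2 ≤ 1 := by
  have hcs : c * (a^2+b^2) = p * a := by linear_combination a*hre + b*him
  have hds : d * (a^2+b^2) = -(p * b) := by linear_combination a*him - b*hre
  have hlag : p^2 = (a^2+b^2) * (c^2+d^2) := by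
    linear_combination (-(a*c-b*d+p))*hre + (-(a*d+b*c))*him
  have hp2s : p^2 ≤ a^2+b^2 := by nlinarith
  have h1p : (0:ℝ) < (1+p)^2 := pow_pos (by linarith) 2
  have h2p : (0:ℝ) < (1-p)^2 := pow_pos (by linarith) 2
  have key : ((a+c)*(a^2+b^2))^2*(1-p)^2 + ((b+d)*(a^2+b^2))^2*(1+p)^2
      ≤ (a^2+b^2)^2*((1+p)^2*(1-p)^2) := by
    have hac : (a+c)*(a^2+b^2) = a*((a^2+b^2)+p) := by linear_combination hcs
    have hbd : (b+d)*(a^2+b^2) = b*((a^2+b^2)-p) := by linear_combination hds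
    rw [hac, hbd]
    nlinarith [mul_nonneg (mul_nonneg (sub_nonneg.2 hu) (sub_nonneg.2 hp2s))
      (add_nonneg (mul_nonneg (sq_nonneg a) (sq_nonneg (1-p)))
        (mul_nonneg (sq_nonneg b) (sq_nonneg (1+p))))]
  rw [div_add_div _ _ (ne_of_gt h1p) (ne_of_gt h2p), div_le_one (mul_pos h1p h2p)]
  have hs2 : (0:ℝ) < (a^2+b^2)^2 := by positivity
  refine le_of_mul_le_mul_left ?_ hs2
  calc (a^2+b^2)^2 * ((a+c)^2*(1-p)^2 + (1+p)^2*(b+d)^2)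
      = ((a+c)*(a^2+b^2))^2*(1-p)^2 + ((b+d)*(a^2+b^2))^2*(1+p)^2 := by ring
    _ ≤ (a^2+b^2)^2*((1+p)^2*(1-p)^2) := key

theorem sum_mem_closure (p : ℝ) (hp1 : -1 ≤ p) (hp2 : p ≤ 1) (u v : ℂ)
    (hu : ‖u‖ ≤ 1) (hv : ‖v‖ ≤ 1) (huv : u * v = (p:ℂ)) :
    Metric.infDist (u + v) (ellipse p) = 0 := by
  have habsm : ‖u‖ * ‖v‖ = |p| := by
    rw [← norm_mul, huv, Complex.norm_real, Real.norm_eq_abs]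
  rcases eq_or_ne p 1 with rfl | hp1'
  · -- p = 1
    have hau : ‖u‖ = 1 := by
      rw [abs_one] at habsm
      nlinarith [norm_nonneg u, norm_nonneg v]
    have hu0 : u ≠ 0 := by
      intro h; rw [h] at hau; simp at hau
    have hvconj : v = starRingEnd ℂ u := by
      have h2 : u * starRingEnd ℂ u = 1 := by
        rw [Complex.mul_conj]
        norm_cast
        rw [← Complex.sq_norm, hau]; norm_num
      apply mul_left_cancel₀ hu0
      rw [h2, huv]; push_cast; ring
    apply Metric.infDist_zero_of_mem
    simp only [ellipse, if_pos rfl, Set.mem_setOf_eq, hvconj]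
    constructor
    · simp [Complex.add_im]
    · have h3 : |u.re| ≤ 1 := hau ▸ Complex.abs_re_le_norm u
      rw [Complex.add_re, Complex.conj_re]
      rw [abs_le] at h3 ⊢
      constructor <;> linarith [h3.1, h3.2]
  rcases eq_or_ne p (-1) with rfl | hpm
  · -- p = -1
    have hau : ‖u‖ = 1 := by
      rw [abs_neg, abs_one] at habsm
      nlinarith [norm_nonneg u, norm_nonneg v]
    have hu0 : u ≠ 0 := by
      intro h; rw [h] at hau; simp at hau
    have hvconj : v = -(starRingEnd ℂ u) := by
      have h2 : u * (-(starRingEnd ℂ u)) = -1 := by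
        rw [mul_neg, Complex.mul_conj]
        norm_cast
        rw [← Complex.sq_norm, hau]; norm_num
      apply mul_left_cancel₀ hu0
      rw [h2, huv]; push_cast; ring
    apply Metric.infDist_zero_of_mem
    have : ¬ ((-1 : ℝ) = 1) := by norm_num
    simp only [ellipse, if_neg this, if_pos rfl, Set.mem_setOf_eq, hvconj]
    constructor
    · simp [Complex.add_re]
    · have h3 : |u.im| ≤ 1 := hau ▸ Complex.abs_im_le_norm u
      rw [Complex.add_im, Complex.neg_im, Complex.conj_im]
      rw [abs_le] at h3 ⊢
      constructor <;> linarith [h3.1, h3.2]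
  · -- -1 < p < 1
    have hp1lt : -1 < p := lt_of_le_of_ne hp1 (Ne.symm hpm)
    have hp2lt : p < 1 := lt_of_le_of_ne hp2 hp1'
    set z := u + v with hz
    -- closed-ellipse membership
    have hfle : z.re^2/(1+p)^2 + z.im^2/(1-p)^2 ≤ 1 := by
      have hu2 : u.re^2 + u.im^2 ≤ 1 := by
        have h := Complex.sq_norm u
        rw [Complex.normSq_apply] at h
        nlinarith [norm_nonneg u]
      have hv2 : v.re^2 + v.im^2 ≤ 1 := by
        have h := Complex.sq_norm v
        rw [Complex.normSq_apply] at h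
        nlinarith [norm_nonneg v]
      have hre : u.re*v.re - u.im*v.im = p := by
        have := congrArg Complex.re huv
        simpa [Complex.mul_re] using this
      have him : u.re*v.im + u.im*v.re = 0 := by
        have := congrArg Complex.im huv
        simpa [Complex.mul_im] using this
      rcases eq_or_ne u 0 with rfl | hu0
      · have hp0 : p = 0 := by
          have : ((p:ℂ)) = 0 := by rw [← huv]; ring
          exact_mod_cast this
        subst hp0
        simp only [hz, zero_add]
        norm_num
        linarith [hv2]
      · have hs : 0 < u.re^2 + u.im^2 := by
          have := Complex.normSq_pos.mpr hu0
          rwa [Complex.normSq_apply, ← sq, ← sq] at this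
        have := keyineq u.re u.im v.re v.im p hp1lt hp2lt hu2 hv2 hre him hs
        simpa [hz, Complex.add_re, Complex.add_im] using this
    -- now closure argument
    apply Metric.infDist_zero_of_mem_closure
    have hmem : ∀ t : ℝ, 0 ≤ t → t < 1 → ((t:ℂ) * z) ∈ ellipse p := by
      intro t ht0 ht1
      simp only [ellipse, if_neg hp1', if_neg hpm, Set.mem_setOf_eq]
      have hret : ((t:ℂ) * z).re = t * z.re := by
        simp [Complex.mul_re]
      have himt : ((t:ℂ) * z).im = t * z.im := by
        simp [Complex.mul_im]
      rw [hret, himt]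
      have e : (t*z.re)^2/(1+p)^2 + (t*z.im)^2/(1-p)^2
          = t^2 * (z.re^2/(1+p)^2 + z.im^2/(1-p)^2) := by ring
      rw [e]
      have h4 : t^2 * (z.re^2/(1+p)^2 + z.im^2/(1-p)^2) ≤ t^2 := by
        nlinarith [sq_nonneg t]
      nlinarith [sq_nonneg t]
    have htend : Tendsto (fun n : ℕ => ((1 - 1/((n:ℝ)+1) : ℝ) : ℂ) * z) atTop (𝓝 z) := by
      have h1 : Tendsto (fun n : ℕ => (1 - 1/((n:ℝ)+1) : ℝ)) atTop (𝓝 1) := by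
        have := tendsto_one_div_add_atTop_nhds_zero_nat (𝕜 := ℝ)
        have h2 := (tendsto_const_nhds (x := (1:ℝ)) (f := atTop (α := ℕ))).sub this
        simpa using h2
      have h2 : Tendsto (fun n : ℕ => ((1 - 1/((n:ℝ)+1) : ℝ) : ℂ)) atTop (𝓝 ((1:ℝ):ℂ)) :=
        (Complex.continuous_ofReal.tendsto _).comp h1
      have h3 := h2.mul (tendsto_const_nhds (x := z))
      simpa using h3
    apply mem_closure_of_tendsto htend
    filter_upwards with n
    apply hmem
    · have : (0:ℝ) < (n:ℝ) + 1 := by positivity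
      have : 1/((n:ℝ)+1) ≤ 1 := by
        rw [div_le_one this]; linarith [Nat.cast_nonneg (α := ℝ) n]
      linarith
    · have : (0:ℝ) < 1/((n:ℝ)+1) := by positivity
      linarith

/-- Existence, uniqueness and continuity in `ϱ` of the Stieltjes-transform value `m_ϱ(z)`,
the solution of `ϱ m² + z m + 1 = 0` of modulus less than one, for `z` outside `E_ϱ`. -/
theorem stmt19 (δ : ℝ) (hδ : 0 < δ) (ρ : ℝ) (hρ : ρ ∈ Set.Icc (-1 : ℝ) 1)
    (z : ℂ) (hz : δ < Metric.infDist z (ellipse ρ)) :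
    (∀ ϱ ∈ Set.Icc (-1 : ℝ) 1, 0 < Metric.infDist z (ellipse ϱ) →
      ∃! m : ℂ, ‖m‖ < 1 ∧ (ϱ : ℂ) * m ^ 2 + z * m + 1 = 0) ∧
    (∀ ρseq : ℕ → ℝ, (∀ n, ρseq n ∈ Set.Icc (-1 : ℝ) 1) →
      Tendsto ρseq atTop (𝓝 ρ) →
      ∀ (mseq : ℕ → ℂ) (mρ : ℂ),
        (∀ᶠ n in atTop,
          ‖mseq n‖ < 1 ∧ (ρseq n : ℂ) * mseq n ^ 2 + z * mseq n + 1 = 0) →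
        (‖mρ‖ < 1 ∧ (ρ : ℂ) * mρ ^ 2 + z * mρ + 1 = 0) →
        Tendsto mseq atTop (𝓝 mρ)) := by
  constructor
  · -- existence and uniqueness
    rintro ϱ ⟨hϱ1, hϱ2⟩ hdist
    obtain ⟨w, hw⟩ := IsAlgClosed.exists_pow_nat_eq (z^2 - 4*(ϱ:ℂ)) (n := 2) (by norm_num)
    have hbig : 1 < ‖(z+w)/2‖ ∨ 1 < ‖(z-w)/2‖ := by
      by_contra h
      push_neg at h
      have hprod : ((z+w)/2) * ((z-w)/2) = ((ϱ:ℝ):ℂ) := by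
        linear_combination (-(1:ℂ)/4) * hw
      have h0 := sum_mem_closure ϱ hϱ1 hϱ2 _ _ h.1 h.2 hprod
      have hsum : (z+w)/2 + (z-w)/2 = z := by ring
      rw [hsum] at h0
      rw [h0] at hdist
      exact lt_irrefl 0 hdist
    obtain ⟨u, hu1, hu2⟩ : ∃ u : ℂ, 1 < ‖u‖ ∧ u^2 - z*u + (ϱ:ℂ) = 0 := by
      rcases hbig with h | h
      · exact ⟨(z+w)/2, h, by linear_combination ((1:ℂ)/4) * hw⟩
      · exact ⟨(z-w)/2, h, by linear_combination ((1:ℂ)/4) * hw⟩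
    have hu0 : u ≠ 0 := by
      intro h; rw [h] at hu1; simp at hu1; linarith
    set m := -u⁻¹ with hm
    have hmabs : ‖m‖ < 1 := by
      rw [hm, norm_neg, norm_inv]
      exact inv_lt_one_of_one_lt₀ hu1
    have hmeq : (ϱ:ℂ) * m^2 + z*m + 1 = 0 := by
      rw [hm]
      field_simp
      linear_combination hu2
    refine ⟨m, ⟨hmabs, hmeq⟩, ?_⟩
    rintro m' ⟨hm'abs, hm'eq⟩
    have hzero : (m' - m) * ((ϱ:ℂ)*m'*m - 1) = 0 := by
      linear_combination m * hm'eq - m' * hmeq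
    have hne : (ϱ:ℂ)*m'*m - 1 ≠ 0 := by
      intro h
      have h1 : (ϱ:ℂ)*m'*m = 1 := by linear_combination h
      have h2 := congrArg (‖·‖) h1
      rw [norm_mul, norm_mul, norm_one, Complex.norm_real, Real.norm_eq_abs] at h2
      have hϱa : |ϱ| ≤ 1 := abs_le.2 ⟨hϱ1, hϱ2⟩
      nlinarith [mul_nonneg (sub_nonneg.2 hϱa) (mul_nonneg (norm_nonneg m') (norm_nonneg m)),
        mul_nonneg (sub_nonneg.2 hm'abs.le) (norm_nonneg m), hmabs]
    rcases mul_eq_zero.1 hzero with h | h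
    · exact sub_eq_zero.1 h
    · exact absurd h hne
  · -- continuity
    rintro ρseq hρseq hρtend mseq mρ hev ⟨hmρ1, hmρ2⟩
    rw [tendsto_iff_dist_tendsto_zero]
    have hden : 0 < 1 - ‖mρ‖ := by linarith
    apply squeeze_zero' (Eventually.of_forall fun n => dist_nonneg)
      (g := fun n => |ρseq n - ρ| / (1 - ‖mρ‖))
    · filter_upwards [hev] with n hn
      obtain ⟨hn1, hn2⟩ := hn
      have hid : (mseq n - mρ) * ((ρseq n : ℂ)*mρ*(mseq n) - 1)
          = ((ρ:ℂ) - (ρseq n : ℂ)) * mρ^2 * (mseq n) := by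
        linear_combination mρ * hn2 - (mseq n) * hmρ2
      have habs := congrArg (‖·‖) hid
      rw [norm_mul, norm_mul, norm_mul, norm_pow] at habs
      have hcast : ‖(ρ:ℂ) - (ρseq n : ℂ)‖ = |ρseq n - ρ| := by
        rw [← Complex.ofReal_sub, Complex.norm_real, Real.norm_eq_abs, abs_sub_comm]
      rw [hcast] at habs
      have hD : 1 - ‖mρ‖ ≤ ‖(ρseq n : ℂ)*mρ*(mseq n) - 1‖ := by
        have hx : ‖(ρseq n : ℂ)*mρ*(mseq n)‖ ≤ ‖mρ‖ := by
          rw [norm_mul, norm_mul, Complex.norm_real, Real.norm_eq_abs]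
          have hρn : |ρseq n| ≤ 1 := abs_le.2 ⟨(hρseq n).1, (hρseq n).2⟩
          nlinarith [mul_nonneg (sub_nonneg.2 hρn) (mul_nonneg (norm_nonneg mρ) (norm_nonneg (mseq n))),
            mul_nonneg (norm_nonneg mρ) (sub_nonneg.2 hn1.le)]
        calc 1 - ‖mρ‖ ≤ 1 - ‖(ρseq n : ℂ)*mρ*(mseq n)‖ := by linarith
          _ = ‖(1:ℂ)‖ - ‖(ρseq n : ℂ)*mρ*(mseq n)‖ := by rw [norm_one]
          _ ≤ ‖1 - (ρseq n : ℂ)*mρ*(mseq n)‖ := norm_sub_norm_le _ _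
          _ = ‖(ρseq n : ℂ)*mρ*(mseq n) - 1‖ := by rw [norm_sub_rev]
      rw [Complex.dist_eq, le_div_iff₀ hden]
      have hR : |ρseq n - ρ| * (‖mρ‖)^2 * ‖mseq n‖ ≤ |ρseq n - ρ| := by
        have hb2 : (‖mρ‖)^2 ≤ 1 := by
          nlinarith [norm_nonneg mρ]
        nlinarith [mul_nonneg (mul_nonneg (abs_nonneg (ρseq n - ρ)) (sq_nonneg (‖mρ‖)))
            (sub_nonneg.2 hn1.le),
          mul_nonneg (abs_nonneg (ρseq n - ρ)) (sub_nonneg.2 hb2)]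
      nlinarith [norm_nonneg (mseq n - mρ),
        mul_le_mul_of_nonneg_left hD (norm_nonneg (mseq n - mρ))]
    · have h1 : Tendsto (fun n => ρseq n - ρ) atTop (𝓝 (ρ - ρ)) :=
        hρtend.sub tendsto_const_nhds
      rw [sub_self] at h1
      have h2 : Tendsto (fun n => |ρseq n - ρ|) atTop (𝓝 0) := by
        simpa using h1.abs
      simpa using h2.div_const (1 - ‖mρ‖)
end
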